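/- arXiv:1901.08895 — 16 statements merged into one kernel-verified Lean document; each statement's English description precedes it below -/
import Mathlib

section
/- Every group of affine bijections of the real line that is a GAF is a GAG. Equivalently, the group of all affine bijections of ℝ (maps x ↦ ax + b with a ≠ 0), acting on ℝ, is fixating. -/
/-!
For affine maps `f` and `g` the difference `f ∘ g - g ∘ f` is constant, so `f` and `g` commute as
soon as their commutator has a fixed point; hence any two elements of an affine GAF group commute.
If some element `f` is not the identity, it fixes exactly one point `p`, because an affine map fixing
two points is the identity. Every `g` in the group commutes with `f`, so `g p` is fixed by `f`,
hence `g p = p`.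
-/

theorem Equiv.Perm.exists_apply_eq_of_mul_inv_apply_eq {α : Type*} {σ τ : Equiv.Perm α} {y : α}
    (h : (σ * τ⁻¹) y = y) : ∃ w, σ w = τ w :=
  ⟨τ⁻¹ y, by simpa using h⟩

section Affine

variable {K : Type*}

theorem apply_eq_self_of_affine_of_two_fixed [Field K] {f : K → K} {a b p q : K}
    (hf : ∀ x, f x = a * x + b) (hp : f p = p) (hq : f q = q) (hpq : p ≠ q) (x : K) :
    f x = x := by
  rw [hf] at hp hq
  have ha : a = 1 := by
    have h : (a - 1) * (p - q) = 0 := by linear_combination hp - hq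
    simpa [sub_eq_zero, hpq] using h
  subst ha
  rw [hf]
  linear_combination hp

theorem comp_comm_of_affine_of_apply_eq [CommRing K] {f g : K → K} {a b c d w : K}
    (hf : ∀ x, f x = a * x + b) (hg : ∀ x, g x = c * x + d) (hw : f (g w) = g (f w)) (x : K) :
    f (g x) = g (f x) := by
  simp only [hf, hg] at hw ⊢
  linear_combination hw

theorem apply_comm_of_affine_of_commutator_fixed [CommRing K] {f g : Equiv.Perm K}
    {a b c d : K} (hf : ∀ x, f x = a * x + b) (hg : ∀ x, g x = c * x + d)
    (hfix : ∃ y, (f * g * (g * f)⁻¹) y = y) (x : K) : f (g x) = g (f x) := by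
  obtain ⟨y, hy⟩ := hfix
  obtain ⟨w, hw⟩ := Equiv.Perm.exists_apply_eq_of_mul_inv_apply_eq hy
  exact comp_comm_of_affine_of_apply_eq hf hg hw x

end Affine

/-- The group of affine bijections of the real line is fixating: every subgroup
of the permutation group of `ℝ` consisting of affine maps `x ↦ a*x + b` (`a ≠ 0`),
each element of which has a fixed point (GAF), has a common fixed point (GAG). -/
theorem affine_bijections_real_line_fixating
    (H : Subgroup (Equiv.Perm ℝ))
    (haff : ∀ f ∈ H, ∃ a b : ℝ, a ≠ 0 ∧ ∀ x : ℝ, f x = a * x + b)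
    (hGAF : ∀ f ∈ H, ∃ x : ℝ, f x = x) :
    ∃ x : ℝ, ∀ f ∈ H, f x = x := by
  by_cases hid : ∀ f ∈ H, ∀ x : ℝ, f x = x
  · exact ⟨0, fun f hf => hid f hf 0⟩
  push Not at hid
  obtain ⟨f, hf, x₀, hx₀⟩ := hid
  obtain ⟨a, b, -, hab⟩ := haff f hf
  obtain ⟨p, hp⟩ := hGAF f hf
  refine ⟨p, fun g hg => ?_⟩
  obtain ⟨c, d, -, hcd⟩ := haff g hg
  have hcomm := apply_comm_of_affine_of_commutator_fixed hab hcd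
    (hGAF _ (mul_mem (mul_mem hf hg) (inv_mem (mul_mem hg hf))))
  have hgp : f (g p) = g p := by rw [hcomm, hp]
  by_contra hne
  exact hx₀ (apply_eq_self_of_affine_of_two_fixed hab hgp hp hne x₀)
end

section
/- Let a be an irrational real number, and let f, g : ℝ² → ℝ² be the affine bijections f(x,y) = (x + y + 1, y) and g(x,y) = (x + a·y, y). Then the group G generated by f and g (inside the group of bijections of ℝ²) is Abelian, every element of G has at least one fixed point in ℝ², but there is no point of ℝ² fixed by all elements of G (i.e., G is an Abelian eccentric group). -/
/-- For irrational `a`, the group generated by the affine transvections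
`f(x,y) = (x + y + 1, y)` and `g(x,y) = (x + a*y, y)` of `ℝ²` is Abelian,
every element has a fixed point (GAF), but there is no common fixed point:
it is an Abelian eccentric group. -/
theorem abelian_eccentric_affine_group_of_plane
    (a : ℝ) (ha : Irrational a)
    (f g : Equiv.Perm (ℝ × ℝ))
    (hf : ∀ p : ℝ × ℝ, f p = (p.1 + p.2 + 1, p.2))
    (hg : ∀ p : ℝ × ℝ, g p = (p.1 + a * p.2, p.2)) :
    (∀ h₁ ∈ Subgroup.closure ({f, g} : Set (Equiv.Perm (ℝ × ℝ))),
      ∀ h₂ ∈ Subgroup.closure ({f, g} : Set (Equiv.Perm (ℝ × ℝ))), h₁ * h₂ = h₂ * h₁) ∧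
    (∀ h ∈ Subgroup.closure ({f, g} : Set (Equiv.Perm (ℝ × ℝ))), ∃ p : ℝ × ℝ, h p = p) ∧
    ¬ ∃ p : ℝ × ℝ, ∀ h ∈ Subgroup.closure ({f, g} : Set (Equiv.Perm (ℝ × ℝ))), h p = p := by
  -- Structure theorem: every element of the closure has the form
  -- p ↦ (p.1 + (m + n*a) * p.2 + m, p.2) for some integers m, n.
  have key : ∀ h ∈ Subgroup.closure ({f, g} : Set (Equiv.Perm (ℝ × ℝ))),
      ∃ m n : ℤ, ∀ p : ℝ × ℝ,
        h p = (p.1 + ((m : ℝ) + (n : ℝ) * a) * p.2 + m, p.2) := by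
    intro h hh
    induction hh using Subgroup.closure_induction with
    | mem x hx =>
      rcases hx with hx | hx
      · refine ⟨1, 0, fun p => ?_⟩
        subst hx; rw [hf p]; push_cast; ring_nf
      · rcases hx with rfl
        refine ⟨0, 1, fun p => ?_⟩
        rw [hg p]; push_cast; ring_nf
    | one =>
      refine ⟨0, 0, fun p => ?_⟩
      simp
    | mul x y hx hy ihx ihy =>
      obtain ⟨m₁, n₁, h₁⟩ := ihx
      obtain ⟨m₂, n₂, h₂⟩ := ihy
      refine ⟨m₁ + m₂, n₁ + n₂, fun p => ?_⟩
      have : (x * y) p = x (y p) := rfl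
      rw [this, h₂ p, h₁ _]
      push_cast; simp; ring
    | inv x hx ih =>
      obtain ⟨m, n, h₁⟩ := ih
      refine ⟨-m, -n, fun p => ?_⟩
      have hinv : x⁻¹ p = x.symm p := rfl
      rw [hinv, Equiv.symm_apply_eq, h₁]
      push_cast; simp; ring
  refine ⟨?_, ?_, ?_⟩
  · -- Abelian
    intro h₁ hh₁ h₂ hh₂
    obtain ⟨m₁, n₁, k₁⟩ := key h₁ hh₁
    obtain ⟨m₂, n₂, k₂⟩ := key h₂ hh₂
    apply Equiv.ext
    intro p
    have e₁ : (h₁ * h₂) p = h₁ (h₂ p) := rfl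
    have e₂ : (h₂ * h₁) p = h₂ (h₁ p) := rfl
    rw [e₁, e₂, k₂ p, k₁ p, k₁ _, k₂ _]
    simp; ring
  · -- GAF
    intro h hh
    obtain ⟨m, n, k⟩ := key h hh
    by_cases hc : (m : ℝ) + (n : ℝ) * a = 0
    · -- then n = 0 and m = 0, so h is the identity; (0,0) is fixed
      have hn : n = 0 := by
        by_contra hn
        have hn' : (n : ℝ) ≠ 0 := Int.cast_ne_zero.mpr hn
        have : a = ((-m : ℚ) / (n : ℚ) : ℚ) := by
          push_cast
          field_simp
          linarith
        exact ha ⟨_, this.symm⟩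
      have hm : (m : ℝ) = 0 := by
        rw [hn] at hc; push_cast at hc; linarith
      refine ⟨(0, 0), ?_⟩
      rw [k (0, 0)]
      simp [hc, hm]
    · refine ⟨(0, -(m : ℝ) / ((m : ℝ) + (n : ℝ) * a)), ?_⟩
      rw [k _]
      simp only [Prod.mk.injEq]
      constructor
      · field_simp; ring
      · trivial
  · -- no common fixed point
    rintro ⟨p, hp⟩
    have hfmem : f ∈ Subgroup.closure ({f, g} : Set (Equiv.Perm (ℝ × ℝ))) :=
      Subgroup.subset_closure (by simp)
    have hgmem : g ∈ Subgroup.closure ({f, g} : Set (Equiv.Perm (ℝ × ℝ))) :=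
      Subgroup.subset_closure (by simp)
    have h1 := hp f hfmem
    have h2 := hp g hgmem
    rw [hf p] at h1
    rw [hg p] at h2
    have e1 : p.1 + p.2 + 1 = p.1 := congrArg Prod.fst h1
    have e2 : p.1 + a * p.2 = p.1 := congrArg Prod.fst h2
    have hy : p.2 = -1 := by linarith
    have : a = 0 := by
      rw [hy] at e2; linarith
    exact ha.ne_zero this
end

section
/- Let A = [[0,1],[-1,3]] and B = [[-1,-1],[5,4]], two matrices in SL(2,ℤ) (integer 2×2 matrices of determinant 1), and let G₀ be the subgroup of SL(2,ℤ) generated by A and B. Then G₀ is a free group, and every matrix M in G₀ with M ≠ I has trace different from 2. -/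
/-!
Ping-pong on `ℤ²`. To each letter `A`, `A⁻¹`, `B`, `B⁻¹` attach a closed double cone around the
attracting eigenline of that matrix, such that a letter maps every cone except that of its inverse
into its own cone. By induction, the columns of the image of a reduced word lie in the cone of its
first letter; as `1` has no such columns, the word map `FreeGroup Bool → SL(2, ℤ)` is injective.

For the trace, conjugate to a cyclically reduced word `w` with first letter `f` and last letter `l`.
Then the columns of `w` lie in the cone of `f` and those of `w⁻¹` in the cone of `l⁻¹ ≠ f`. Since
`w⁻¹` is the adjugate of `w`, this is a finite system of linear inequalities in the entries of `w`,
and together with `tr w = 2` and the nonvanishing of rows and columns it has no solution.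
-/

open scoped MatrixGroups
open Matrix

namespace FreeGroup

variable {α G : Type*} [Group G]

/-- Letters are indexed as in `FreeGroup.toWord`: `h` may follow `g` in a reduced word
iff `g.1 = h.1 → g.2 = h.2`. -/
structure IsPingPong (a : α → G) (P : α × Bool → G → Prop) : Prop where
  letter : ∀ g, P g (lift a (mk [g]))
  letter_mul : ∀ g h M, (g.1 = h.1 → g.2 = h.2) → P h M → P g (lift a (mk [g]) * M)

variable {a : α → G} {P : α × Bool → G → Prop}

theorem IsPingPong.lift_mk_cons (hP : IsPingPong a P) :
    ∀ {g : α × Bool} {L : List (α × Bool)}, IsReduced (g :: L) →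
      P g (lift a (FreeGroup.mk (g :: L)))
  | g, [], _ => hP.letter g
  | g, h :: L, hL => by
    rw [isReduced_cons_cons] at hL
    rw [← List.singleton_append, ← mul_mk, _root_.map_mul]
    exact hP.letter_mul g h _ hL.1 (hP.lift_mk_cons hL.2)

theorem IsPingPong.lift_of_mem_head? [DecidableEq α] (hP : IsPingPong a P) {x : FreeGroup α}
    {g : α × Bool} (hg : g ∈ x.toWord.head?) : P g (lift a x) := by
  obtain ⟨L, hgL⟩ := List.head?_eq_some_iff.1 hg
  rw [← mk_toWord (x := x), hgL]
  exact hP.lift_mk_cons (hgL ▸ isReduced_toWord)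

theorem IsPingPong.lift_injective [DecidableEq α] (hP : IsPingPong a P) (hone : ∀ g, ¬ P g 1) :
    Function.Injective (lift a) := by
  refine (injective_iff_map_eq_one _).2 fun x hx => ?_
  by_contra hx1
  obtain ⟨g, hg⟩ :=
    Option.ne_none_iff_exists'.1 (mt List.head?_eq_none_iff.1 (mt toWord_eq_nil_iff.1 hx1))
  exact hone g (hx ▸ hP.lift_of_mem_head? hg)

theorem exists_conj_isCyclicallyReduced [DecidableEq α] (x : FreeGroup α) :
    ∃ c y : FreeGroup α, IsCyclicallyReduced y.toWord ∧ x = c * y * c⁻¹ := by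
  have hred := reduceCyclically.isCyclicallyReduced (isReduced_toWord (x := x))
  refine ⟨mk (reduceCyclically.conjugator x.toWord), mk (reduceCyclically x.toWord), ?_, ?_⟩
  · rwa [toWord_mk, hred.isReduced.reduce_eq]
  · rw [inv_mk, mul_mk, mul_mk, reduceCyclically.conj_conjugator_reduceCyclically, mk_toWord]

theorem IsPingPong.exists_of_isCyclicallyReduced [DecidableEq α] (hP : IsPingPong a P)
    {y : FreeGroup α} (hy : IsCyclicallyReduced y.toWord) (hy1 : y ≠ 1) :
    ∃ f k, f ≠ k ∧ P f (lift a y) ∧ P k (lift a y)⁻¹ := by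
  have hne : y.toWord ≠ [] := mt toWord_eq_nil_iff.1 hy1
  set l := y.toWord.getLast hne
  obtain ⟨f, hf⟩ := Option.ne_none_iff_exists'.1 (mt List.head?_eq_none_iff.1 hne)
  have hk : (l.1, !l.2) ∈ (y⁻¹).toWord.head? := by
    simp [toWord_inv, invRev, List.head?_reverse, List.getLast?_eq_some_getLast hne, l]
  refine ⟨f, (l.1, !l.2), fun hfk => ?_, hP.lift_of_mem_head? hf,
    _root_.map_inv (lift a) y ▸ hP.lift_of_mem_head? hk⟩
  have hlf := hy.2 l (List.getLast?_eq_some_getLast hne ▸ rfl) f hf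
  simp [hfk] at hlf

theorem IsPingPong.not_lift [DecidableEq α] (hP : IsPingPong a P) {Q : G → Prop}
    (hQ : ∀ c M, Q (c * M * c⁻¹) → Q M) (hPQ : ∀ f k M, f ≠ k → P f M → P k M⁻¹ → ¬ Q M)
    {x : FreeGroup α} (hx : x ≠ 1) : ¬ Q (lift a x) := by
  obtain ⟨c, y, hy, rfl⟩ := exists_conj_isCyclicallyReduced x
  have hy1 : y ≠ 1 := by rintro rfl; simp at hx
  obtain ⟨f, k, hfk, hf, hk⟩ := hP.exists_of_isCyclicallyReduced hy hy1
  rw [_root_.map_mul, _root_.map_mul, _root_.map_inv]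
  exact fun hQy => hPQ f k _ hfk hf hk (hQ _ _ hQy)

end FreeGroup

theorem Matrix.SpecialLinearGroup.trace_coe_conj {n R : Type*} [Fintype n] [DecidableEq n]
    [CommRing R] (c M : SpecialLinearGroup n R) :
    trace ((c * M * c⁻¹ : SpecialLinearGroup n R) : Matrix n n R) = trace (M : Matrix n n R) := by
  rw [coe_mul, coe_mul, trace_mul_cycle, ← coe_mul, inv_mul_cancel, coe_one, one_mul]

open FreeGroup

namespace SL2PingPong

def genA : SL(2, ℤ) := ⟨!![0, 1; -1, 3], by norm_num [det_fin_two_of]⟩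
def genB : SL(2, ℤ) := ⟨!![-1, -1; 5, 4], by norm_num [det_fin_two_of]⟩
def gens : Bool → SL(2, ℤ) := fun b => cond b genB genA

/-- In the right half-plane, the cones of `A`, `A⁻¹`, `B`, `B⁻¹` consist of the vectors of slope
in `[5/2, ∞]`, `[0, 2/5]`, `[-5, -7/2]` and `[-7/5, -1]`. -/
def sector : Bool × Bool → ℤ → ℤ → Prop
  | (false, true), x, y => 0 ≤ x ∧ 5 * x ≤ 2 * y
  | (false, false), x, y => 0 ≤ y ∧ 5 * y ≤ 2 * x
  | (true, true), x, y => 0 ≤ x ∧ -5 * x ≤ y ∧ 2 * y ≤ -7 * x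
  | (true, false), x, y => 0 ≤ x ∧ -7 * x ≤ 5 * y ∧ y ≤ -x

def cone (g : Bool × Bool) (v : Fin 2 → ℤ) : Prop :=
  sector g (v 0) (v 1) ∨ sector g (-v 0) (-v 1)

def ColumnsInCone (g : Bool × Bool) (M : SL(2, ℤ)) : Prop :=
  ∀ j, cone g fun i => (M : Matrix (Fin 2) (Fin 2) ℤ) i j

theorem coe_lift_gens_mk_singleton : ∀ g : Bool × Bool,
    (lift gens (mk [g]) : Matrix (Fin 2) (Fin 2) ℤ) =
      match g with
      | (false, true) => !![0, 1; -1, 3]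
      | (false, false) => !![3, -1; 1, 0]
      | (true, true) => !![-1, -1; 5, 4]
      | (true, false) => !![4, 1; -5, -1] := by
  rintro ⟨_ | _, _ | _⟩ <;>
    simp only [lift_mk, gens, genA, genB, SpecialLinearGroup.SL2_inv_expl, List.map_cons,
      List.map_nil, List.prod_cons, List.prod_nil, mul_one] <;> rfl

theorem mulVec_mem_cone {g h : Bool × Bool} (hgh : g.1 = h.1 → g.2 = h.2) {v : Fin 2 → ℤ}
    (hv : cone h v) : cone g ((lift gens (mk [g]) : Matrix (Fin 2) (Fin 2) ℤ) *ᵥ v) := by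
  rw [coe_lift_gens_mk_singleton]
  rcases g with ⟨_ | _, _ | _⟩ <;> rcases h with ⟨_ | _, _ | _⟩ <;>
    simp only [cone, sector, mulVec, dotProduct, Fin.sum_univ_two, of_apply, cons_val',
      cons_val_zero, cons_val_one, cons_val_fin_one] at hv ⊢ <;>
    first | omega | simp at hgh

theorem isPingPong_columnsInCone : IsPingPong gens ColumnsInCone where
  letter g := by
    rw [ColumnsInCone, coe_lift_gens_mk_singleton]
    rcases g with ⟨_ | _, _ | _⟩ <;> simp [Fin.forall_fin_two, cone, sector]
  letter_mul _ _ _ hgh hM j := mulVec_mem_cone hgh (hM j)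

theorem not_columnsInCone_one (g : Bool × Bool) : ¬ ColumnsInCone g 1 := by
  rcases g with ⟨_ | _, _ | _⟩ <;> simp [ColumnsInCone, Fin.forall_fin_two, cone, sector, one_apply]

theorem trace_ne_two_of_columnsInCone {f k : Bool × Bool} (hfk : f ≠ k) {M : SL(2, ℤ)}
    (hf : ColumnsInCone f M) (hk : ColumnsInCone k M⁻¹) :
    trace (M : Matrix (Fin 2) (Fin 2) ℤ) ≠ 2 := by
  have hrow : ∀ i, ¬ ∀ j, (M : Matrix (Fin 2) (Fin 2) ℤ) i j = 0 := fun i h => by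
    simpa using det_eq_zero_of_row_eq_zero i h
  have hcol : ∀ j, ¬ ∀ i, (M : Matrix (Fin 2) (Fin 2) ℤ) i j = 0 := fun j h => by
    simpa using det_eq_zero_of_column_eq_zero j h
  rw [ColumnsInCone, SpecialLinearGroup.SL2_inv_expl] at hk
  simp only [ColumnsInCone, Fin.forall_fin_two, cone] at hf hk hrow hcol
  simp only [cons_val', cons_val_zero, cons_val_one, cons_val_fin_one, neg_neg] at hk
  rw [trace_fin_two]
  rcases f with ⟨_ | _, _ | _⟩ <;> rcases k with ⟨_ | _, _ | _⟩ <;> simp only [sector] at hf hk <;>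
    first | exact absurd rfl hfk | omega

theorem lift_gens_injective : Function.Injective (lift gens) :=
  isPingPong_columnsInCone.lift_injective not_columnsInCone_one

theorem trace_lift_gens_ne_two {x : FreeGroup Bool} (hx : x ≠ 1) :
    trace (lift gens x : Matrix (Fin 2) (Fin 2) ℤ) ≠ 2 :=
  isPingPong_columnsInCone.not_lift (Q := fun M => trace (M : Matrix (Fin 2) (Fin 2) ℤ) = 2)
    (fun c M h => SpecialLinearGroup.trace_coe_conj c M ▸ h)
    (fun _ _ _ hfk => trace_ne_two_of_columnsInCone hfk) hx

theorem range_lift_gens : (lift gens).range = Subgroup.closure {genA, genB} := by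
  rw [range_lift_eq_closure]
  congr
  ext M
  simp [gens]

end SL2PingPong

open SL2PingPong in
/-- The subgroup `G₀` of `SL(2,ℤ)` generated by `A = [[0,1],[-1,3]]` and
`B = [[-1,-1],[5,4]]` is a free group, and every `M ∈ G₀` with `M ≠ 1`
has trace different from `2`. -/
theorem free_subgroup_SL2Z_trace_ne_two
    (A B : Matrix.SpecialLinearGroup (Fin 2) ℤ)
    (hA : (A : Matrix (Fin 2) (Fin 2) ℤ) = !![0, 1; -1, 3])
    (hB : (B : Matrix (Fin 2) (Fin 2) ℤ) = !![-1, -1; 5, 4]) :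
    IsFreeGroup (Subgroup.closure ({A, B} : Set (Matrix.SpecialLinearGroup (Fin 2) ℤ))) ∧
    ∀ M ∈ Subgroup.closure ({A, B} : Set (Matrix.SpecialLinearGroup (Fin 2) ℤ)),
      M ≠ 1 → Matrix.trace (M : Matrix (Fin 2) (Fin 2) ℤ) ≠ 2 := by
  obtain rfl : A = genA := Subtype.ext hA
  obtain rfl : B = genB := Subtype.ext hB
  rw [← range_lift_gens]
  refine ⟨IsFreeGroup.ofMulEquiv (MonoidHom.ofInjective lift_gens_injective), ?_⟩
  rintro _ ⟨x, rfl⟩ hx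
  exact trace_lift_gens_ne_two fun h => hx (by rw [h, _root_.map_one])
end

section
/- Let G be a group of affine bijections of ℝⁿ (n ≥ 1). If G has a bounded orbit, i.e., there exists x ∈ ℝⁿ such that the set {g(x) : g ∈ G} is bounded, then G is a GAG: there exists a point of ℝⁿ fixed by every element of G. -/
open Bornology Metric Set

set_option maxHeartbeats 1000000

theorem affine_group_bounded_orbit_gag_aux
    {E : Type*} [NormedAddCommGroup E] [InnerProductSpace ℝ E] [FiniteDimensional ℝ E]
    (G : Subgroup (Equiv.Perm E))
    (haff : ∀ f ∈ G, ∃ L : E →ₗ[ℝ] E, ∀ x, f x = L x + f 0)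
    (x₀ : E) (hbdd : Bornology.IsBounded {y : E | ∃ f ∈ G, f x₀ = y}) :
    ∃ x : E, ∀ f ∈ G, f x = x := by
  classical
  set O : Set E := {y : E | ∃ f ∈ G, f x₀ = y} with hO
  obtain ⟨D, hD⟩ := (isBounded_iff_forall_norm_le).1 hbdd
  have hx₀O : x₀ ∈ O := ⟨1, G.one_mem, rfl⟩
  have hD0 : (0:ℝ) ≤ D := le_trans (norm_nonneg x₀) (hD x₀ hx₀O)
  -- choose linear parts
  choose Lg hLg using fun g : G => haff (g : Equiv.Perm E) g.2
  have hLg' : ∀ (g : G) (x : E),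
      Lg g x = (g : Equiv.Perm E) x - (g : Equiv.Perm E) 0 := by
    intro g x; rw [hLg g x]; abel
  have hLsub : ∀ (g : G) (a b : E),
      Lg g (a - b) = (g : Equiv.Perm E) a - (g : Equiv.Perm E) b := by
    intro g a b; rw [map_sub, hLg' g a, hLg' g b]; abel
  -- orbit is G-invariant
  have hOg : ∀ (g : G), ∀ y ∈ O, (g : Equiv.Perm E) y ∈ O := by
    rintro g y ⟨f, hf, rfl⟩
    exact ⟨(g : Equiv.Perm E) * f, G.mul_mem g.2 hf, rfl⟩
  set S : Set E := (fun y => y - x₀) '' O with hS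
  set V : Submodule ℝ E := Submodule.span ℝ S with hV
  have hSV : S ⊆ (V : Set E) := Submodule.subset_span
  have hSmem : ∀ y ∈ O, y - x₀ ∈ V := fun y hy => hSV ⟨y, hy, rfl⟩
  -- linear parts map S-generators into V, with uniform bound on S
  have hLgS : ∀ (g : G), ∀ u ∈ S, Lg g u ∈ V := by
    rintro g u ⟨y, hy, rfl⟩
    rw [hLsub]
    have : (g : Equiv.Perm E) y - (g : Equiv.Perm E) x₀
        = ((g : Equiv.Perm E) y - x₀) - ((g : Equiv.Perm E) x₀ - x₀) := by abel
    rw [this]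
    exact sub_mem (hSmem _ (hOg g y hy)) (hSmem _ (hOg g x₀ hx₀O))
  have hLgV : ∀ (g : G), ∀ v ∈ V, Lg g v ∈ V := by
    intro g v hv
    induction hv using Submodule.span_induction with
    | mem u hu => exact hLgS g u hu
    | zero => simpa using V.zero_mem
    | add a b ha hb iha ihb => rw [map_add]; exact V.add_mem iha ihb
    | smul a x hx ihx => rw [map_smul]; exact V.smul_mem _ ihx
  have hSbound : ∀ (g : G), ∀ u ∈ S, ‖Lg g u‖ ≤ 2 * D := by
    rintro g u ⟨y, hy, rfl⟩
    rw [hLsub]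
    calc ‖(g : Equiv.Perm E) y - (g : Equiv.Perm E) x₀‖
        ≤ ‖(g : Equiv.Perm E) y‖ + ‖(g : Equiv.Perm E) x₀‖ := norm_sub_le _ _
      _ ≤ D + D := add_le_add (hD _ (hOg g y hy)) (hD _ (hOg g x₀ hx₀O))
      _ = 2 * D := by ring
  -- Banach-Steinhaus: uniform bound on V
  have hpt : ∀ v : V, ∃ Cv : ℝ, ∀ g : G, ‖Lg g (v : E)‖ ≤ Cv := by
    rintro ⟨v, hv⟩
    simp only
    induction hv using Submodule.span_induction with
    | mem u hu => exact ⟨2 * D, fun g => hSbound g u hu⟩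
    | zero => exact ⟨0, fun g => by simp⟩
    | add a b ha hb iha ihb =>
        obtain ⟨Ca, hCa⟩ := iha; obtain ⟨Cb, hCb⟩ := ihb
        exact ⟨Ca + Cb, fun g => by
          rw [map_add]; exact (norm_add_le _ _).trans (add_le_add (hCa g) (hCb g))⟩
    | smul a x hx ihx =>
        obtain ⟨Cx, hCx⟩ := ihx
        exact ⟨|a| * Cx, fun g => by
          rw [map_smul, norm_smul, Real.norm_eq_abs]
          exact mul_le_mul_of_nonneg_left (hCx g) (abs_nonneg a)⟩
  obtain ⟨C', hC'⟩ := banach_steinhaus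
    (g := fun g : G => LinearMap.toContinuousLinearMap ((Lg g).comp V.subtype)) hpt
  obtain ⟨C, hCdef⟩ : ∃ C : ℝ, C = max C' 1 := ⟨_, rfl⟩
  have hC1 : (1:ℝ) ≤ C := hCdef ▸ le_max_right _ _
  have hC0 : (0:ℝ) < C := lt_of_lt_of_le one_pos hC1
  have hup : ∀ (g : G), ∀ v ∈ V, ‖Lg g v‖ ≤ C * ‖v‖ := by
    intro g v hv
    have h1 : ‖Lg g v‖
        = ‖(LinearMap.toContinuousLinearMap ((Lg g).comp V.subtype)) ⟨v, hv⟩‖ := rfl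
    rw [h1]
    calc ‖(LinearMap.toContinuousLinearMap ((Lg g).comp V.subtype)) ⟨v, hv⟩‖
        ≤ ‖LinearMap.toContinuousLinearMap ((Lg g).comp V.subtype)‖ * ‖(⟨v, hv⟩ : V)‖ :=
          ContinuousLinearMap.le_opNorm _ _
      _ ≤ C * ‖v‖ := by
          apply mul_le_mul ((hC' g).trans (hCdef ▸ le_max_left _ _)) le_rfl (norm_nonneg _) hC0.le
  -- inverse identity and lower bound
  have hLinv : ∀ (g : G) (v : E), Lg g⁻¹ (Lg g v) = v := by
    intro g v
    rw [hLg' g v, hLsub g⁻¹]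
    have h1 : ((g⁻¹ : G) : Equiv.Perm E) ((g : Equiv.Perm E) v) = v := by
      simp
    have h2 : ((g⁻¹ : G) : Equiv.Perm E) ((g : Equiv.Perm E) 0) = 0 := by
      simp
    rw [h1, h2, sub_zero]
  have hlow : ∀ (g : G), ∀ v ∈ V, ‖v‖ ≤ C * ‖Lg g v‖ := by
    intro g v hv
    have := hup g⁻¹ (Lg g v) (hLgV g v hv)
    rwa [hLinv g v] at this
  -- the displaced point u g v
  set u : G → E → E := fun g v => (g : Equiv.Perm E) (x₀ + v) - x₀ with hu
  have hu_decomp : ∀ (g : G) (v : E),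
      u g v = Lg g v + ((g : Equiv.Perm E) x₀ - x₀) := by
    intro g v
    have h1 : (g : Equiv.Perm E) (x₀ + v) - (g : Equiv.Perm E) x₀ = Lg g v := by
      rw [← hLsub g (x₀ + v) x₀]; congr 1; abel
    simp only [hu]
    rw [← h1]; abel
  have huV : ∀ (g : G), ∀ v ∈ V, u g v ∈ V := by
    intro g v hv
    rw [hu_decomp]
    exact V.add_mem (hLgV g v hv) (hSmem _ (hOg g x₀ hx₀O))
  have hgx₀ : ∀ g : G, ‖(g : Equiv.Perm E) x₀ - x₀‖ ≤ 2 * D := by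
    intro g
    calc ‖(g : Equiv.Perm E) x₀ - x₀‖ ≤ ‖(g : Equiv.Perm E) x₀‖ + ‖x₀‖ := norm_sub_le _ _
      _ ≤ D + D := add_le_add (hD _ (hOg g x₀ hx₀O)) (hD _ hx₀O)
      _ = 2 * D := by ring
  have hu_norm : ∀ (g : G), ∀ v ∈ V, ‖u g v‖ ≤ C * ‖v‖ + 2 * D := by
    intro g v hv
    rw [hu_decomp]
    exact (norm_add_le _ _).trans (add_le_add (hup g v hv) (hgx₀ g))
  have hu_sub : ∀ (g : G) (v w : E), u g v - u g w = Lg g (v - w) := by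
    intro g v w
    rw [hu_decomp, hu_decomp, map_sub]; abel
  have hu_mid : ∀ (g : G) (v w : E),
      u g ((2⁻¹ : ℝ) • (v + w)) = (2⁻¹ : ℝ) • (u g v + u g w) := by
    intro g v w
    simp only [hu_decomp, map_smul, map_add]
    module
  -- the invariant function ψ
  set ψ : E → ℝ := fun v => sSup (Set.range fun g : G => ‖u g v‖ ^ 2) with hψ
  have hne : ∀ v : E, (Set.range fun g : G => ‖u g v‖ ^ 2).Nonempty :=
    fun v => Set.range_nonempty _
  have hbdda : ∀ v ∈ V, BddAbove (Set.range fun g : G => ‖u g v‖ ^ 2) := by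
    intro v hv
    refine ⟨(C * ‖v‖ + 2 * D) ^ 2, ?_⟩
    rintro r ⟨g, rfl⟩
    show ‖u g v‖ ^ 2 ≤ (C * ‖v‖ + 2 * D) ^ 2
    have h1 := hu_norm g v hv
    have h2 : (0:ℝ) ≤ ‖u g v‖ := norm_nonneg _
    nlinarith
  have hψ_ge : ∀ v ∈ V, ‖v‖ ^ 2 ≤ ψ v := by
    intro v hv
    apply le_csSup (hbdda v hv)
    refine ⟨1, ?_⟩
    show ‖u 1 v‖ ^ 2 = ‖v‖ ^ 2
    simp [hu]
  have hψ0 : (0:ℝ) ≤ ψ 0 := by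
    have := hψ_ge 0 V.zero_mem
    simpa using this
  -- invariance : ψ (u h v) = ψ v
  have hψ_inv : ∀ (h : G), ∀ v : E, ψ (u h v) = ψ v := by
    intro h v
    have hx : x₀ + u h v = (h : Equiv.Perm E) (x₀ + v) := by simp [hu]
    have key : ∀ g : G, u g (u h v) = u (g * h) v := by
      intro g
      simp only [hu]
      rw [show x₀ + ((h : Equiv.Perm E) (x₀ + v) - x₀) = (h : Equiv.Perm E) (x₀ + v) by abel]
      rfl
    have : (Set.range fun g : G => ‖u g (u h v)‖ ^ 2)
        = (Set.range fun g : G => ‖u g v‖ ^ 2) := by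
      ext r
      simp only [Set.mem_range]
      constructor
      · rintro ⟨g, rfl⟩; exact ⟨g * h, by rw [key]⟩
      · rintro ⟨g, rfl⟩; exact ⟨g * h⁻¹, by rw [key, inv_mul_cancel_right]⟩
    simp only [hψ, this]
  -- midpoint strong convexity
  have hψ_mid : ∀ v ∈ V, ∀ w ∈ V,
      ψ ((2⁻¹ : ℝ) • (v + w)) ≤ (ψ v + ψ w) / 2 - ‖v - w‖ ^ 2 / (4 * C ^ 2) := by
    intro v hv w hw
    apply csSup_le (hne _)
    rintro r ⟨g, rfl⟩
    show ‖u g ((2⁻¹ : ℝ) • (v + w))‖ ^ 2 ≤ (ψ v + ψ w) / 2 - ‖v - w‖ ^ 2 / (4 * C ^ 2)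
    rw [hu_mid]
    have hpar := parallelogram_law_with_norm ℝ (u g v) (u g w)
    have h1 : ‖u g v‖ ^ 2 ≤ ψ v := le_csSup (hbdda v hv) ⟨g, rfl⟩
    have h2 : ‖u g w‖ ^ 2 ≤ ψ w := le_csSup (hbdda w hw) ⟨g, rfl⟩
    have h3 : ‖v - w‖ ≤ C * ‖u g v - u g w‖ := by
      rw [hu_sub]; exact hlow g (v - w) (V.sub_mem hv hw)
    have h4 : ‖(2⁻¹:ℝ) • (u g v + u g w)‖ = 2⁻¹ * ‖u g v + u g w‖ := by
      rw [norm_smul]; norm_num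
    have h6 : (0:ℝ) ≤ ‖v - w‖ := norm_nonneg _
    have h7 : (0:ℝ) ≤ ‖u g v - u g w‖ := norm_nonneg _
    have h3' : ‖v - w‖ ^ 2 / C ^ 2 ≤ ‖u g v - u g w‖ ^ 2 := by
      rw [div_le_iff₀ (pow_pos hC0 2)]
      nlinarith [mul_le_mul h3 h3 h6 (by positivity : (0:ℝ) ≤ C * ‖u g v - u g w‖)]
    have h8 : ‖v - w‖ ^ 2 / (4 * C ^ 2) = (‖v - w‖ ^ 2 / C ^ 2) / 4 := by
      ring
    rw [h4, h8]
    nlinarith [hpar, h1, h2, h3']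
  -- Lipschitz-type bound on bounded sets
  obtain ⟨R, hR⟩ : ∃ R : ℝ, R = Real.sqrt (ψ 0) := ⟨_, rfl⟩
  have hR0 : 0 ≤ R := hR ▸ Real.sqrt_nonneg _
  obtain ⟨K, hK⟩ : ∃ K : ℝ, K = 2 * C * (C * R + 2 * D) + 2 * C ^ 2 * R := ⟨_, rfl⟩
  have hK0 : 0 ≤ K := by
    rw [hK]
    have h1 : 0 ≤ C * R + 2 * D := by
      have := mul_nonneg hC0.le hR0; linarith
    have h2 : (0:ℝ) ≤ 2 * C := by linarith
    have h3 : (0:ℝ) ≤ 2 * C ^ 2 * R :=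
      mul_nonneg (mul_nonneg (by norm_num) (sq_nonneg C)) hR0
    exact add_nonneg (mul_nonneg h2 h1) h3
  have hlip : ∀ v ∈ V, ∀ w ∈ V, ‖v‖ ≤ R → ‖w‖ ≤ R → ψ v ≤ ψ w + K * ‖v - w‖ := by
    intro v hv w hw hvR hwR
    apply csSup_le (hne _)
    rintro r ⟨g, rfl⟩
    show ‖u g v‖ ^ 2 ≤ ψ w + K * ‖v - w‖
    have h1 : u g v = u g w + Lg g (v - w) := by rw [← hu_sub]; abel
    have h2 : ‖Lg g (v - w)‖ ≤ C * ‖v - w‖ := hup g _ (V.sub_mem hv hw)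
    have h3 : ‖u g w‖ ≤ C * R + 2 * D := by
      have h3' : C * ‖w‖ ≤ C * R := mul_le_mul_of_nonneg_left hwR hC0.le
      have := hu_norm g w hw
      linarith
    have h4 : ‖u g w‖ ^ 2 ≤ ψ w := le_csSup (hbdda w hw) ⟨g, rfl⟩
    have h5 : ‖u g v‖ ≤ ‖u g w‖ + C * ‖v - w‖ := by
      rw [h1]; exact (norm_add_le _ _).trans (by linarith)
    have h6 : ‖v - w‖ ≤ 2 * R := by
      calc ‖v - w‖ ≤ ‖v‖ + ‖w‖ := norm_sub_le _ _
        _ ≤ 2 * R := by linarith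
    have h7 : (0:ℝ) ≤ ‖u g v‖ := norm_nonneg _
    have h8 : (0:ℝ) ≤ ‖u g w‖ := norm_nonneg _
    have h9 : (0:ℝ) ≤ ‖v - w‖ := norm_nonneg _
    have q1 : ‖u g v‖ ^ 2 ≤ (‖u g w‖ + C * ‖v - w‖) ^ 2 := pow_le_pow_left₀ h7 h5 2
    rw [hK]
    nlinarith [q1, h4, mul_le_mul_of_nonneg_right h3 h9,
      mul_le_mul_of_nonneg_right h6 h9, hC0.le, sq_nonneg C,
      mul_le_mul_of_nonneg_left (mul_le_mul_of_nonneg_right h3 h9) hC0.le,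
      mul_le_mul_of_nonneg_left (mul_le_mul_of_nonneg_right h6 h9) (sq_nonneg C)]
  -- the compact set T
  set T : Set E := {v : E | v ∈ V ∧ ‖v‖ ^ 2 ≤ ψ 0} with hT
  have hTV : ∀ v ∈ T, v ∈ V := fun v hvT => hvT.1
  have hTR : ∀ v ∈ T, ‖v‖ ≤ R := by
    intro v hvT
    have := hvT.2
    rw [hR]
    calc ‖v‖ = Real.sqrt (‖v‖ ^ 2) := by rw [Real.sqrt_sq (norm_nonneg v)]
      _ ≤ Real.sqrt (ψ 0) := Real.sqrt_le_sqrt this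
  have h0T : (0:E) ∈ T := ⟨V.zero_mem, by simpa using hψ0⟩
  have hTclosed : IsClosed T := by
    have h1 : IsClosed (V : Set E) := Submodule.closed_of_finiteDimensional V
    have h2 : IsClosed {v : E | ‖v‖ ^ 2 ≤ ψ 0} :=
      isClosed_le (continuous_norm.pow 2) continuous_const
    exact h1.inter h2
  have hTcomp : IsCompact T := by
    apply (isCompact_closedBall (0:E) R).of_isClosed_subset hTclosed
    intro v hvT
    simpa [Metric.mem_closedBall, dist_zero_right] using hTR v hvT
  have hψcont : ContinuousOn ψ T := by
    apply LipschitzOnWith.continuousOn (K := Real.toNNReal K)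
    apply LipschitzOnWith.of_dist_le_mul
    intro v hv w hw
    rw [Real.dist_eq, Real.coe_toNNReal K hK0, dist_eq_norm]
    rw [abs_sub_le_iff]
    constructor
    · have := hlip v (hTV v hv) w (hTV w hw) (hTR v hv) (hTR w hw)
      linarith
    · have := hlip w (hTV w hw) v (hTV v hv) (hTR w hw) (hTR v hv)
      rw [norm_sub_rev] at this
      linarith
  obtain ⟨c, hcT, hcmin'⟩ := hTcomp.exists_isMinOn ⟨0, h0T⟩ hψcont
  have hcmin : ∀ v ∈ T, ψ c ≤ ψ v := fun v hv => hcmin' hv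
  have hcV : c ∈ V := hTV c hcT
  have hc0 : ψ c ≤ ψ 0 := hcmin 0 h0T
  refine ⟨x₀ + c, ?_⟩
  intro f hf
  set g : G := ⟨f, hf⟩ with hg
  have hwV : u g c ∈ V := huV g c hcV
  have hwψ : ψ (u g c) = ψ c := hψ_inv g c
  have hwT : u g c ∈ T := by
    refine ⟨hwV, ?_⟩
    have := hψ_ge (u g c) hwV
    rw [hwψ] at this
    linarith
  have hwc : u g c = c := by
    by_contra hne'
    set m : E := (2⁻¹ : ℝ) • (c + u g c) with hm
    have hmV : m ∈ V := V.smul_mem _ (V.add_mem hcV hwV)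
    have hmid := hψ_mid c hcV (u g c) hwV
    rw [hwψ] at hmid
    have hcw : (0:ℝ) < ‖c - u g c‖ := by
      rw [norm_pos_iff, sub_ne_zero]
      exact fun h => hne' h.symm
    have hstrict : ψ m < ψ c := by
      have h1 : (0:ℝ) < ‖c - u g c‖ ^ 2 / (4 * C ^ 2) :=
        div_pos (pow_pos hcw 2) (mul_pos (by norm_num) (pow_pos hC0 2))
      calc ψ m ≤ (ψ c + ψ c) / 2 - ‖c - u g c‖ ^ 2 / (4 * C ^ 2) := hmid
        _ < ψ c := by linarith
    have hmT : m ∈ T := by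
      refine ⟨hmV, ?_⟩
      have := hψ_ge m hmV
      linarith
    have := hcmin m hmT
    linarith
  have : f (x₀ + c) - x₀ = c := hwc
  have h2 : f (x₀ + c) = x₀ + c := by
    have h3 := this
    rw [sub_eq_iff_eq_add] at h3
    rw [h3]; abel
  exact h2

/-- A group of affine bijections of `ℝⁿ` having a bounded orbit has a common
fixed point (is a GAG). -/
theorem affine_group_bounded_orbit_gag
    (n : ℕ) (hn : 1 ≤ n)
    (G : Subgroup (Equiv.Perm (EuclideanSpace ℝ (Fin n))))
    (haff : ∀ f ∈ G, ∃ L : EuclideanSpace ℝ (Fin n) →ₗ[ℝ] EuclideanSpace ℝ (Fin n),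
      ∀ x, f x = L x + f 0)
    (hbdd : ∃ x : EuclideanSpace ℝ (Fin n),
      Bornology.IsBounded {y : EuclideanSpace ℝ (Fin n) | ∃ f ∈ G, f x = y}) :
    ∃ x : EuclideanSpace ℝ (Fin n), ∀ f ∈ G, f x = x := by
  obtain ⟨x₀, hx₀⟩ := hbdd
  exact affine_group_bounded_orbit_gag_aux G haff x₀ hx₀
end

section
/- Let (X,d) be a complete metric space satisfying the median inequality, and let A be a nonempty bounded subset of X. For x ∈ X set r(x,A) = sup{d(x,a) : a ∈ A}, and let r_A = inf{r(x,A) : x ∈ X}. Then there exists a unique point x₀ ∈ X such that r(x₀,A) = r_A (the center of A). -/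
open Filter

/-- In a complete metric space satisfying the median inequality, every nonempty
bounded subset `A` has a unique center, i.e. a unique point `x₀` at which the
radius function `r(x,A) = sup {dist x a | a ∈ A}` attains its infimum `r_A`. -/
theorem unique_center_of_bounded_set
    {X : Type*} [MetricSpace X] [CompleteSpace X]
    (hmed : ∀ x y : X, ∃ m : X, ∀ z : X,
      dist z m ^ 2 ≤ (dist z x ^ 2 + dist z y ^ 2) / 2 - dist x y ^ 2 / 4)
    (A : Set X) (hne : A.Nonempty) (hbdd : Bornology.IsBounded A) :
    ∃! x₀ : X, (⨆ a : A, dist x₀ (a : X)) = ⨅ x : X, ⨆ a : A, dist x (a : X) := by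
  classical
  obtain ⟨a₀, ha₀⟩ := hne
  haveI : Nonempty X := ⟨a₀⟩
  haveI : Nonempty A := ⟨⟨a₀, ha₀⟩⟩
  set r : X → ℝ := fun x => ⨆ a : A, dist x (a : X) with hr
  have hbdd' : ∀ x : X, BddAbove (Set.range fun a : A => dist x (a : X)) := by
    intro x
    refine ⟨dist x a₀ + Metric.diam A, ?_⟩
    rintro _ ⟨a, rfl⟩
    calc dist x (a : X) ≤ dist x a₀ + dist a₀ (a : X) := dist_triangle _ _ _
      _ ≤ dist x a₀ + Metric.diam A := by
          gcongr; exact Metric.dist_le_diam_of_mem hbdd ha₀ a.2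
  have hle : ∀ (x : X) (a : A), dist x (a : X) ≤ r x := fun x a => le_ciSup (hbdd' x) a
  have hrle : ∀ (x : X) (B : ℝ), (∀ a : A, dist x (a : X) ≤ B) → r x ≤ B :=
    fun x B h => ciSup_le h
  have hr0 : ∀ x, 0 ≤ r x := fun x => le_trans dist_nonneg (hle x ⟨a₀, ha₀⟩)
  set rA : ℝ := ⨅ x : X, r x with hrA
  have hbddb : BddBelow (Set.range r) := ⟨0, by rintro _ ⟨x, rfl⟩; exact hr0 x⟩
  have hrAle : ∀ x, rA ≤ r x := fun x => ciInf_le hbddb x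
  have hrA0 : 0 ≤ rA := le_ciInf hr0
  -- key estimate
  have key : ∀ x y : X, dist x y ^ 2 ≤ 2 * r x ^ 2 + 2 * r y ^ 2 - 4 * rA ^ 2 := by
    intro x y
    obtain ⟨m, hm⟩ := hmed x y
    set S : ℝ := (r x ^ 2 + r y ^ 2) / 2 - dist x y ^ 2 / 4 with hS
    have hmem : ∀ a : A, dist m (a : X) ^ 2 ≤ S := by
      intro a
      have h1 := hm (a : X)
      have h2 : dist (a : X) x ≤ r x := by rw [dist_comm]; exact hle x a
      have h3 : dist (a : X) y ≤ r y := by rw [dist_comm]; exact hle y a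
      have h4 : (0:ℝ) ≤ dist (a : X) x := dist_nonneg
      have h5 : (0:ℝ) ≤ dist (a : X) y := dist_nonneg
      rw [dist_comm m (a : X), hS]
      nlinarith [hr0 x, hr0 y]
    have hS0 : 0 ≤ S := le_trans (sq_nonneg _) (hmem ⟨a₀, ha₀⟩)
    have hrm : r m ≤ Real.sqrt S := by
      refine hrle m _ fun a => ?_
      have := hmem a
      nlinarith [Real.sq_sqrt hS0, Real.sqrt_nonneg S, dist_nonneg (x := m) (y := (a : X))]
    have h6 : rA ≤ Real.sqrt S := le_trans (hrAle m) hrm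
    have h7 : rA ^ 2 ≤ S := by
      nlinarith [Real.sq_sqrt hS0, Real.sqrt_nonneg S]
    simp only [hS] at h7
    linarith
  -- Lipschitz continuity of r
  have hlip : ∀ x y : X, r x ≤ r y + dist x y := by
    intro x y
    refine hrle x _ fun a => ?_
    have := hle y a
    have := dist_triangle x y (a : X)
    linarith
  have hcont : Continuous r := by
    have : LipschitzWith 1 r := by
      refine LipschitzWith.of_dist_le_mul fun x y => ?_
      rw [Real.dist_eq, NNReal.coe_one, one_mul, abs_le]
      constructor
      · have := hlip y x; rw [dist_comm] at this; linarith
      · have := hlip x y; linarith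
    exact this.continuous
  -- minimizing sequence
  have hseq : ∀ n : ℕ, ∃ x : X, r x < rA + 1 / (n + 1) := by
    intro n
    apply exists_lt_of_ciInf_lt
    have : (0:ℝ) < 1 / (n + 1) := by positivity
    linarith
  choose u hu using hseq
  have htend : Tendsto (fun n => r (u n)) atTop (nhds rA) := by
    have h1 : Tendsto (fun n : ℕ => rA + 1 / (n + 1 : ℝ)) atTop (nhds (rA + 0)) :=
      tendsto_const_nhds.add tendsto_one_div_add_atTop_nhds_zero_nat
    rw [add_zero] at h1
    exact tendsto_of_tendsto_of_tendsto_of_le_of_le tendsto_const_nhds h1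
      (fun n => hrAle (u n)) (fun n => (hu n).le)
  have hcauchy : CauchySeq u := by
    rw [Metric.cauchySeq_iff]
    intro ε hε
    have htf : Tendsto (fun n => 2 * r (u n) ^ 2 - 2 * rA ^ 2) atTop
        (nhds (2 * rA ^ 2 - 2 * rA ^ 2)) :=
      ((htend.pow 2).const_mul 2).sub tendsto_const_nhds
    rw [sub_self] at htf
    have hev : ∀ᶠ n in atTop, 2 * r (u n) ^ 2 - 2 * rA ^ 2 < ε ^ 2 / 2 :=
      htf.eventually_lt_const (by positivity)
    obtain ⟨N, hN⟩ := eventually_atTop.mp hev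
    refine ⟨N, fun m hm n hn => ?_⟩
    have h1 := key (u m) (u n)
    have h2 := hN m hm
    have h3 := hN n hn
    nlinarith [dist_nonneg (x := u m) (y := u n)]
  obtain ⟨x₀, hx₀⟩ := cauchySeq_tendsto_of_complete hcauchy
  have hrx₀ : r x₀ = rA :=
    tendsto_nhds_unique ((hcont.tendsto x₀).comp hx₀) htend
  refine ⟨x₀, hrx₀, fun y hy => ?_⟩
  have hy' : r y = rA := hy
  have hky := key y x₀
  rw [hy', hrx₀] at hky
  have : dist y x₀ = 0 := by nlinarith [dist_nonneg (x := y) (y := x₀)]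
  exact dist_eq_zero.mp this
end

section
/- (Bruhat–Tits fixed point theorem) Let (X,d) be a complete metric space satisfying the median inequality and let G be a group of isometries of X (bijections of X preserving d, a subgroup of the isometry group of X). If there exists a nonempty bounded subset A of X with g(A) = A for every g ∈ G, then there exists a point of X fixed by every element of G. -/
open Filter Topology

/-- Bruhat–Tits fixed point theorem: let `X` be a complete metric space
satisfying the median inequality and let `G` be a group of isometries of `X`.
If there is a nonempty bounded subset of `X` invariant under every element of
`G`, then `G` has a common fixed point (is a GAG). -/
theorem bruhat_tits_fixed_point
    {X : Type*} [MetricSpace X] [CompleteSpace X]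
    (hmed : ∀ x y : X, ∃ m : X, ∀ z : X,
      dist z m ^ 2 ≤ (dist z x ^ 2 + dist z y ^ 2) / 2 - dist x y ^ 2 / 4)
    (G : Subgroup (Equiv.Perm X))
    (hiso : ∀ g ∈ G, ∀ x y : X, dist (g x) (g y) = dist x y)
    (A : Set X) (hne : A.Nonempty) (hbdd : Bornology.IsBounded A)
    (hinv : ∀ g ∈ G, (g : Equiv.Perm X) '' A = A) :
    ∃ x : X, ∀ g ∈ G, g x = x := by
  classical
  obtain ⟨a₀, ha₀⟩ := hne
  obtain ⟨C, hC⟩ := Metric.isBounded_iff.mp hbdd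
  set f : X → ℝ := fun x => sSup ((dist x) '' A) with hfdef
  have hbdda : ∀ x : X, BddAbove ((dist x) '' A) := by
    intro x
    refine ⟨dist x a₀ + C, ?_⟩
    rintro _ ⟨a, ha, rfl⟩
    calc dist x a ≤ dist x a₀ + dist a₀ a := dist_triangle _ _ _
      _ ≤ dist x a₀ + C := by gcongr; exact hC ha₀ ha
  have hne' : ∀ x : X, ((dist x) '' A).Nonempty := fun x => ⟨dist x a₀, a₀, ha₀, rfl⟩
  have hle : ∀ x, ∀ a ∈ A, dist x a ≤ f x := fun x a ha => le_csSup (hbdda x) ⟨a, ha, rfl⟩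
  have hsup_le : ∀ x y, (∀ a ∈ A, dist x a ≤ y) → f x ≤ y := by
    intro x y h
    exact csSup_le (hne' x) (by rintro _ ⟨a, ha, rfl⟩; exact h a ha)
  have hf0 : ∀ x, 0 ≤ f x := fun x => le_trans dist_nonneg (hle x a₀ ha₀)
  set r : ℝ := sInf (Set.range f) with hrdef
  have hbb : BddBelow (Set.range f) := ⟨0, by rintro _ ⟨x, rfl⟩; exact hf0 x⟩
  have hrle : ∀ x, r ≤ f x := fun x => csInf_le hbb ⟨x, rfl⟩
  have hr0 : 0 ≤ r := le_csInf ⟨f a₀, a₀, rfl⟩ (by rintro _ ⟨x, rfl⟩; exact hf0 x)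
  -- key inequality from the median
  have key : ∀ x y : X, dist x y ^ 2 / 4 ≤ (f x ^ 2 + f y ^ 2) / 2 - r ^ 2 := by
    intro x y
    obtain ⟨m, hm⟩ := hmed x y
    set R : ℝ := (f x ^ 2 + f y ^ 2) / 2 - dist x y ^ 2 / 4 with hR
    have hstep : ∀ a ∈ A, dist a m ^ 2 ≤ R := by
      intro a ha
      refine le_trans (hm a) ?_
      have h1 : dist a x ^ 2 ≤ f x ^ 2 := by
        have := hle a x -- wrong direction? dist a x = dist x a
        have h2 : dist a x ≤ f x := by rw [dist_comm]; exact hle x a ha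
        exact pow_le_pow_left₀ dist_nonneg h2 2
      have h2 : dist a y ^ 2 ≤ f y ^ 2 := by
        have h2 : dist a y ≤ f y := by rw [dist_comm]; exact hle y a ha
        exact pow_le_pow_left₀ dist_nonneg h2 2
      rw [hR]; linarith
    have hR0 : 0 ≤ R := le_trans (sq_nonneg _) (hstep a₀ ha₀)
    have hfm : f m ≤ Real.sqrt R := by
      refine hsup_le m _ (fun a ha => ?_)
      have : dist m a ^ 2 ≤ R := by rw [dist_comm]; exact hstep a ha
      nlinarith [Real.sq_sqrt hR0, Real.sqrt_nonneg R, dist_nonneg (x := m) (y := a)]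
    have hfm2 : f m ^ 2 ≤ R := by
      have := pow_le_pow_left₀ (hf0 m) hfm 2
      rwa [Real.sq_sqrt hR0] at this
    have hrfm : r ^ 2 ≤ f m ^ 2 := pow_le_pow_left₀ hr0 (hrle m) 2
    rw [hR] at hfm2
    linarith
  -- uniqueness of minimizer
  have huniq : ∀ x y : X, f x = r → f y = r → x = y := by
    intro x y hx hy
    have := key x y
    rw [hx, hy] at this
    have : dist x y ^ 2 ≤ 0 := by linarith
    have : dist x y = 0 := by nlinarith [dist_nonneg (x := x) (y := y)]
    exact dist_eq_zero.mp this
  -- approximate minimizers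
  have happrox : ∀ n : ℕ, ∃ x : X, f x < r + 1 / (n + 1) := by
    intro n
    obtain ⟨_, ⟨x, rfl⟩, hx⟩ :=
      Real.lt_sInf_add_pos (⟨f a₀, a₀, rfl⟩ : (Set.range f).Nonempty)
        (by positivity : (0:ℝ) < 1 / (n + 1))
    exact ⟨x, hx⟩
  choose u hu using happrox
  set b : ℕ → ℝ := fun N => Real.sqrt (8 * r * (1 / (N + 1)) + 4 * (1 / (N + 1)) ^ 2) with hb
  have hbound : ∀ n m N : ℕ, N ≤ n → N ≤ m → dist (u n) (u m) ≤ b N := by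
    intro n m N hn hm
    set δ : ℝ := 1 / (N + 1) with hδ
    have hδ0 : 0 < δ := by positivity
    have hfn : f (u n) ≤ r + δ := by
      refine le_trans (hu n).le ?_
      have : (1:ℝ) / (n + 1) ≤ δ := by
        rw [hδ]
        apply one_div_le_one_div_of_le (by positivity)
        exact_mod_cast Nat.succ_le_succ hn
      linarith
    have hfm : f (u m) ≤ r + δ := by
      refine le_trans (hu m).le ?_
      have : (1:ℝ) / (m + 1) ≤ δ := by
        rw [hδ]
        apply one_div_le_one_div_of_le (by positivity)
        exact_mod_cast Nat.succ_le_succ hm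
      linarith
    have h1 : f (u n) ^ 2 ≤ (r + δ) ^ 2 := pow_le_pow_left₀ (hf0 _) hfn 2
    have h2 : f (u m) ^ 2 ≤ (r + δ) ^ 2 := pow_le_pow_left₀ (hf0 _) hfm 2
    have h3 := key (u n) (u m)
    have h4 : dist (u n) (u m) ^ 2 ≤ 8 * r * δ + 4 * δ ^ 2 := by nlinarith
    have h5 : dist (u n) (u m) ≤ Real.sqrt (8 * r * δ + 4 * δ ^ 2) := by
      nlinarith [Real.sq_sqrt (by positivity : (0:ℝ) ≤ 8 * r * δ + 4 * δ ^ 2),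
        Real.sqrt_nonneg (8 * r * δ + 4 * δ ^ 2), dist_nonneg (x := u n) (y := u m)]
    exact h5
  have hδtend : Tendsto (fun N : ℕ => (1:ℝ) / (N + 1)) atTop (𝓝 0) :=
    tendsto_one_div_add_atTop_nhds_zero_nat
  have hbtend : Tendsto b atTop (𝓝 0) := by
    have h1 : Tendsto (fun N : ℕ => 8 * r * (1 / (N + 1)) + 4 * (1 / (N + 1)) ^ 2)
        atTop (𝓝 (8 * r * 0 + 4 * 0 ^ 2)) := by
      exact ((hδtend.const_mul (8 * r)).add ((hδtend.pow 2).const_mul 4))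
    simp only [mul_zero, zero_pow, ne_eq, OfNat.ofNat_ne_zero, not_false_iff, add_zero] at h1
    have h2 : Tendsto b atTop (𝓝 (Real.sqrt 0)) :=
      (Real.continuous_sqrt.tendsto 0).comp (by simpa using h1)
    simpa [Real.sqrt_zero] using h2
  have hcauchy : CauchySeq u := cauchySeq_of_le_tendsto_0 b hbound hbtend
  obtain ⟨c, hc⟩ := cauchySeq_tendsto_of_complete hcauchy
  -- f is 1-Lipschitz
  have hlip : ∀ x y : X, f x ≤ f y + dist x y := by
    intro x y
    refine hsup_le x _ (fun a ha => ?_)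
    calc dist x a ≤ dist x y + dist y a := dist_triangle _ _ _
      _ ≤ dist x y + f y := by gcongr; exact hle y a ha
      _ = f y + dist x y := by ring
  have hfc : f c = r := by
    refine le_antisymm ?_ (hrle c)
    have htend : Tendsto (fun n : ℕ => r + 1 / (n + 1) + dist c (u n)) atTop (𝓝 r) := by
      have hd : Tendsto (fun n : ℕ => dist c (u n)) atTop (𝓝 0) := by
        have := (tendsto_const_nhds (x := c) (f := atTop)).dist hc
        simpa using this
      have := (tendsto_const_nhds (x := r) (f := (atTop : Filter ℕ))).add hδtend |>.add hd
      simpa using this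
    refine ge_of_tendsto htend (Eventually.of_forall fun n => ?_)
    show f c ≤ r + 1 / (n + 1) + dist c (u n)
    calc f c ≤ f (u n) + dist c (u n) := hlip c (u n)
      _ ≤ r + 1 / (n + 1) + dist c (u n) := by linarith [(hu n).le]
  -- G fixes c
  refine ⟨c, fun g hg => ?_⟩
  have himg : (dist (g c)) '' A = (dist c) '' A := by
    conv_lhs => rw [← hinv g hg]
    rw [Set.image_image]
    exact Set.image_congr fun a _ => hiso g hg c a
  have hfgc : f (g c) = r := by
    have : f (g c) = f c := by
      show sSup ((dist (g c)) '' A) = sSup ((dist c) '' A)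
      rw [himg]
    rw [this, hfc]
  exact huniq (g c) c hfgc hfc
end

section
/- Let (E,d) be a complete metric space satisfying the median inequality, let G be a group of isometries of E, and let H be a normal subgroup of G such that the quotient G/H is cyclic (equivalently, there exists ε ∈ G such that G is generated by H together with ε). If G is a GAF and H is a GAG, then G is a GAG. -/
/-!
The common fixed points `F` of `H` form a nonempty closed set that contains the median of any
two of its points, since an isometry fixing `x` and `y` must fix their (unique) median. The median
inequality is a parallelogram law, so as in a Hilbert space every point `p` has a unique nearest
point in `F`. By normality `ε` maps `F` into itself, and taking `p` fixed by `ε` (GAF), `ε` must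
fix the nearest point `q` of `F` to `p`. Then `q` is fixed by `ε` and by `H`, hence by all of `G`.
-/

open Filter Topology Metric

def IsMedian {E : Type*} [MetricSpace E] (x y m : E) : Prop :=
  ∀ z, dist z m ^ 2 ≤ (dist z x ^ 2 + dist z y ^ 2) / 2 - dist x y ^ 2 / 4

def fixSet {X : Type*} (S : Set (Equiv.Perm X)) : Set X :=
  {x | ∀ g ∈ S, g x = x}

section FixSet

variable {X : Type*} {S : Set (Equiv.Perm X)}

theorem isClosed_fixSet [TopologicalSpace X] [T2Space X] (hS : ∀ g ∈ S, Continuous g) :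
    IsClosed (fixSet S) := by
  have : fixSet S = ⋂ g ∈ S, {x | g x = x} := by ext; simp [fixSet]
  rw [this]
  exact isClosed_biInter fun g hg => isClosed_eq (hS g hg) continuous_id

theorem mapsTo_fixSet {ε : Equiv.Perm X} (hε : ∀ h ∈ S, ε⁻¹ * h * ε ∈ S) :
    Set.MapsTo ε (fixSet S) (fixSet S) := by
  intro x hx h hh
  have hfix : ε⁻¹ (h (ε x)) = x := hx _ (hε h hh)
  exact Equiv.Perm.inv_eq_iff_eq.mp hfix

theorem fixSet_subset_fixSet_closure :
    fixSet S ⊆ fixSet (Subgroup.closure S : Set (Equiv.Perm X)) := by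
  intro x hx g hg
  have hsub : S ⊆ MulAction.stabilizer (Equiv.Perm X) x := fun g hg => hx g hg
  exact (Subgroup.closure_le _).mpr hsub hg

end FixSet

namespace IsMedian

variable {E : Type*} [MetricSpace E] {x y m : E}

theorem symm (h : IsMedian x y m) : IsMedian y x m := fun z => by
  rw [dist_comm y x, add_comm]
  exact h z

theorem dist_left_sq_le (h : IsMedian x y m) : dist x m ^ 2 ≤ dist x y ^ 2 / 4 := by
  have := h x
  rw [dist_self] at this
  linarith

theorem dist_right_sq_le (h : IsMedian x y m) : dist y m ^ 2 ≤ dist x y ^ 2 / 4 := by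
  simpa only [dist_comm y x] using h.symm.dist_left_sq_le

theorem eq_of_dist_sq_le (h : IsMedian x y m) {w : E} (hx : dist w x ^ 2 ≤ dist x y ^ 2 / 4)
    (hy : dist w y ^ 2 ≤ dist x y ^ 2 / 4) : w = m := by
  have hwm : dist w m ^ 2 ≤ 0 := by linarith [h w]
  exact dist_eq_zero.mp ((sq_nonpos_iff _).mp hwm)

theorem apply_eq {f : E → E} (h : IsMedian x y m) (hf : Isometry f) (hx : f x = x)
    (hy : f y = y) : f m = m := by
  refine h.eq_of_dist_sq_le ?_ ?_
  · have hdx : dist (f m) (f x) = dist x m := by rw [hf.dist_eq, dist_comm]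
    rw [hx] at hdx
    exact hdx ▸ h.dist_left_sq_le
  · have hdy : dist (f m) (f y) = dist y m := by rw [hf.dist_eq, dist_comm]
    rw [hy] at hdy
    exact hdy ▸ h.dist_right_sq_le

theorem mem_fixSet {S : Set (Equiv.Perm E)} (h : IsMedian x y m) (hS : ∀ g ∈ S, Isometry g)
    (hx : x ∈ fixSet S) (hy : y ∈ fixSet S) : m ∈ fixSet S :=
  fun g hg => h.apply_eq (hS g hg) (hx g hg) (hy g hg)

theorem dist_sq_le_infDist {F : Set E} (h : IsMedian x y m) (hm : m ∈ F) (p : E) :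
    dist x y ^ 2 ≤ 2 * dist p x ^ 2 + 2 * dist p y ^ 2 - 4 * infDist p F ^ 2 := by
  have hδ : infDist p F ^ 2 ≤ dist p m ^ 2 :=
    pow_le_pow_left₀ infDist_nonneg (infDist_le_dist_of_mem hm) 2
  linarith [h p]

end IsMedian

section NearestPoint

variable {E : Type*} [MetricSpace E] {F : Set E}

theorem eq_of_dist_eq_infDist_of_median (hF : ∀ x ∈ F, ∀ y ∈ F, ∃ m ∈ F, IsMedian x y m)
    {p x y : E} (hx : x ∈ F) (hy : y ∈ F) (hpx : dist p x = infDist p F)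
    (hpy : dist p y = infDist p F) : x = y := by
  obtain ⟨m, hmF, hm⟩ := hF x hx y hy
  have hxy : dist x y ^ 2 ≤ 0 := by
    have := hm.dist_sq_le_infDist hmF p
    rw [hpx, hpy] at this
    linarith
  exact dist_eq_zero.mp ((sq_nonpos_iff _).mp hxy)

theorem dist_le_sqrt_of_dist_le (hF : ∀ x ∈ F, ∀ y ∈ F, ∃ m ∈ F, IsMedian x y m)
    {p x y : E} {r : ℝ} (hx : x ∈ F) (hy : y ∈ F) (hpx : dist p x ≤ r) (hpy : dist p y ≤ r) :
    dist x y ≤ √(4 * (r ^ 2 - infDist p F ^ 2)) := by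
  obtain ⟨m, hmF, hm⟩ := hF x hx y hy
  have hxy := hm.dist_sq_le_infDist hmF p
  have hx2 := pow_le_pow_left₀ dist_nonneg hpx 2
  have hy2 := pow_le_pow_left₀ dist_nonneg hpy 2
  simpa only [abs_dist] using Real.abs_le_sqrt (by linarith : dist x y ^ 2 ≤ _)

theorem exists_dist_eq_infDist_of_median [CompleteSpace E] (hFc : IsClosed F)
    (hFne : F.Nonempty) (hF : ∀ x ∈ F, ∀ y ∈ F, ∃ m ∈ F, IsMedian x y m) (p : E) :
    ∃ q ∈ F, dist p q = infDist p F := by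
  set δ := infDist p F
  set r : ℕ → ℝ := fun n => δ + 1 / ((n : ℝ) + 1)
  have hr : Tendsto r atTop (𝓝 δ) := by
    simpa only [add_zero] using (tendsto_one_div_add_atTop_nhds_zero_nat (𝕜 := ℝ)).const_add δ
  have happrox : ∀ n, ∃ y ∈ F, dist p y < r n := fun n =>
    (infDist_lt_iff hFne).mp (by simp only [r]; linarith [Nat.one_div_pos_of_nat (α := ℝ) (n := n)])
  choose u huF hu using happrox
  have hr_anti : Antitone r := fun m n hmn => by
    simp only [r]
    gcongr
  have hcauchy : CauchySeq u := by
    refine cauchySeq_of_le_tendsto_0 (fun N => √(4 * (r N ^ 2 - δ ^ 2)))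
      (fun n m N hn hm => dist_le_sqrt_of_dist_le hF (huF n) (huF m)
        ((hu n).le.trans (hr_anti hn)) ((hu m).le.trans (hr_anti hm))) ?_
    have := (((hr.pow 2).sub_const (δ ^ 2)).const_mul 4).sqrt
    simpa only [sub_self, mul_zero, Real.sqrt_zero] using this
  obtain ⟨q, hq⟩ := cauchySeq_tendsto_of_complete hcauchy
  have hqF : q ∈ F := hFc.mem_of_tendsto hq (Eventually.of_forall huF)
  refine ⟨q, hqF, le_antisymm ?_ (infDist_le_dist_of_mem hqF)⟩
  exact le_of_tendsto_of_tendsto' (tendsto_const_nhds.dist hq) hr fun n => (hu n).le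

end NearestPoint

/-- Let `E` be a complete metric space satisfying the median inequality, `G` a
group of isometries of `E`, and `H` a normal subgroup of `G` with cyclic
quotient `G/H` (i.e. there is `ε ∈ G` such that `G` is generated by `H`
together with `ε`). If `G` is a GAF and `H` is a GAG then `G` is a GAG. -/
theorem gag_of_normal_gag_cyclic_quotient
    {E : Type*} [MetricSpace E] [CompleteSpace E]
    (hmed : ∀ x y : E, ∃ m : E, ∀ z : E,
      dist z m ^ 2 ≤ (dist z x ^ 2 + dist z y ^ 2) / 2 - dist x y ^ 2 / 4)
    (G H : Subgroup (Equiv.Perm E))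
    (hiso : ∀ g ∈ G, ∀ x y : E, dist (g x) (g y) = dist x y)
    (hHG : H ≤ G)
    (hnorm : ∀ g ∈ G, ∀ h ∈ H, g * h * g⁻¹ ∈ H)
    (hcyc : ∃ ε ∈ G, G ≤ Subgroup.closure (insert ε (H : Set (Equiv.Perm E))))
    (hGAF : ∀ g ∈ G, ∃ x : E, g x = x)
    (hHGAG : ∃ x : E, ∀ h ∈ H, h x = x) :
    ∃ x : E, ∀ g ∈ G, g x = x := by
  obtain ⟨ε, hεG, hgen⟩ := hcyc
  obtain ⟨p, hp⟩ := hGAF ε hεG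
  have hisoH : ∀ h ∈ (H : Set (Equiv.Perm E)), Isometry h :=
    fun h hh => Isometry.of_dist_eq (hiso h (hHG hh))
  have hFmed : ∀ x ∈ fixSet H, ∀ y ∈ fixSet H, ∃ m ∈ fixSet H, IsMedian x y m := fun x hx y hy =>
    let ⟨m, hm⟩ := hmed x y
    ⟨m, IsMedian.mem_fixSet hm hisoH hx hy, hm⟩
  obtain ⟨q, hqF, hpq⟩ := exists_dist_eq_infDist_of_median
    (isClosed_fixSet fun h hh => (hisoH h hh).continuous) hHGAG hFmed p
  have hεF : Set.MapsTo ε (fixSet H) (fixSet H) :=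
    mapsTo_fixSet fun h hh => by simpa using hnorm ε⁻¹ (inv_mem hεG) h hh
  have hεq : ε q = q := by
    refine eq_of_dist_eq_infDist_of_median hFmed (hεF hqF) hqF ?_ hpq
    rw [← hpq, ← hiso ε hεG p q, hp]
  have hq : q ∈ fixSet (insert ε (H : Set (Equiv.Perm E))) := by
    rintro g (rfl | hg)
    exacts [hεq, hqF g hg]
  exact ⟨q, fun g hg => fixSet_subset_fixSet_closure hq g (hgen hg)⟩
end

section
/- Let n ≥ 0 and let G be an Abelian group of isometries of the Euclidean space ℝⁿ (surjective self-isometries of ℝⁿ with the Euclidean distance). If G is a GAF then G is a GAG. -/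
/-!
Isometries of `ℝⁿ` are affine (Mazur–Ulam), so the common fixed points of finitely many of them
form an affine subspace. If `g` commutes with every element of a finite set `T` and fixes a point
`p`, then `g` preserves the subspace `Fix T` and therefore fixes the orthogonal projection of `p`
onto it, the point of `Fix T` nearest to `p`; by induction, every finite subset of `G` has a common
fixed point. A finite subset whose fixed subspace has minimal dimension has the same fixed subspace
as any larger one, so its fixed points are fixed by all of `G`.
-/

open Function Set EuclideanGeometry

namespace AffineMap

variable {k V P : Type*} [Ring k] [AddCommGroup V] [Module k V] [AddTorsor V P]

def fixedPointsSubspace (f : P →ᵃ[k] P) : AffineSubspace k P where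
  carrier := fixedPoints f
  smul_vsub_vadd_mem' c p₁ p₂ p₃ h₁ h₂ h₃ := by
    simp only [mem_fixedPoints, IsFixedPt, map_vadd, linearMap_vsub, map_smul, h₁.eq, h₂.eq,
      h₃.eq]

@[simp]
theorem mem_fixedPointsSubspace {f : P →ᵃ[k] P} {x : P} :
    x ∈ f.fixedPointsSubspace ↔ IsFixedPt f x :=
  Iff.rfl

end AffineMap

namespace AffineSubspace

variable {k V P ι : Type*} [DivisionRing k] [AddCommGroup V] [Module k V] [AddTorsor V P]
  [FiniteDimensional k V]

theorem nonempty_iInf_of_forall_finset (s : ι → AffineSubspace k P)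
    (h : ∀ t : Finset ι, ((⨅ i ∈ t, s i : AffineSubspace k P) : Set P).Nonempty) :
    ((⨅ i, s i : AffineSubspace k P) : Set P).Nonempty := by
  classical
  -- a finite intersection of minimal dimension is contained in every `s j`
  let d (t : Finset ι) := Module.finrank k (⨅ i ∈ t, s i).direction
  let t := argmin d
  have hle : ∀ j, ⨅ i ∈ t, s i ≤ s j := by
    intro j
    have hsub : ⨅ i ∈ insert j t, s i ≤ ⨅ i ∈ t, s i :=
      biInf_mono fun i hi => Finset.mem_insert_of_mem hi
    have hdir := Submodule.eq_of_le_of_finrank_eq (direction_le hsub)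
      ((Submodule.finrank_mono (direction_le hsub)).antisymm (argmin_le d _))
    rw [← eq_of_direction_eq_of_nonempty_of_le hdir (h _) hsub]
    exact biInf_le _ (Finset.mem_insert_self j t)
  exact (h t).mono (SetLike.coe_mono (le_iInf hle))

end AffineSubspace

section Euclidean

variable {𝕜 V P : Type*} [RCLike 𝕜] [NormedAddCommGroup V] [InnerProductSpace 𝕜 V] [MetricSpace P]
  [NormedAddTorsor V P]

theorem Isometry.isFixedPt_orthogonalProjection {s : AffineSubspace 𝕜 P} [Nonempty s]
    [s.direction.HasOrthogonalProjection] {f : P → P} (hf : Isometry f) (hs : MapsTo f s s)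
    {p : P} (hp : IsFixedPt f p) : IsFixedPt f (orthogonalProjection s p : P) := by
  -- `f q` lies in `s` as far from `p` as `q` does, so Pythagoras forces `f q = q`
  set q : P := ↑(orthogonalProjection s p)
  have hpyth := dist_sq_eq_dist_orthogonalProjection_sq_add_dist_orthogonalProjection_sq p
    (hs (orthogonalProjection_mem p))
  have hdist : dist (f q) p = dist q p := by rw [← hp.eq, hf.dist_eq, hp.eq]
  rw [hdist, dist_comm q p] at hpyth
  exact dist_eq_zero.1 (mul_self_eq_zero.1 (by linarith))

end Euclidean

theorem exists_forall_isFixedPt_of_commute {V P ι : Type*} [NormedAddCommGroup V]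
    [InnerProductSpace ℝ V] [FiniteDimensional ℝ V] [MetricSpace P] [NormedAddTorsor V P]
    (f : ι → P →ᵃⁱ[ℝ] P) (hcomm : ∀ i j, Function.Commute (f i) (f j))
    (hfix : ∀ i, ∃ x, IsFixedPt (f i) x) : ∃ x, ∀ i, IsFixedPt (f i) x := by
  classical
  let A i := (f i).toAffineMap.fixedPointsSubspace
  suffices ((⨅ i, A i : AffineSubspace ℝ P) : Set P).Nonempty by
    simpa [A, AffineSubspace.mem_iInf_iff] using this
  refine AffineSubspace.nonempty_iInf_of_forall_finset A fun t => ?_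
  induction t using Finset.induction_on with
  | empty => simp
  | insert j t _ ih =>
    set B := ⨅ i ∈ t, A i
    have : Nonempty B := ih.to_subtype
    have hB : MapsTo (f j) B B := by
      intro x hx
      simp only [B, SetLike.mem_coe, AffineSubspace.mem_iInf_iff] at hx ⊢
      exact fun i hi => (hcomm j i).mapsTo_fixedPoints (hx i hi)
    obtain ⟨p, hp⟩ := hfix j
    refine ⟨(orthogonalProjection B p : P), ?_⟩
    rw [Finset.iInf_insert, SetLike.mem_coe, AffineSubspace.mem_inf_iff]
    exact ⟨(f j).isometry.isFixedPt_orthogonalProjection hB hp, orthogonalProjection_mem p⟩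

/-- An Abelian group of isometries of the Euclidean space `ℝⁿ` which is a GAF
(every element has a fixed point) is a GAG (has a common fixed point). -/
theorem abelian_isometry_group_euclidean_gaf_gag
    (n : ℕ)
    (G : Subgroup (Equiv.Perm (EuclideanSpace ℝ (Fin n))))
    (hiso : ∀ g ∈ G, ∀ x y : EuclideanSpace ℝ (Fin n), dist (g x) (g y) = dist x y)
    (hab : ∀ g ∈ G, ∀ h ∈ G, g * h = h * g)
    (hGAF : ∀ g ∈ G, ∃ x : EuclideanSpace ℝ (Fin n), g x = x) :
    ∃ x : EuclideanSpace ℝ (Fin n), ∀ g ∈ G, g x = x := by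
  -- Mazur–Ulam: every isometry of `ℝⁿ` is affine
  let f (g : G) : EuclideanSpace ℝ (Fin n) →ᵃⁱ[ℝ] EuclideanSpace ℝ (Fin n) :=
    (IsometryEquiv.mk g.1 (.of_dist_eq (hiso g g.2))).toRealAffineIsometryEquiv.toAffineIsometry
  obtain ⟨x, hx⟩ := exists_forall_isFixedPt_of_commute f
    (fun g h x => DFunLike.congr_fun (hab g g.2 h h.2) x) fun g => hGAF g g.2
  exact ⟨x, fun g hg => hx ⟨g, hg⟩⟩
end

section
/- Let n ≥ 0 and let G be a solvable group of isometries of the Euclidean space ℝⁿ (surjective self-isometries of ℝⁿ with the Euclidean distance). If G is a GAF then G is a GAG. -/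
/-!
Induct down the derived series. If `⁅D, D⁆` has a common fixed point, its fixed set `F` is a
nonempty affine subspace (isometries are affine by Mazur–Ulam) which `D` preserves, and since
commutators of `D` act trivially on `F`, every `g ∈ D` also preserves `F ∩ Fix h₁ ∩ ⋯ ∩ Fix hₖ`
for `hᵢ ∈ D`. An isometry with a fixed point `x₀` that preserves a nonempty affine subspace fixes
the orthogonal projection of `x₀` onto it, so all these finite intersections are nonempty; in
finite dimension one of them is already the full intersection.
-/

open Function EuclideanGeometry
open scoped commutatorElement

theorem AffineSubspace.exists_mem_forall_mem_of_forall_finset {k V P ι : Type*} [DivisionRing k]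
    [AddCommGroup V] [Module k V] [AddTorsor V P] [FiniteDimensional k V]
    (s₀ : AffineSubspace k P) (s : ι → AffineSubspace k P)
    (h : ∀ t : Finset ι, ∃ x ∈ s₀, ∀ i ∈ t, x ∈ s i) : ∃ x ∈ s₀, ∀ i, x ∈ s i := by
  classical
  -- a finite intersection whose direction is minimal cannot shrink further
  let A (t : Finset ι) : AffineSubspace k P := s₀ ⊓ ⨅ i ∈ t, s i
  have mem_A {t x} : x ∈ A t ↔ x ∈ s₀ ∧ ∀ i ∈ t, x ∈ s i := by
    simp only [A, AffineSubspace.mem_inf_iff, AffineSubspace.mem_iInf_iff]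
  obtain ⟨_, ⟨t, rfl⟩, hmin⟩ := WellFounded.has_min wellFounded_lt
    (Set.range fun t => (A t).direction) ⟨_, ∅, rfl⟩
  obtain ⟨x, hx₀, hx⟩ := h t
  refine ⟨x, hx₀, fun i => ?_⟩
  have hle : A (insert i t) ≤ A t := fun y hy =>
    mem_A.2 ⟨(mem_A.1 hy).1, fun j hj => (mem_A.1 hy).2 j (Finset.mem_insert_of_mem hj)⟩
  obtain ⟨y, hy₀, hy⟩ := h (insert i t)
  rcases hle.lt_or_eq with hlt | heq
  · exact absurd (AffineSubspace.direction_lt_of_nonempty hlt ⟨y, mem_A.2 ⟨hy₀, hy⟩⟩)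
      (hmin _ ⟨_, rfl⟩)
  · exact (mem_A.1 (heq ▸ mem_A.2 ⟨hx₀, hx⟩)).2 i (Finset.mem_insert_self i t)

section

variable {V P : Type*} [NormedAddCommGroup V] [InnerProductSpace ℝ V] [MetricSpace P]
  [NormedAddTorsor V P]

theorem Isometry.exists_mem_isFixedPt_of_mapsTo {f : P → P} (hf : Isometry f) {x₀ : P}
    (hx₀ : IsFixedPt f x₀) {s : AffineSubspace ℝ P} [Nonempty s]
    [s.direction.HasOrthogonalProjection] (hs : Set.MapsTo f s s) : ∃ y ∈ s, IsFixedPt f y := by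
  set y : P := (orthogonalProjection s x₀ : P)
  have hy : y ∈ s := (orthogonalProjection s x₀).2
  -- Pythagoras: `dist (f y) x₀ ^ 2 = dist (f y) y ^ 2 + dist x₀ y ^ 2`, and `f` fixes `x₀`
  have hpyth := dist_sq_eq_dist_orthogonalProjection_sq_add_dist_orthogonalProjection_sq x₀ (hs hy)
  have hfy : dist (f y) x₀ = dist y x₀ := by rw [← hf.dist_eq y x₀, hx₀.eq]
  refine ⟨y, hy, dist_eq_zero.1 ?_⟩
  rw [hfy, dist_comm y x₀] at hpyth
  nlinarith [dist_nonneg (x := f y) (y := y)]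

variable {H : Type*} [Group H] [MulAction H P] [IsIsometricSMul H P]

variable (P) in
def fixedSubspace (S : Set H) : AffineSubspace ℝ P where
  carrier := {x | ∀ g ∈ S, g • x = x}
  smul_vsub_vadd_mem' c p₁ p₂ p₃ h₁ h₂ h₃ g hg := by
    let f := (IsometryEquiv.constSMul (X := P) g).toRealAffineIsometryEquiv
    have hfg (x : P) : g • x = f x := rfl
    change f _ = _
    rw [f.map_vadd, map_smul, f.map_vsub, ← hfg, ← hfg, ← hfg, h₁ g hg, h₂ g hg, h₃ g hg]

@[simp]
theorem mem_fixedSubspace {S : Set H} {x : P} : x ∈ fixedSubspace P S ↔ ∀ g ∈ S, g • x = x :=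
  Iff.rfl

theorem smul_mem_fixedSubspace_union {D N : Subgroup H} [N.Normal] (hDN : ⁅D, D⁆ ≤ N) {g : H}
    (hg : g ∈ D) {t : Set H} (ht : t ⊆ D) {x : P} (hx : x ∈ fixedSubspace P (N ∪ t)) :
    g • x ∈ fixedSubspace P (N ∪ t) := by
  rintro h (hN | ht')
  · rw [← inv_smul_eq_iff, smul_smul, smul_smul]
    exact hx _ (Or.inl (‹N.Normal›.conj_mem' h hN g))
  · have hcomm : ⁅h⁻¹, g⁻¹⁆ • x = x :=
      hx _ (Or.inl (hDN (Subgroup.commutator_mem_commutator (D.inv_mem (ht ht')) (D.inv_mem hg))))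
    calc h • g • x = g • h • ⁅h⁻¹, g⁻¹⁆ • x := by
          simp only [smul_smul, commutatorElement_def]; group
      _ = g • x := by rw [hcomm, hx h (Or.inr ht')]

variable [FiniteDimensional ℝ V]

theorem nonempty_fixedSubspace_union_finset {D N : Subgroup H} [N.Normal] (hDN : ⁅D, D⁆ ≤ N)
    (hD : ∀ g ∈ D, ∃ x : P, g • x = x) (hN : ∃ x : P, ∀ c ∈ N, c • x = x)
    (t : Finset H) (ht : ↑t ⊆ (D : Set H)) :
    (fixedSubspace P ((N : Set H) ∪ t) : Set P).Nonempty := by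
  classical
  induction t using Finset.induction_on with
  | empty =>
    obtain ⟨x, hx⟩ := hN
    exact ⟨x, by simpa using hx⟩
  | insert g t _ ih =>
    rw [Finset.coe_insert, Set.insert_subset_iff] at ht
    rw [Finset.coe_insert]
    have : Nonempty (fixedSubspace P ((N : Set H) ∪ t)) := (ih ht.2).to_subtype
    obtain ⟨x₀, hx₀⟩ := hD g ht.1
    obtain ⟨y, hy, hgy⟩ := (isometry_smul P g).exists_mem_isFixedPt_of_mapsTo hx₀
      fun x hx => smul_mem_fixedSubspace_union hDN ht.1 ht.2 hx
    refine ⟨y, ?_⟩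
    rintro h (hN | rfl | ht')
    · exact hy h (Or.inl hN)
    · exact hgy
    · exact hy h (Or.inr ht')

end

section

variable {E : Type*} [NormedAddCommGroup E] [InnerProductSpace ℝ E] [FiniteDimensional ℝ E]
variable {H : Type*} [Group H] [MulAction H E] [IsIsometricSMul H E]

theorem exists_forall_smul_eq_of_commutator_le {D N : Subgroup H} [N.Normal] (hDN : ⁅D, D⁆ ≤ N)
    (hD : ∀ g ∈ D, ∃ x : E, g • x = x) (hN : ∃ x : E, ∀ c ∈ N, c • x = x) :
    ∃ x : E, ∀ g ∈ D, g • x = x := by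
  have hfin (t : Finset D) :
      ∃ x ∈ fixedSubspace E (N : Set H), ∀ g ∈ t, x ∈ fixedSubspace E {(g : H)} := by
    obtain ⟨x, hx⟩ := nonempty_fixedSubspace_union_finset hDN hD hN (t.map (Embedding.subtype _))
      (by rw [Finset.coe_map]; rintro _ ⟨g, -, rfl⟩; exact g.2)
    refine ⟨x, fun c hc => hx c (Or.inl hc), fun g hg => ?_⟩
    simpa using hx g (Or.inr (by simpa using hg))
  obtain ⟨x, -, hx⟩ := AffineSubspace.exists_mem_forall_mem_of_forall_finset _ _ hfin
  exact ⟨x, fun g hg => by simpa using hx ⟨g, hg⟩⟩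

theorem exists_forall_smul_eq_of_isSolvable [Group.IsSolvable H] (h : ∀ g : H, ∃ x : E, g • x = x) :
    ∃ x : E, ∀ g : H, g • x = x := by
  obtain ⟨k, hk⟩ := Group.IsSolvable.solvable (G := H)
  have key : ∀ j ≤ k, ∃ x : E, ∀ g ∈ derivedSeries H j, g • x = x := by
    refine fun j hj => Nat.decreasingInduction (fun j _ ih => ?_) ?_ hj
    · exact exists_forall_smul_eq_of_commutator_le (derivedSeries_succ H j).ge (fun g _ => h g) ih
    · obtain ⟨x, -⟩ := h 1
      exact ⟨x, fun g hg => by rw [hk, Subgroup.mem_bot] at hg; rw [hg, one_smul]⟩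
  obtain ⟨x, hx⟩ := key 0 k.zero_le
  exact ⟨x, fun g => hx g trivial⟩

end

/-- A solvable group of isometries of the Euclidean space `ℝⁿ` which is a GAF
(every element has a fixed point) is a GAG (has a common fixed point). -/
theorem solvable_isometry_group_euclidean_gaf_gag
    (n : ℕ)
    (G : Subgroup (Equiv.Perm (EuclideanSpace ℝ (Fin n))))
    (hiso : ∀ g ∈ G, ∀ x y : EuclideanSpace ℝ (Fin n), dist (g x) (g y) = dist x y)
    (hsolv : IsSolvable G)
    (hGAF : ∀ g ∈ G, ∃ x : EuclideanSpace ℝ (Fin n), g x = x) :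
    ∃ x : EuclideanSpace ℝ (Fin n), ∀ g ∈ G, g x = x := by
  have : IsIsometricSMul G (EuclideanSpace ℝ (Fin n)) :=
    ⟨fun g => Isometry.of_dist_eq (hiso g g.2)⟩
  have : Group.IsSolvable G := hsolv
  obtain ⟨x, hx⟩ := exists_forall_smul_eq_of_isSolvable fun g : G => hGAF g g.2
  exact ⟨x, fun g hg => hx ⟨g, hg⟩⟩
end

section
/- Let f and g be orientation-preserving isometries of the Euclidean space ℝ³, i.e., affine isometric bijections of ℝ³ whose linear parts have determinant 1. If f and g have no common fixed point (the fixed point sets of f and of g are disjoint), then there exists h in the subgroup generated by f and g such that h has no fixed point in ℝ³. -/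
/-!
Write `f x = A x + a` and `g x = B x + b` with `A, B ∈ SO(3)`, and suppose that every element of
`⟨f, g⟩` has a fixed point; we produce a common fixed point of `f` and `g`. An affine map with
linear part `C` has a fixed point iff its translation part lies in
`range (1 - C) = (ker (1 - C))ᗮ`, and a rotation `C ≠ 1` has a line `ker (1 - C)` as axis.

If the axes of `A` and `B` coincide, `A` and `B` commute (`SO(2)` is abelian), so `⁅f, g⁆` is a
translation; having a fixed point it is trivial, and then `g` moves a fixed point `x₀` of `f` along
the axis of `A` and orthogonally to the axis of `B`, i.e. not at all.

Otherwise the axes span a plane `ker (1 - A) ⊔ ker (1 - B)`. It lies in the preimage under `1 - A`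
of the plane `range (1 - A * B)`, which is a proper subspace, so the two agree. A fixed point of
`f * g` puts `x₀ - y₀` in that preimage, where `x₀`, `y₀` are fixed by `f`, `g`; writing
`x₀ - y₀ = k + l` along the two axes, `x₀ - k = y₀ + l` is fixed by both.
-/

open Module LinearMap
open scoped commutatorElement

theorem Submodule.eq_of_not_disjoint_of_finrank_eq_one {K V : Type*} [DivisionRing K]
    [AddCommGroup V] [Module K V] [FiniteDimensional K V] {p q : Submodule K V}
    (hp : finrank K p = 1) (hq : finrank K q = 1) (h : ¬Disjoint p q) : p = q := by
  have hpq : finrank K ↥(p ⊓ q) = 1 := by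
    have h0 : finrank K ↥(p ⊓ q) ≠ 0 := by rwa [Ne, Submodule.finrank_eq_zero, ← disjoint_iff]
    have h1 := Submodule.finrank_mono (inf_le_left : p ⊓ q ≤ p)
    omega
  rw [← Submodule.eq_of_le_of_finrank_eq inf_le_left (hpq.trans hp.symm),
    Submodule.eq_of_le_of_finrank_eq inf_le_right (hpq.trans hq.symm)]

namespace LinearMap

section Ring

variable {R M : Type*} [Ring R] [AddCommGroup M] [Module R M] {A B : M →ₗ[R] M}
  {W : Submodule R M}

theorem le_comap_of_range_one_sub_le (h : range (1 - A) ≤ W) : W ≤ W.comap A := by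
  intro w hw
  simpa using W.sub_mem hw (h (mem_range_self (1 - A) w))

theorem ker_one_sub_mul_inf_le (hA : Function.Injective A) :
    ker (1 - A * B) ⊓ ker (1 - A) ≤ ker (1 - B) := by
  rintro x ⟨hAB, hA'⟩
  simp only [SetLike.mem_coe, mem_ker, LinearMap.sub_apply, Module.End.one_apply,
    Module.End.mul_apply, sub_eq_zero] at hAB hA' ⊢
  exact (hA (hAB.symm.trans hA')).symm

end Ring

theorem det_restrict_of_range_one_sub_le {K V : Type*} [Field K] [AddCommGroup V] [Module K V]
    [FiniteDimensional K V] {A : V →ₗ[K] V} {W : Submodule K V} (h : range (1 - A) ≤ W) :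
    (A.restrict (le_comap_of_range_one_sub_le h)).det = A.det := by
  have hQ : W.mapQ W A (le_comap_of_range_one_sub_le h) = 1 := by
    ext x
    simpa [Submodule.Quotient.eq, sub_mem_comm_iff] using h (mem_range_self (1 - A) x)
  rw [det_eq_det_mul_det W A (le_comap_of_range_one_sub_le h), hQ, map_one, mul_one]

section InnerProductSpace

variable {E : Type*} [NormedAddCommGroup E] [InnerProductSpace ℝ E] [FiniteDimensional ℝ E]
  {A B : E →ₗ[ℝ] E} {W : Submodule ℝ E}

theorem det_adjoint (T : E →ₗ[ℝ] E) : (adjoint T).det = T.det := by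
  let v := stdOrthonormalBasis ℝ E
  rw [← det_toMatrix v.toBasis, toMatrix_adjoint v v, Matrix.det_conjTranspose, det_toMatrix,
    star_trivial]

theorem adjoint_mul_self_of_norm_map (hA : ∀ x, ‖A x‖ = ‖x‖) : adjoint A * A = 1 :=
  (⟨A, hA⟩ : E →ₗᵢ[ℝ] E).adjoint_comp_self'

theorem ker_adjoint_one_sub (hA : ∀ x, ‖A x‖ = ‖x‖) : ker (adjoint (1 - A)) = ker (1 - A) := by
  have h₁ := LinearMap.congr_fun (adjoint_mul_self_of_norm_map hA)
  have h₂ := LinearMap.congr_fun (mul_eq_one_comm.mp (adjoint_mul_self_of_norm_map hA))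
  ext x
  simp only [map_sub, adjoint_one, mem_ker, LinearMap.sub_apply, Module.End.one_apply,
    sub_eq_zero, Module.End.mul_apply] at h₁ h₂ ⊢
  constructor
  · intro hx; nth_rw 1 [← h₂ x, ← hx]
  · intro hx; nth_rw 1 [← h₁ x, ← hx]

theorem orthogonal_ker_one_sub (hA : ∀ x, ‖A x‖ = ‖x‖) : (ker (1 - A))ᗮ = range (1 - A) := by
  rw [← ker_adjoint_one_sub hA, ← orthogonal_range, Submodule.orthogonal_orthogonal]

theorem orthogonal_range_one_sub (hA : ∀ x, ‖A x‖ = ‖x‖) : (range (1 - A))ᗮ = ker (1 - A) := by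
  rw [← orthogonal_ker_one_sub hA, Submodule.orthogonal_orthogonal]

theorem det_one_sub_eq_zero (hA : ∀ x, ‖A x‖ = ‖x‖) (hdet : A.det = 1)
    (hodd : Odd (finrank ℝ E)) : (1 - A).det = 0 := by
  have key : adjoint A * (1 - A) = -adjoint (1 - A) := by
    rw [mul_sub, mul_one, adjoint_mul_self_of_norm_map hA, map_sub, adjoint_one, neg_sub]
  have := congrArg LinearMap.det key
  rw [map_mul, det_adjoint, hdet, one_mul, ← neg_one_smul ℝ (adjoint (1 - A)), det_smul,
    hodd.neg_one_pow, det_adjoint] at this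
  linarith

theorem finrank_range_one_sub_ne_one (hA : ∀ x, ‖A x‖ = ‖x‖) (hdet : A.det = 1) :
    finrank ℝ (range (1 - A)) ≠ 1 := by
  intro h1
  set W := range (1 - A)
  obtain ⟨c, hc, -⟩ := (A.restrict (le_comap_of_range_one_sub_le le_rfl)
    ).existsUnique_eq_smul_id_of_finrank_eq_one h1
  have hc1 : c = 1 := by
    have := det_restrict_of_range_one_sub_le (le_refl W)
    rwa [hc, det_smul, det_id, h1, pow_one, mul_one, hdet] at this
  have hW : W = ⊥ := by
    refine eq_bot_iff.mpr fun w hw ↦ ?_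
    have hwK : w ∈ Wᗮ := by
      rw [orthogonal_range_one_sub hA, mem_ker]
      have := congrArg Subtype.val (LinearMap.congr_fun hc ⟨w, hw⟩)
      simpa [hc1, sub_eq_zero] using this.symm
    simpa [Submodule.inf_orthogonal_eq_bot] using Submodule.mem_inf.mpr ⟨hw, hwK⟩
  rw [hW, finrank_bot] at h1
  exact zero_ne_one h1

theorem finrank_ker_one_sub_eq_one (h3 : finrank ℝ E = 3) (hA : ∀ x, ‖A x‖ = ‖x‖)
    (hdet : A.det = 1) (hA1 : A ≠ 1) : finrank ℝ (ker (1 - A)) = 1 := by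
  have hker : finrank ℝ (ker (1 - A)) ≠ 0 := Submodule.finrank_eq_zero.not.mpr
    (bot_lt_ker_of_det_eq_zero (det_one_sub_eq_zero hA hdet (by rw [h3]; decide))).ne'
  have hrange : finrank ℝ (range (1 - A)) ≠ 0 := by
    rwa [Ne, Submodule.finrank_eq_zero, range_eq_bot, sub_eq_zero, eq_comm]
  have := finrank_range_add_finrank_ker (1 - A)
  have := finrank_range_one_sub_ne_one hA hdet
  omega

theorem commute_of_finrank_eq_two {V : Type*} [NormedAddCommGroup V] [InnerProductSpace ℝ V]
    (h2 : finrank ℝ V = 2) {A B : V →ₗ[ℝ] V} (hA : ∀ x, ‖A x‖ = ‖x‖) (hB : ∀ x, ‖B x‖ = ‖x‖)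
    (hdA : A.det = 1) (hdB : B.det = 1) : Commute A B := by
  have : Fact (finrank ℝ V = 2) := ⟨h2⟩
  have : FiniteDimensional ℝ V := Module.finite_of_finrank_eq_succ h2
  let o : Orientation ℝ V (Fin 2) := (finBasisOfFinrankEq ℝ V h2).orientation
  have rotation_of_det_eq_one {C : V →ₗ[ℝ] V} (hC : ∀ x, ‖C x‖ = ‖x‖) (hdC : C.det = 1) :
      ∃ θ, ∀ x, C x = o.rotation θ x := by
    obtain ⟨θ, hθ⟩ := o.exists_linearIsometryEquiv_eq_of_det_pos
      (f := (⟨C, hC⟩ : V →ₗᵢ[ℝ] V).toLinearIsometryEquiv rfl) (hdC.symm ▸ one_pos : 0 < C.det)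
    exact ⟨θ, fun x ↦ congr($hθ x)⟩
  obtain ⟨θ, hθ⟩ := rotation_of_det_eq_one hA hdA
  obtain ⟨φ, hφ⟩ := rotation_of_det_eq_one hB hdB
  ext x
  simp [hθ, hφ, o.rotation_rotation, add_comm]

theorem commute_of_commute_restrict (hA : ∀ x, ‖A x‖ = ‖x‖) (hB : ∀ x, ‖B x‖ = ‖x‖)
    (hAW : range (1 - A) ≤ W) (hBW : range (1 - B) ≤ W)
    (h : Commute (A.restrict (le_comap_of_range_one_sub_le hAW))
      (B.restrict (le_comap_of_range_one_sub_le hBW))) : Commute A B := by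
  have hfix {C : E →ₗ[ℝ] E} (hC : ∀ x, ‖C x‖ = ‖x‖) (hCW : range (1 - C) ≤ W) (k : E)
      (hk : k ∈ Wᗮ) : C k = k := by
    have : (1 - C) k = 0 :=
      mem_ker.mp (orthogonal_range_one_sub hC ▸ Submodule.orthogonal_le hCW hk)
    rwa [LinearMap.sub_apply, Module.End.one_apply, sub_eq_zero, eq_comm] at this
  ext x
  obtain ⟨w, hw, k, hk, rfl⟩ := W.exists_add_mem_mem_orthogonal x
  have hw' := congrArg Subtype.val (LinearMap.congr_fun h.eq ⟨w, hw⟩)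
  simp only [Module.End.mul_apply, coe_restrict_apply] at hw'
  simp [Module.End.mul_apply, hfix hA hAW k hk, hfix hB hBW k hk, hw']

theorem commute_of_ker_one_sub_eq (h3 : finrank ℝ E = 3) (hA : ∀ x, ‖A x‖ = ‖x‖)
    (hB : ∀ x, ‖B x‖ = ‖x‖) (hdA : A.det = 1) (hdB : B.det = 1) (hA1 : A ≠ 1)
    (hK : ker (1 - A) = ker (1 - B)) : Commute A B := by
  have hW : range (1 - B) = range (1 - A) := by
    rw [← orthogonal_ker_one_sub hA, hK, orthogonal_ker_one_sub hB]
  have h2 : finrank ℝ (range (1 - A)) = 2 := by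
    have := finrank_range_add_finrank_ker (1 - A)
    have := finrank_ker_one_sub_eq_one h3 hA hdA hA1
    omega
  refine commute_of_commute_restrict hA hB le_rfl hW.le (commute_of_finrank_eq_two h2
    (fun x ↦ hA x) (fun x ↦ hB x) ?_ ?_)
  · rw [det_restrict_of_range_one_sub_le le_rfl, hdA]
  · rw [det_restrict_of_range_one_sub_le hW.le, hdB]

theorem comap_one_sub_range_one_sub_mul (h3 : finrank ℝ E = 3) (hA : ∀ x, ‖A x‖ = ‖x‖)
    (hB : ∀ x, ‖B x‖ = ‖x‖) (hdA : A.det = 1) (hdB : B.det = 1) (hA1 : A ≠ 1) (hB1 : B ≠ 1)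
    (hK : Disjoint (ker (1 - A)) (ker (1 - B))) :
    (range (1 - A * B)).comap (1 - A) = ker (1 - A) ⊔ ker (1 - B) := by
  have hAB : ∀ x, ‖(A * B) x‖ = ‖x‖ := fun x ↦ (hA _).trans (hB x)
  have hle : ker (1 - A) ⊔ ker (1 - B) ≤ (range (1 - A * B)).comap (1 - A) := by
    refine sup_le (fun k hk ↦ ?_) (fun k hk ↦ ⟨k, ?_⟩)
    · simp [Submodule.mem_comap, mem_ker.mp hk]
    · simp only [mem_ker, LinearMap.sub_apply, Module.End.one_apply, sub_eq_zero] at hk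
      simp [Module.End.mul_apply, ← hk]
  have hsup : finrank ℝ ↥(ker (1 - A) ⊔ ker (1 - B)) = 2 := by
    have := Submodule.finrank_sup_add_finrank_inf_eq (ker (1 - A)) (ker (1 - B))
    rw [hK.eq_bot, finrank_bot, finrank_ker_one_sub_eq_one h3 hA hdA hA1,
      finrank_ker_one_sub_eq_one h3 hB hdB hB1] at this
    omega
  have hlt : (range (1 - A * B)).comap (1 - A) < ⊤ := by
    refine lt_top_iff_ne_top.mpr fun htop ↦ ?_
    have hr : range (1 - A) ≤ range (1 - A * B) := by
      rintro _ ⟨x, rfl⟩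
      exact Submodule.mem_comap.mp (htop ▸ Submodule.mem_top : x ∈ _)
    have hker := Submodule.orthogonal_le hr
    rw [orthogonal_range_one_sub hA, orthogonal_range_one_sub hAB] at hker
    have hbot : ker (1 - A * B) = ⊥ := eq_bot_iff.mpr <| hK.eq_bot ▸ le_inf hker
      ((le_inf le_rfl hker).trans (ker_one_sub_mul_inf_le (⟨A, hA⟩ : E →ₗᵢ[ℝ] E).injective))
    exact (bot_lt_ker_of_det_eq_zero (det_one_sub_eq_zero hAB (by simp [hdA, hdB])
      (by rw [h3]; decide))).ne' hbot
  have := Submodule.finrank_lt_finrank_of_lt hlt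
  rw [finrank_top, h3] at this
  exact (Submodule.eq_of_le_of_finrank_le hle (by omega)).symm

end InnerProductSpace

end LinearMap

section AffineMaps

variable {E : Type*} [NormedAddCommGroup E] [InnerProductSpace ℝ E]
  {f g : Equiv.Perm E} {A B : E →ₗ[ℝ] E} {a b : E}

theorem norm_map_of_dist_eq {F : E → E} (hF : ∀ x, F x = A x + a)
    (hiso : ∀ x y, dist (F x) (F y) = dist x y) (x : E) : ‖A x‖ = ‖x‖ := by
  simpa [hF, dist_eq_norm] using hiso x 0

theorem mul_apply_eq_add (hf : ∀ x, f x = A x + a) (hg : ∀ x, g x = B x + b) (x : E) :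
    (f * g) x = (A * B) x + (A b + a) := by
  simp [hf, hg, add_assoc]

theorem apply_sub_self_eq {F : E → E} (hF : ∀ x, F x = A x + a) {y : E} (hy : F y = y) (x : E) :
    F x - x = (1 - A) (y - x) := by
  have ha : a = y - A y := eq_sub_of_add_eq' ((hF y).symm.trans hy)
  simp only [hF, ha, LinearMap.sub_apply, Module.End.one_apply, map_sub]
  abel

theorem apply_eq_self_iff_sub_mem_ker {F : E → E} (hF : ∀ x, F x = A x + a) {y : E}
    (hy : F y = y) {x : E} : F x = x ↔ y - x ∈ ker (1 - A) := by
  rw [mem_ker, ← apply_sub_self_eq hF hy, sub_eq_zero]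

theorem commute_of_commutatorElement_apply_eq_self (hf : ∀ x, f x = A x + a)
    (hg : ∀ x, g x = B x + b) (hAB : Commute A B) {w : E} (hw : ⁅f, g⁆ w = w) : Commute f g := by
  have hconst (u v : E) : f (g u) - g (f u) = f (g v) - g (f v) := by
    simp only [hf, hg, map_add, ← Module.End.mul_apply, hAB.eq]
    abel
  obtain ⟨u, rfl⟩ := (g * f).surjective w
  have hu : f (g u) = g (f u) := by simpa [commutatorElement_def] using hw
  exact Equiv.ext fun v ↦ sub_eq_zero.mp ((hconst v u).trans (sub_eq_zero.mpr hu))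

variable [FiniteDimensional ℝ E]

theorem apply_eq_self_of_commute (hf : ∀ x, f x = A x + a) (hg : ∀ x, g x = B x + b)
    (hB : ∀ x, ‖B x‖ = ‖x‖) (hfg : Commute f g) (hK : ker (1 - A) ≤ ker (1 - B)) {x₀ y₀ : E}
    (hx₀ : f x₀ = x₀) (hy₀ : g y₀ = y₀) : g x₀ = x₀ := by
  have hrange : g x₀ - x₀ ∈ range (1 - B) := ⟨y₀ - x₀, (apply_sub_self_eq hg hy₀ x₀).symm⟩
  have hker : x₀ - g x₀ ∈ ker (1 - A) := by
    rw [← apply_eq_self_iff_sub_mem_ker hf hx₀, ← Equiv.Perm.mul_apply, hfg.eq,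
      Equiv.Perm.mul_apply, hx₀]
  rw [← orthogonal_ker_one_sub hB] at hrange
  have := Submodule.mem_inf.mpr ⟨hK (neg_sub x₀ (g x₀) ▸ neg_mem hker), hrange⟩
  rwa [Submodule.inf_orthogonal_eq_bot, Submodule.mem_bot, sub_eq_zero] at this

theorem exists_common_fixed_point_of_disjoint (h3 : finrank ℝ E = 3)
    (hf : ∀ x, f x = A x + a) (hg : ∀ x, g x = B x + b) (hA : ∀ x, ‖A x‖ = ‖x‖)
    (hB : ∀ x, ‖B x‖ = ‖x‖) (hdA : A.det = 1) (hdB : B.det = 1) (hA1 : A ≠ 1) (hB1 : B ≠ 1)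
    (hK : Disjoint (ker (1 - A)) (ker (1 - B))) {x₀ y₀ z : E} (hx₀ : f x₀ = x₀)
    (hy₀ : g y₀ = y₀) (hz : (f * g) z = z) : ∃ x, f x = x ∧ g x = x := by
  have hd : x₀ - y₀ ∈ (range (1 - A * B)).comap (1 - A) := by
    refine ⟨z - y₀, ?_⟩
    rw [← apply_sub_self_eq (mul_apply_eq_add hf hg) hz, ← apply_sub_self_eq hf hx₀,
      Equiv.Perm.mul_apply, hy₀]
  rw [comap_one_sub_range_one_sub_mul h3 hA hB hdA hdB hA1 hB1 hK] at hd
  obtain ⟨k, hk, l, hl, hkl⟩ := Submodule.mem_sup.mp hd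
  refine ⟨x₀ - k, (apply_eq_self_iff_sub_mem_ker hf hx₀).mpr (by simpa using hk),
    (apply_eq_self_iff_sub_mem_ker hg hy₀).mpr ?_⟩
  rw [show y₀ - (x₀ - k) = -l by rw [← eq_sub_iff_add_eq.mp hkl]; abel]
  exact neg_mem hl

theorem exists_common_fixed_point (h3 : finrank ℝ E = 3)
    (hf : ∀ x, f x = A x + a) (hg : ∀ x, g x = B x + b) (hA : ∀ x, ‖A x‖ = ‖x‖)
    (hB : ∀ x, ‖B x‖ = ‖x‖) (hdA : A.det = 1) (hdB : B.det = 1) (hf₀ : ∃ x, f x = x)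
    (hg₀ : ∃ x, g x = x) (hfg : ∃ x, (f * g) x = x) (hc : ∃ x, ⁅f, g⁆ x = x) :
    ∃ x, f x = x ∧ g x = x := by
  obtain ⟨x₀, hx₀⟩ := hf₀
  obtain ⟨y₀, hy₀⟩ := hg₀
  by_cases hA1 : A = 1
  · exact ⟨y₀, (apply_eq_self_iff_sub_mem_ker hf hx₀).mpr (by simp [hA1]), hy₀⟩
  by_cases hB1 : B = 1
  · exact ⟨x₀, hx₀, (apply_eq_self_iff_sub_mem_ker hg hy₀).mpr (by simp [hB1])⟩
  by_cases hK : Disjoint (ker (1 - A)) (ker (1 - B))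
  · obtain ⟨z, hz⟩ := hfg
    exact exists_common_fixed_point_of_disjoint h3 hf hg hA hB hdA hdB hA1 hB1 hK hx₀ hy₀ hz
  have hK' := Submodule.eq_of_not_disjoint_of_finrank_eq_one
    (finrank_ker_one_sub_eq_one h3 hA hdA hA1) (finrank_ker_one_sub_eq_one h3 hB hdB hB1) hK
  obtain ⟨w, hw⟩ := hc
  have hfg' := commute_of_commutatorElement_apply_eq_self hf hg
    (commute_of_ker_one_sub_eq h3 hA hB hdA hdB hA1 hK') hw
  exact ⟨x₀, hx₀, apply_eq_self_of_commute hf hg hB hfg' hK'.le hx₀ hy₀⟩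

end AffineMaps

/-- If `f` and `g` are orientation-preserving isometries of Euclidean `ℝ³`
(affine isometric bijections whose linear parts have determinant `1`) whose
fixed point sets are disjoint, then some element `h` of the subgroup generated
by `f` and `g` has no fixed point. -/
theorem exists_fixed_point_free_element_R3
    (f g : Equiv.Perm (EuclideanSpace ℝ (Fin 3)))
    (hf_iso : ∀ x y : EuclideanSpace ℝ (Fin 3), dist (f x) (f y) = dist x y)
    (hg_iso : ∀ x y : EuclideanSpace ℝ (Fin 3), dist (g x) (g y) = dist x y)
    (hf_aff : ∃ L : EuclideanSpace ℝ (Fin 3) →ₗ[ℝ] EuclideanSpace ℝ (Fin 3),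
      LinearMap.det L = 1 ∧ ∀ x, f x = L x + f 0)
    (hg_aff : ∃ L : EuclideanSpace ℝ (Fin 3) →ₗ[ℝ] EuclideanSpace ℝ (Fin 3),
      LinearMap.det L = 1 ∧ ∀ x, g x = L x + g 0)
    (hdisj : {x : EuclideanSpace ℝ (Fin 3) | f x = x} ∩ {x | g x = x} = ∅) :
    ∃ h ∈ Subgroup.closure ({f, g} : Set (Equiv.Perm (EuclideanSpace ℝ (Fin 3)))),
      ∀ x : EuclideanSpace ℝ (Fin 3), h x ≠ x := by
  set G := Subgroup.closure ({f, g} : Set (Equiv.Perm (EuclideanSpace ℝ (Fin 3))))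
  have hfG : f ∈ G := Subgroup.subset_closure (by simp)
  have hgG : g ∈ G := Subgroup.subset_closure (by simp)
  have hcG : ⁅f, g⁆ ∈ G := by
    rw [commutatorElement_def]
    exact mul_mem (mul_mem (mul_mem hfG hgG) (inv_mem hfG)) (inv_mem hgG)
  by_contra! hfix
  obtain ⟨A, hdA, hf⟩ := hf_aff
  obtain ⟨B, hdB, hg⟩ := hg_aff
  obtain ⟨x, hx⟩ := exists_common_fixed_point finrank_euclideanSpace_fin hf hg
    (norm_map_of_dist_eq hf hf_iso) (norm_map_of_dist_eq hg hg_iso) hdA hdB (hfix f hfG)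
    (hfix g hgG) (hfix _ (mul_mem hfG hgG)) (hfix _ hcG)
  exact hdisj.subset hx
end

section
/- Let n ≥ 1 and let p ∈ [1, ∞] with p ≠ 2. Then the group of all isometries of ℝⁿ equipped with the ℓᵖ norm (i.e., surjective self-isometries of the space ℓᵖ(Fin n, ℝ)) is fixating. -/
/-!
By Mazur–Ulam every isometry `g` of a real normed space is affine with linear part
`x ↦ g x - g 0`; if that linear part is trivial and `g` fixes a point, `g` is the identity. So a
group of isometries each of which fixes a point embeds into the group of linear isometries, which
for `ℓᵖ(Fin n)` with `p ≠ 2` is finite. For `p < ∞` this is because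
`2 ‖x‖ᵖ + 2 ‖y‖ᵖ = ‖x + y‖ᵖ + ‖x - y‖ᵖ` holds exactly when `x` and `y` have disjoint supports:
coordinatewise it compares values of `t ↦ t ^ (p / 2)`, which is strictly convex or strictly
concave. Hence linear isometries preserve disjointness and map each basis vector to a signed basis
vector. For `p = ∞` they permute the finitely many extreme points of the unit ball, which span the
space by Krein–Milman. Finally, a finite group of affine maps fixes the centroid of each orbit.
-/

open Set Function Metric

theorem StrictConvexOn.add_lt_map_add_of_map_zero {φ : ℝ → ℝ} (hφ : StrictConvexOn ℝ (Ici 0) φ)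
    (hφ0 : φ 0 = 0) {a b : ℝ} (ha : 0 < a) (hb : 0 < b) : φ a + φ b < φ (a + b) := by
  have hab : 0 < a + b := add_pos ha hb
  have key : ∀ c, 0 < c → c < a + b → φ c < c / (a + b) * φ (a + b) := by
    intro c hc hcab
    have h := hφ.2 (mem_Ici.2 hab.le) (mem_Ici.2 le_rfl) hab.ne' (div_pos hc hab)
      (div_pos (sub_pos.2 hcab) hab) (by field_simp; ring)
    simp only [smul_eq_mul, mul_zero, add_zero, hφ0] at h
    rwa [div_mul_cancel₀ _ hab.ne'] at h
  calc φ a + φ b < a / (a + b) * φ (a + b) + b / (a + b) * φ (a + b) :=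
        add_lt_add (key a ha (by linarith)) (key b hb (by linarith))
    _ = φ (a + b) := by field_simp

theorem ConvexOn.two_mul_map_midpoint_le {φ : ℝ → ℝ} (hφ : ConvexOn ℝ (Ici 0) φ) {u v : ℝ}
    (hu : 0 ≤ u) (hv : 0 ≤ v) : 2 * φ ((u + v) / 2) ≤ φ u + φ v := by
  have h := hφ.2 (mem_Ici.2 hu) (mem_Ici.2 hv) (by norm_num : (0:ℝ) ≤ 1 / 2)
    (by norm_num : (0:ℝ) ≤ 1 / 2) (by norm_num)
  simp only [smul_eq_mul] at h
  rw [show 1 / 2 * u + 1 / 2 * v = (u + v) / 2 by ring] at h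
  linarith

theorem StrictConvexOn.two_mul_add_lt_of_mul_ne_zero {φ : ℝ → ℝ}
    (hφ : StrictConvexOn ℝ (Ici 0) φ) (hφ0 : φ 0 = 0) {a b : ℝ} (hab : a * b ≠ 0) :
    2 * φ (a ^ 2) + 2 * φ (b ^ 2) < φ ((a + b) ^ 2) + φ ((a - b) ^ 2) := by
  obtain ⟨ha, hb⟩ := mul_ne_zero_iff.1 hab
  calc 2 * φ (a ^ 2) + 2 * φ (b ^ 2) < 2 * φ (a ^ 2 + b ^ 2) := by
        linarith [hφ.add_lt_map_add_of_map_zero hφ0 (pow_two_pos_of_ne_zero ha)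
          (pow_two_pos_of_ne_zero hb)]
    _ = 2 * φ (((a + b) ^ 2 + (a - b) ^ 2) / 2) := by ring_nf
    _ ≤ φ ((a + b) ^ 2) + φ ((a - b) ^ 2) :=
        hφ.convexOn.two_mul_map_midpoint_le (sq_nonneg _) (sq_nonneg _)

theorem two_mul_add_eq_of_mul_eq_zero {φ : ℝ → ℝ} (hφ0 : φ 0 = 0) {a b : ℝ} (hab : a * b = 0) :
    2 * φ (a ^ 2) + 2 * φ (b ^ 2) = φ ((a + b) ^ 2) + φ ((a - b) ^ 2) := by
  rcases mul_eq_zero.1 hab with rfl | rfl <;>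
    simp only [zero_add, zero_sub, add_zero, sub_zero, neg_sq, zero_pow two_ne_zero, hφ0] <;> ring

theorem StrictConvexOn.two_mul_add_le {φ : ℝ → ℝ} (hφ : StrictConvexOn ℝ (Ici 0) φ)
    (hφ0 : φ 0 = 0) (a b : ℝ) :
    2 * φ (a ^ 2) + 2 * φ (b ^ 2) ≤ φ ((a + b) ^ 2) + φ ((a - b) ^ 2) := by
  rcases eq_or_ne (a * b) 0 with hab | hab
  · exact (two_mul_add_eq_of_mul_eq_zero hφ0 hab).le
  · exact (hφ.two_mul_add_lt_of_mul_ne_zero hφ0 hab).le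

theorem StrictConvexOn.sum_eq_iff_forall_mul_eq_zero {ι : Type*} [Fintype ι] {φ : ℝ → ℝ}
    (hφ : StrictConvexOn ℝ (Ici 0) φ) (hφ0 : φ 0 = 0) (x y : ι → ℝ) :
    ∑ i, (2 * φ (x i ^ 2) + 2 * φ (y i ^ 2)) = ∑ i, (φ ((x i + y i) ^ 2) + φ ((x i - y i) ^ 2)) ↔
      ∀ i, x i * y i = 0 := by
  refine ⟨fun h => ?_, fun h => Finset.sum_congr rfl fun i _ => ?_⟩
  · by_contra! ⟨i, hi⟩
    exact h.not_lt <| Finset.sum_lt_sum (fun j _ => hφ.two_mul_add_le hφ0 (x j) (y j))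
      ⟨i, Finset.mem_univ i, hφ.two_mul_add_lt_of_mul_ne_zero hφ0 hi⟩
  · exact two_mul_add_eq_of_mul_eq_zero hφ0 (h i)

theorem StrictConcaveOn.sum_eq_iff_forall_mul_eq_zero {ι : Type*} [Fintype ι] {φ : ℝ → ℝ}
    (hφ : StrictConcaveOn ℝ (Ici 0) φ) (hφ0 : φ 0 = 0) (x y : ι → ℝ) :
    ∑ i, (2 * φ (x i ^ 2) + 2 * φ (y i ^ 2)) = ∑ i, (φ ((x i + y i) ^ 2) + φ ((x i - y i) ^ 2)) ↔
      ∀ i, x i * y i = 0 := by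
  rw [← hφ.neg.sum_eq_iff_forall_mul_eq_zero (by simp [hφ0]) x y]
  simp only [Pi.neg_apply, Finset.sum_add_distrib, ← Finset.mul_sum, Finset.sum_neg_distrib]
  constructor <;> intro h <;> linarith

theorem Real.abs_rpow_eq_sq_rpow (r t : ℝ) : |t| ^ r = (t ^ 2) ^ (r / 2) := by
  rw [← sq_abs, ← Real.rpow_two, ← Real.rpow_mul (abs_nonneg t), mul_div_cancel₀ r two_ne_zero]

theorem exists_support_eq_singleton_of_pairwise_disjoint {ι M : Type*} [Finite ι] [Zero M]
    {v : ι → ι → M} (hv : ∀ i, v i ≠ 0)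
    (hdisj : Pairwise fun i j => Disjoint (support (v i)) (support (v j))) (i : ι) :
    ∃ j, support (v i) = {j} := by
  choose f hf using fun i => support_nonempty_iff.2 (hv i)
  have hmem {i i' : ι} {k : ι} (hk : k ∈ support (v i)) (hk' : k ∈ support (v i')) : i = i' :=
    by_contra fun h => Set.disjoint_left.1 (hdisj h) hk hk'
  have hsurj : Surjective f :=
    Finite.surjective_of_injective fun i i' h => hmem (hf i) (h ▸ hf i')
  refine ⟨f i, Set.eq_singleton_iff_unique_mem.2 ⟨hf i, fun k hk => ?_⟩⟩
  obtain ⟨i', rfl⟩ := hsurj k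
  rw [hmem hk (hf i')]

theorem LinearIsometryEquiv.finite_of_mapsTo {R E : Type*} [Ring R] [SeminormedAddCommGroup E]
    [Module R E] {S : Set E} (hS : S.Finite) (hspan : Submodule.span R S = ⊤)
    (hmaps : ∀ T : E ≃ₗᵢ[R] E, MapsTo T S S) : Finite (E ≃ₗᵢ[R] E) := by
  have := hS.to_subtype
  refine Finite.of_injective (fun T => (hmaps T).restrict) fun T T' h => ?_
  have hS : EqOn T T' S := fun x hx => congr_arg Subtype.val (congr_fun h ⟨x, hx⟩)
  exact LinearIsometryEquiv.toLinearEquiv_injective <| LinearEquiv.toLinearMap_injective <|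
    LinearMap.ext_on hspan hS

theorem LinearIsometryEquiv.image_extremePoints_closedBall {E F : Type*}
    [SeminormedAddCommGroup E] [NormedSpace ℝ E] [SeminormedAddCommGroup F] [NormedSpace ℝ F]
    (e : E ≃ₗᵢ[ℝ] F) (r : ℝ) :
    e '' extremePoints ℝ (closedBall 0 r) = extremePoints ℝ (closedBall 0 r) := by
  rw [image_extremePoints, e.image_closedBall, map_zero]

theorem span_extremePoints_closedBall {E : Type*} [NormedAddCommGroup E] [NormedSpace ℝ E]
    [FiniteDimensional ℝ E] : Submodule.span ℝ (extremePoints ℝ (closedBall (0 : E) 1)) = ⊤ := by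
  set W := Submodule.span ℝ (extremePoints ℝ (closedBall (0 : E) 1))
  have hball : closedBall (0 : E) 1 ⊆ W := by
    rw [← closure_convexHull_extremePoints (isCompact_closedBall 0 1) (convex_closedBall 0 1)]
    exact closure_minimal (convexHull_min Submodule.subset_span W.convex)
      W.closed_of_finiteDimensional
  refine W.eq_top_of_nonempty_interior' ⟨0, interior_mono hball ?_⟩
  rw [interior_closedBall 0 one_ne_zero]
  exact mem_ball_self one_pos

theorem LinearIsometryEquiv.finite_of_finite_extremePoints {E : Type*} [NormedAddCommGroup E]
    [NormedSpace ℝ E] [FiniteDimensional ℝ E]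
    (h : (extremePoints ℝ (closedBall (0 : E) 1)).Finite) : Finite (E ≃ₗᵢ[ℝ] E) :=
  finite_of_mapsTo h span_extremePoints_closedBall fun T =>
    (mapsTo_iff_image_subset).2 (T.image_extremePoints_closedBall 1).le

theorem Pi.finite_extremePoints_closedBall {ι : Type*} [Fintype ι] :
    (extremePoints ℝ (closedBall (0 : ι → ℝ) 1)).Finite := by
  rw [closedBall_pi _ zero_le_one, extremePoints_pi]
  refine Set.Finite.pi fun _ => ?_
  rw [Pi.zero_apply, Real.closedBall_eq_Icc, extremePoints_Icc (by norm_num)]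
  exact toFinite _

section PiLp

variable {ι : Type*} [Fintype ι] {p : ENNReal} [Fact (1 ≤ p)]

theorem PiLp.finite_linearIsometryEquiv_top :
    Finite (PiLp ⊤ (fun _ : ι => ℝ) ≃ₗᵢ[ℝ] PiLp ⊤ (fun _ : ι => ℝ)) := by
  refine LinearIsometryEquiv.finite_of_finite_extremePoints ?_
  rw [← (PiLp.equivₗᵢ (𝕜 := ℝ) (β := fun _ : ι => ℝ)).symm.image_extremePoints_closedBall 1]
  exact Pi.finite_extremePoints_closedBall.image _

theorem PiLp.norm_rpow_eq_sum {β : ι → Type*} [∀ i, SeminormedAddCommGroup (β i)] (hp : p ≠ ⊤)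
    (x : PiLp p β) : ‖x‖ ^ p.toReal = ∑ i, ‖x i‖ ^ p.toReal := by
  have hp0 : 0 < p.toReal := ENNReal.toReal_pos (zero_lt_one.trans_le Fact.out).ne' hp
  rw [PiLp.norm_eq_sum hp0, ← Real.rpow_mul (by positivity), one_div_mul_cancel hp0.ne',
    Real.rpow_one]

theorem PiLp.forall_mul_eq_zero_iff_norm_rpow (hp : p ≠ ⊤) (hp2 : p ≠ 2)
    (x y : PiLp p (fun _ : ι => ℝ)) :
    (∀ i, x i * y i = 0) ↔
      2 * ‖x‖ ^ p.toReal + 2 * ‖y‖ ^ p.toReal = ‖x + y‖ ^ p.toReal + ‖x - y‖ ^ p.toReal := by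
  have hr1 : 1 ≤ p.toReal := by simpa using ENNReal.toReal_mono hp (Fact.out : 1 ≤ p)
  have hr2 : p.toReal ≠ 2 := fun h => hp2 (by rw [← ENNReal.ofReal_toReal hp, h]; simp)
  have hφ0 : (0 : ℝ) ^ (p.toReal / 2) = 0 := Real.zero_rpow (by positivity)
  simp only [PiLp.norm_rpow_eq_sum hp, Real.norm_eq_abs, Real.abs_rpow_eq_sq_rpow p.toReal,
    Finset.mul_sum, ← Finset.sum_add_distrib, PiLp.add_apply, PiLp.sub_apply]
  rcases hr2.lt_or_gt with hr | hr
  · exact ((Real.strictConcaveOn_rpow (by positivity) (by linarith)).sum_eq_iff_forall_mul_eq_zero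
      hφ0 _ _).symm
  · exact ((strictConvexOn_rpow (by linarith)).sum_eq_iff_forall_mul_eq_zero hφ0 _ _).symm

theorem LinearIsometry.map_mul_eq_zero_of_mul_eq_zero {κ : Type*} [Fintype κ] (hp : p ≠ ⊤)
    (hp2 : p ≠ 2) (T : PiLp p (fun _ : ι => ℝ) →ₗᵢ[ℝ] PiLp p (fun _ : κ => ℝ))
    {x y : PiLp p (fun _ : ι => ℝ)} (h : ∀ i, x i * y i = 0) (k : κ) : T x k * T y k = 0 := by
  rw [PiLp.forall_mul_eq_zero_iff_norm_rpow hp hp2] at h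
  revert k
  rwa [PiLp.forall_mul_eq_zero_iff_norm_rpow hp hp2, ← map_add, ← map_sub, T.norm_map,
    T.norm_map, T.norm_map, T.norm_map]

theorem LinearIsometry.exists_map_single_eq [DecidableEq ι] (hp : p ≠ ⊤) (hp2 : p ≠ 2)
    (T : PiLp p (fun _ : ι => ℝ) →ₗᵢ[ℝ] PiLp p (fun _ : ι => ℝ)) (i : ι) :
    ∃ j, T (PiLp.single p i 1) = PiLp.single p j 1 ∨
      T (PiLp.single p i 1) = -PiLp.single p j 1 := by
  have hne (i : ι) : ⇑(T (PiLp.single p i 1)) ≠ 0 := by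
    refine fun h => one_ne_zero ((PiLp.single_eq_zero_iff p i).1 (T.injective ?_))
    rw [map_zero]
    exact WithLp.ofLp_injective p (h.trans (WithLp.ofLp_zero p).symm)
  have hdisj : Pairwise fun i j =>
      Disjoint (support ⇑(T (PiLp.single p i 1))) (support ⇑(T (PiLp.single p j 1))) := by
    intro i j hij
    refine Set.disjoint_left.2 fun k hk hk' => mul_ne_zero hk hk' ?_
    refine T.map_mul_eq_zero_of_mul_eq_zero hp hp2 (fun k => ?_) k
    by_cases hki : k = i <;> simp [PiLp.single_apply, hki, hij]
  obtain ⟨j, hj⟩ := exists_support_eq_singleton_of_pairwise_disjoint hne hdisj i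
  have hTe : T (PiLp.single p i 1) = PiLp.single p j (T (PiLp.single p i 1) j) := by
    ext k
    by_cases hk : k = j
    · simp [hk]
    · rw [PiLp.single_eq_of_ne p hk, ← notMem_support, hj]
      exact hk
  have hc : |T (PiLp.single p i 1) j| = 1 := by
    simpa [PiLp.norm_single] using (congr_arg norm hTe).symm.trans (T.norm_map _)
  refine ⟨j, (abs_eq zero_le_one).1 hc |>.imp (fun h => ?_) fun h => ?_⟩
  · rw [hTe, h]
  · rw [hTe, h, PiLp.single_neg]

theorem PiLp.finite_linearIsometryEquiv_of_ne_top (hp : p ≠ ⊤) (hp2 : p ≠ 2) :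
    Finite (PiLp p (fun _ : ι => ℝ) ≃ₗᵢ[ℝ] PiLp p (fun _ : ι => ℝ)) := by
  classical
  refine LinearIsometryEquiv.finite_of_mapsTo
    (S := ⋃ j, {PiLp.single p j 1, -PiLp.single p j 1}) (toFinite _) ?_ fun T x hx => ?_
  · rw [eq_top_iff, ← (PiLp.basisFun p ℝ ι).span_eq]
    exact Submodule.span_mono <| range_subset_iff.2 fun j =>
      mem_iUnion.2 ⟨j, by simp [PiLp.basisFun_apply]⟩
  · obtain ⟨i, hx⟩ := mem_iUnion.1 hx
    obtain ⟨j, hj⟩ := T.toLinearIsometry.exists_map_single_eq hp hp2 i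
    refine mem_iUnion.2 ⟨j, ?_⟩
    rcases hx with rfl | rfl <;> rcases hj with h | h <;> simp_all

theorem PiLp.finite_linearIsometryEquiv (hp2 : p ≠ 2) :
    Finite (PiLp p (fun _ : ι => ℝ) ≃ₗᵢ[ℝ] PiLp p (fun _ : ι => ℝ)) := by
  rcases eq_or_ne p ⊤ with rfl | hp
  · exact PiLp.finite_linearIsometryEquiv_top
  · exact PiLp.finite_linearIsometryEquiv_of_ne_top hp hp2

end PiLp

theorem Subgroup.exists_fixed_of_finite_of_affine {k V P : Type*} [Field k] [CharZero k]
    [AddCommGroup V] [Module k V] [AddTorsor V P] [Nonempty P] (G : Subgroup (Equiv.Perm P))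
    [Finite G] (haff : ∀ g ∈ G, ∃ f : P →ᵃ[k] P, ⇑f = ⇑g) : ∃ x, ∀ g ∈ G, g x = x := by
  classical
  cases nonempty_fintype G
  obtain ⟨x₀⟩ := ‹Nonempty P›
  set orbit : G → P := fun h => h.1 x₀
  refine ⟨Finset.univ.centroid k orbit, fun g hg => ?_⟩
  obtain ⟨f, hf⟩ := haff g hg
  have hw : ∑ h, (Finset.univ : Finset G).centroidWeights k h = 1 :=
    Finset.univ.sum_centroidWeights_eq_one_of_card_ne_zero k Finset.univ_nonempty.card_pos.ne'
  calc g (Finset.univ.centroid k orbit) = f (Finset.univ.centroid k orbit) := by rw [hf]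
    _ = Finset.univ.centroid k (f ∘ orbit) := Finset.univ.map_affineCombination orbit _ hw f
    _ = Finset.univ.centroid k (orbit ∘ Equiv.mulLeft ⟨g, hg⟩) := by
        congr 1; ext h; simp [orbit, hf]
    _ = Finset.univ.centroid k orbit := by
        rw [← Equiv.coe_toEmbedding, ← Finset.centroid_map, Finset.map_univ_equiv]

theorem Subgroup.finite_of_isometry_of_forall_exists_fixed {E : Type*} [NormedAddCommGroup E]
    [NormedSpace ℝ E] [Finite (E ≃ₗᵢ[ℝ] E)] (G : Subgroup (Equiv.Perm E))
    (hiso : ∀ g ∈ G, Isometry g) (hfix : ∀ g ∈ G, ∃ x, g x = x) : Finite G := by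
  refine Finite.of_injective
    (fun g : G => (⟨g.1, hiso g.1 g.2⟩ : E ≃ᵢ E).toRealLinearIsometryEquiv) fun g h hgh => ?_
  have hlin (x : E) : g.1 x - g.1 0 = h.1 x - h.1 0 := by
    simpa using congr($hgh x)
  obtain ⟨y, hy⟩ := hfix _ (h⁻¹ * g).2
  have hgy : g.1 y = h.1 y := by
    rw [Subgroup.coe_mul, Subgroup.coe_inv, Equiv.Perm.mul_apply, Equiv.Perm.inv_eq_iff_eq] at hy
    exact hy
  have h0 : g.1 0 = h.1 0 := by linear_combination (norm := abel) hgy - hlin y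
  ext x
  linear_combination (norm := abel) hlin x + h0

theorem isom_lp_norm_fixating_general
    (n : ℕ) (p : ENNReal) [Fact (1 ≤ p)] (hp : p ≠ 2) :
    ∀ G : Subgroup (Equiv.Perm (PiLp p (fun _ : Fin n => ℝ))),
      (∀ g ∈ G, ∀ x y : PiLp p (fun _ : Fin n => ℝ), dist (g x) (g y) = dist x y) →
      (∀ g ∈ G, ∃ x : PiLp p (fun _ : Fin n => ℝ), g x = x) →
      ∃ x : PiLp p (fun _ : Fin n => ℝ), ∀ g ∈ G, g x = x := by
  intro G hdist hfix
  have hiso (g) (hg : g ∈ G) : Isometry g := Isometry.of_dist_eq (hdist g hg)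
  have := PiLp.finite_linearIsometryEquiv (ι := Fin n) hp
  have := G.finite_of_isometry_of_forall_exists_fixed hiso hfix
  exact G.exists_fixed_of_finite_of_affine (k := ℝ) fun g hg =>
    ⟨(⟨g, hiso g hg⟩ : _ ≃ᵢ _).toRealAffineIsometryEquiv.toAffineMap, rfl⟩

/-- For `n ≥ 1` and `p ∈ [1,∞]` with `p ≠ 2`, the group of isometries of `ℝⁿ`
with the `ℓᵖ` norm is fixating: every subgroup of the permutation group of
`ℓᵖ(Fin n, ℝ)` consisting of isometries, each element of which has a fixed
point, has a common fixed point. -/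
theorem isom_lp_norm_fixating
    (n : ℕ) (hn : 1 ≤ n) (p : ENNReal) [Fact (1 ≤ p)] (hp : p ≠ 2) :
    ∀ G : Subgroup (Equiv.Perm (PiLp p (fun _ : Fin n => ℝ))),
      (∀ g ∈ G, ∀ x y : PiLp p (fun _ : Fin n => ℝ), dist (g x) (g y) = dist x y) →
      (∀ g ∈ G, ∃ x : PiLp p (fun _ : Fin n => ℝ), g x = x) →
      ∃ x : PiLp p (fun _ : Fin n => ℝ), ∀ g ∈ G, g x = x :=
  isom_lp_norm_fixating_general n p hp
end

section
/- The group of orientation-preserving isometries of the 3-sphere is fixating. Equivalently: let G be a subgroup of the orthogonal group O(4) (real orthogonal 4×4 matrices) all of whose elements have determinant 1 (i.e., G ≤ SO(4)). If every A ∈ G has a nonzero fixed vector in ℝ⁴ (A·v = v for some v ≠ 0), then there exists a nonzero vector v ∈ ℝ⁴ with A·v = v for every A ∈ G. -/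
/-!
The characteristic polynomial of `A ∈ SO(4)` is palindromic, so when `1` is an eigenvalue it
factors as `(t - 1)² (t² - (tr A - 2) t + 1)`. If `tr A < 0` the quadratic factor has a real
root `r < -1`, which is impossible for an orthogonal matrix; hence `tr A ≥ 0` on `G`, and by
continuity on its closure `K`, a compact group. The Haar average `P = ∫ g dg` over `K`
satisfies `g P = P` for `g ∈ K`, and its trace `∫ tr g dg` is positive because the integrand
is nonnegative and equals `4` at the identity. Hence `P ≠ 0`, and any nonzero column of `P`
is fixed by `G`.
-/

open Matrix Polynomial MeasureTheory

namespace Matrix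

variable {n : Type*} [Fintype n] [DecidableEq n]

lemma isCompact_orthogonalGroup : IsCompact (orthogonalGroup n ℝ : Set (Matrix n n ℝ)) :=
  (isCompact_univ_pi fun _ => isCompact_univ_pi fun _ => isCompact_closedBall (0 : ℝ) 1)
    |>.of_isClosed_subset (isClosed_unitary (R := Matrix n n ℝ)) fun _ hA =>
      Set.mem_univ_pi.2 fun i => Set.mem_univ_pi.2 fun j =>
        mem_closedBall_zero_iff.2 (entry_norm_bound_of_unitary hA i j)

instance : CompactSpace (orthogonalGroup n ℝ) :=
  isCompact_iff_compactSpace.1 isCompact_orthogonalGroup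

lemma sq_eq_one_of_mulVec_eq_smul {A : Matrix n n ℝ} (hA : A ∈ orthogonalGroup n ℝ)
    {w : n → ℝ} (hw : w ≠ 0) {r : ℝ} (hAw : A *ᵥ w = r • w) : r ^ 2 = 1 := by
  have hiso : (A *ᵥ w) ⬝ᵥ (A *ᵥ w) = w ⬝ᵥ w := by
    rw [dotProduct_mulVec, ← vecMul_transpose, vecMul_vecMul,
      (mem_orthogonalGroup_iff' n ℝ).1 hA, vecMul_one]
  rw [hAw, smul_dotProduct, dotProduct_smul, smul_smul, smul_eq_mul] at hiso
  have hww : w ⬝ᵥ w ≠ 0 := fun h => hw (dotProduct_self_eq_zero.1 h)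
  rw [sq]
  exact mul_right_cancel₀ hww (hiso.trans (one_mul _).symm)

variable {K : Type*} [Field K]

lemma eval_charpoly_eq_det_smul_one_sub (A : Matrix n n K) (t : K) :
    A.charpoly.eval t = (t • 1 - A).det := by
  rw [eval_charpoly, scalar_apply, smul_one_eq_diagonal]

lemma exists_mulVec_eq_smul_iff_eval_charpoly_eq_zero (A : Matrix n n K) (r : K) :
    (∃ w ≠ 0, A *ᵥ w = r • w) ↔ A.charpoly.eval r = 0 := by
  rw [eval_charpoly_eq_det_smul_one_sub, ← exists_mulVec_eq_zero_iff]
  refine exists_congr fun w => and_congr_right fun _ => ?_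
  rw [sub_mulVec, smul_mulVec, one_mulVec, sub_eq_zero, eq_comm]

lemma eval_charpoly_eq_neg_pow_mul_eval_inv {A : Matrix n n K}
    (hA : A ∈ orthogonalGroup n K) (hdet : A.det = 1) {t : K} (ht : t ≠ 0) :
    A.charpoly.eval t = (-t) ^ Fintype.card n * A.charpoly.eval t⁻¹ := by
  have hmul : A * (t • 1 - Aᵀ) = -t • (t⁻¹ • 1 - A) := by
    rw [mul_sub, (mem_orthogonalGroup_iff n K).1 hA, smul_sub, smul_smul, neg_mul,
      mul_inv_cancel₀ ht, mul_smul_comm, mul_one]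
    module
  calc A.charpoly.eval t = (t • 1 - Aᵀ).det := by
        rw [eval_charpoly_eq_det_smul_one_sub, ← det_transpose, transpose_sub, transpose_smul,
          transpose_one]
    _ = (A * (t • 1 - Aᵀ)).det := by rw [det_mul, hdet, one_mul]
    _ = (-t) ^ Fintype.card n * A.charpoly.eval t⁻¹ := by
        rw [hmul, det_smul, eval_charpoly_eq_det_smul_one_sub]

lemma eval_charpoly_fin_four (A : Matrix (Fin 4) (Fin 4) K) (t : K) :
    A.charpoly.eval t = A.charpoly.coeff 0 + A.charpoly.coeff 1 * t +
      A.charpoly.coeff 2 * t ^ 2 - A.trace * t ^ 3 + t ^ 4 := by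
  have hdeg : A.charpoly.natDegree = 4 := by simp
  have hlead : A.charpoly.coeff 4 = 1 := by
    simpa [Monic, leadingCoeff, hdeg] using A.charpoly_monic
  rw [eval_eq_sum_range' (by omega : A.charpoly.natDegree < 5), trace_eq_neg_charpoly_coeff]
  simp [Finset.sum_range_succ, hlead]

lemma eval_charpoly_of_mem_specialOrthogonalGroup_fin_four {A : Matrix (Fin 4) (Fin 4) ℝ}
    (hA : A ∈ specialOrthogonalGroup (Fin 4) ℝ) (hfix : ∃ v ≠ 0, A *ᵥ v = v) (t : ℝ) :
    A.charpoly.eval t = (t - 1) ^ 2 * (t ^ 2 - (A.trace - 2) * t + 1) := by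
  obtain ⟨hO, hdet⟩ := mem_specialOrthogonalGroup_iff.1 hA
  have hc0 : A.charpoly.coeff 0 = 1 := by
    have := det_eq_sign_charpoly_coeff A
    norm_num [hdet] at this
    exact this.symm
  have hone : A.charpoly.eval 1 = 0 :=
    (exists_mulVec_eq_smul_iff_eval_charpoly_eq_zero A 1).1 (by simpa using hfix)
  have htwo := eval_charpoly_eq_neg_pow_mul_eval_inv hO hdet (two_ne_zero (α := ℝ))
  simp only [eval_charpoly_fin_four, hc0, Fintype.card_fin] at hone htwo ⊢
  linear_combination t ^ 2 * hone + (t ^ 2 - t) / 6 * htwo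

theorem trace_nonneg_of_mem_specialOrthogonalGroup_fin_four {A : Matrix (Fin 4) (Fin 4) ℝ}
    (hA : A ∈ specialOrthogonalGroup (Fin 4) ℝ) (hfix : ∃ v ≠ 0, A *ᵥ v = v) : 0 ≤ A.trace := by
  by_contra! ha
  set a := A.trace
  obtain ⟨hs, hs_nonneg⟩ : √(a ^ 2 - 4 * a) ^ 2 = a ^ 2 - 4 * a ∧ 0 ≤ √(a ^ 2 - 4 * a) :=
    ⟨Real.sq_sqrt (by nlinarith), Real.sqrt_nonneg _⟩
  set r := (a - 2 - √(a ^ 2 - 4 * a)) / 2 with hr_def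
  have hroot : A.charpoly.eval r = 0 := by
    rw [eval_charpoly_of_mem_specialOrthogonalGroup_fin_four hA hfix]
    linear_combination (r - 1) ^ 2 / 4 * hs
  obtain ⟨w, hw, hAw⟩ := (exists_mulVec_eq_smul_iff_eval_charpoly_eq_zero A r).2 hroot
  have hr := sq_eq_one_of_mulVec_eq_smul (mem_specialOrthogonalGroup_iff.1 hA).1 hw hAw
  have hr_lt : r < -1 := by linarith [hr_def]
  nlinarith

end Matrix

section HaarAverage

-- any matrix norm will do: it only serves to define the Bochner integral of matrix-valued maps
attribute [local instance] Matrix.linftyOpNormedRing Matrix.linftyOpNormedAlgebra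

variable {K : Type*} [Group K] [TopologicalSpace K] [CompactSpace K]
  {n : Type*} [Fintype n] [DecidableEq n] {ρ : K →* Matrix n n ℝ}

section Measure

variable [MeasurableSpace K] [BorelSpace K] (μ : Measure K) [μ.IsHaarMeasure]

lemma MonoidHom.mul_integral_eq_integral [ContinuousMul K] (hρ : Continuous ρ) (h : K) :
    ρ h * ∫ g, ρ g ∂μ = ∫ g, ρ g ∂μ := by
  rw [← integral_const_mul_of_integrable (hρ.integrable_of_hasCompactSupport
    (HasCompactSupport.of_compactSpace _))]
  simp_rw [← map_mul]
  exact integral_mul_left_eq_self (fun g => ρ g) h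

lemma MonoidHom.trace_integral (hρ : Continuous ρ) :
    (∫ g, ρ g ∂μ).trace = ∫ g, (ρ g).trace ∂μ :=
  ((traceLinearMap n ℝ ℝ).toContinuousLinearMap.integral_comp_comm
    (hρ.integrable_of_hasCompactSupport (HasCompactSupport.of_compactSpace _))).symm

lemma MonoidHom.integral_trace_pos [Nonempty n] (hρ : Continuous ρ)
    (htr : ∀ g, 0 ≤ (ρ g).trace) : 0 < ∫ g, (ρ g).trace ∂μ := by
  have hcont : Continuous fun g => (ρ g).trace := hρ.matrix_trace
  rw [integral_pos_iff_support_of_nonneg htr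
    (hcont.integrable_of_hasCompactSupport (HasCompactSupport.of_compactSpace _))]
  have hone : (1 : K) ∈ Function.support fun g => (ρ g).trace := by
    simp [Fintype.card_ne_zero]
  exact (isOpen_ne_fun hcont continuous_const).measure_pos μ ⟨1, hone⟩

end Measure

theorem MonoidHom.exists_ne_zero_forall_mulVec_eq_self_of_trace_nonneg [IsTopologicalGroup K] [Nonempty n]
    (hρ : Continuous ρ) (htr : ∀ g, 0 ≤ (ρ g).trace) : ∃ v ≠ 0, ∀ g, ρ g *ᵥ v = v := by
  borelize K
  set P := ∫ g, ρ g ∂Measure.haar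
  have hP : P ≠ 0 := by
    intro h
    have := MonoidHom.integral_trace_pos Measure.haar hρ htr
    rw [← MonoidHom.trace_integral Measure.haar hρ] at this
    simp [P, h] at this
  obtain ⟨w, hw⟩ : ∃ w, P *ᵥ w ≠ 0 := by
    by_contra! h
    exact hP (ext_iff_mulVec.2 fun w => by simp [h])
  exact ⟨P *ᵥ w, hw, fun g => by rw [mulVec_mulVec, MonoidHom.mul_integral_eq_integral _ hρ]⟩

end HaarAverage

/-- The group of orientation-preserving isometries of the 3-sphere is
fixating: if `G` is a subgroup of the orthogonal group `O(4)` all of whose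
elements have determinant `1`, and every `A ∈ G` has a nonzero fixed vector in
`ℝ⁴`, then some nonzero vector of `ℝ⁴` is fixed by every element of `G`. -/
theorem so4_gaf_gag
    (G : Subgroup (Matrix.orthogonalGroup (Fin 4) ℝ))
    (hdet : ∀ A ∈ G, Matrix.det (A : Matrix (Fin 4) (Fin 4) ℝ) = 1)
    (hGAF : ∀ A ∈ G, ∃ v : Fin 4 → ℝ, v ≠ 0 ∧
      Matrix.mulVec (A : Matrix (Fin 4) (Fin 4) ℝ) v = v) :
    ∃ v : Fin 4 → ℝ, v ≠ 0 ∧ ∀ A ∈ G,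
      Matrix.mulVec (A : Matrix (Fin 4) (Fin 4) ℝ) v = v := by
  let K := G.topologicalClosure
  have : CompactSpace K := isCompact_iff_compactSpace.1 G.isClosed_topologicalClosure.isCompact
  let ρ : K →* Matrix (Fin 4) (Fin 4) ℝ := (orthogonalGroup (Fin 4) ℝ).subtype.comp K.subtype
  have hρ : Continuous ρ := continuous_subtype_val.comp continuous_subtype_val
  have htr : ∀ g : K, 0 ≤ (ρ g).trace := by
    let S : Set (orthogonalGroup (Fin 4) ℝ) := {A | 0 ≤ (A : Matrix (Fin 4) (Fin 4) ℝ).trace}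
    have hG : (G : Set (orthogonalGroup (Fin 4) ℝ)) ⊆ S := fun A hA =>
      trace_nonneg_of_mem_specialOrthogonalGroup_fin_four
        (mem_specialOrthogonalGroup_iff.2 ⟨A.2, hdet A hA⟩) (hGAF A hA)
    have hS : IsClosed S := isClosed_le continuous_const (by fun_prop)
    exact fun g => closure_minimal hG hS (G.topologicalClosure_coe ▸ g.2)
  obtain ⟨v, hv, hfix⟩ := ρ.exists_ne_zero_forall_mulVec_eq_self_of_trace_nonneg hρ htr
  exact ⟨v, hv, fun A hA => hfix ⟨A, G.le_topologicalClosure hA⟩⟩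
end

section
/- For every integer n ≥ 2, the isometry group of the n-sphere is nonfixating. Equivalently: for every n ≥ 2 there exists a subgroup G of the orthogonal group O(n+1) (real orthogonal (n+1)×(n+1) matrices) such that every A ∈ G has a nonzero fixed vector in ℝ^{n+1} (A·v = v for some v ≠ 0), yet no nonzero vector of ℝ^{n+1} is fixed by all elements of G. -/
/-!
Let the Klein four-group `ℤˣ × ℤˣ` act on `ℝ^(n+1)` by diagonal sign matrices, the sign of
`(s, t)` being `t` on one coordinate, `s t` on a second and `s` on all others. Every element has
some coordinate of sign `1`, hence fixes the corresponding basis vector; but every coordinate is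
negated by some element, so a common fixed vector has all coordinates zero. Three coordinates are
needed, whence `n ≥ 2`.
-/

namespace Matrix

variable {ι R : Type*} [Fintype ι] [DecidableEq ι]

theorem diagonal_mulVec_eq_self_iff [Ring R] [NoZeroDivisors R] {d v : ι → R} :
    diagonal d *ᵥ v = v ↔ ∀ i, d i = 1 ∨ v i = 0 := by
  simp only [funext_iff, mulVec_diagonal]
  refine forall_congr' fun i => ?_
  rw [← sub_eq_zero, ← sub_one_mul, mul_eq_zero, sub_eq_zero]

def signDiagonal : (ι → ℤˣ) →* orthogonalGroup ι ℝ where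
  toFun ε := ⟨diagonal fun i => ((ε i : ℤ) : ℝ), by
    rw [mem_orthogonalGroup_iff, diagonal_transpose, diagonal_mul_diagonal, ← diagonal_one]
    congr 1
    funext i
    rw [← Int.cast_mul, ← Units.val_mul, Int.units_mul_self]
    simp⟩
  map_one' := by ext : 1; simp
  map_mul' ε δ := by ext : 1; simp [diagonal_mul_diagonal]

@[simp]
theorem coe_signDiagonal (ε : ι → ℤˣ) :
    (signDiagonal ε : Matrix ι ι ℝ) = diagonal fun i => ((ε i : ℤ) : ℝ) := rfl

theorem signDiagonal_mulVec_eq_self_iff {ε : ι → ℤˣ} {v : ι → ℝ} :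
    (signDiagonal ε : Matrix ι ι ℝ) *ᵥ v = v ↔ ∀ i, ε i = -1 → v i = 0 := by
  rw [coe_signDiagonal, diagonal_mulVec_eq_self_iff]
  refine forall_congr' fun i => ?_
  rcases Int.units_eq_one_or (ε i) with h | h <;> simp [h]
  norm_num

theorem exists_ne_zero_signDiagonal_mulVec_eq_self {ε : ι → ℤˣ} {i : ι} (hi : ε i = 1) :
    ∃ v : ι → ℝ, v ≠ 0 ∧ (signDiagonal ε : Matrix ι ι ℝ) *ᵥ v = v := by
  refine ⟨Pi.single i 1, by simp, signDiagonal_mulVec_eq_self_iff.2 fun j hj => ?_⟩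
  have hji : j ≠ i := by rintro rfl; simp [hi] at hj
  exact Pi.single_eq_of_ne hji 1

theorem eq_zero_of_forall_signDiagonal_mulVec_eq_self {S : Set (ι → ℤˣ)}
    (hS : ∀ i, ∃ ε ∈ S, ε i = -1) {v : ι → ℝ}
    (hv : ∀ ε ∈ S, (signDiagonal ε : Matrix ι ι ℝ) *ᵥ v = v) : v = 0 := by
  funext i
  obtain ⟨ε, hεS, hεi⟩ := hS i
  exact signDiagonal_mulVec_eq_self_iff.1 (hv ε hεS) i hεi

end Matrix

section KleinSigns

variable {ι : Type*} [DecidableEq ι]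

def kleinSigns (a c : ι) : ℤˣ × ℤˣ →* (ι → ℤˣ) :=
  MonoidHom.pi fun i =>
    if i = c then MonoidHom.snd _ _
    else if i = a then MonoidHom.fst _ _ * MonoidHom.snd _ _
    else MonoidHom.fst _ _

theorem exists_kleinSigns_apply_eq_one {a b c : ι} (hac : a ≠ c) (hba : b ≠ a) (hbc : b ≠ c)
    (s : ℤˣ × ℤˣ) : ∃ i, kleinSigns a c s i = 1 := by
  rcases s with ⟨s, t⟩
  rcases Int.units_eq_one_or s with rfl | rfl
  · exact ⟨b, by simp [kleinSigns, hba, hbc]⟩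
  rcases Int.units_eq_one_or t with rfl | rfl
  · exact ⟨c, by simp [kleinSigns]⟩
  · exact ⟨a, by simp [kleinSigns, hac]⟩

theorem exists_kleinSigns_apply_eq_neg_one (a c i : ι) : ∃ s, kleinSigns a c s i = -1 := by
  by_cases hic : i = c
  · exact ⟨(1, -1), by simp [kleinSigns, hic]⟩
  refine ⟨(-1, 1), ?_⟩
  by_cases hia : i = a
  · subst hia; simp [kleinSigns, hic]
  · simp [kleinSigns, hic, hia]

end KleinSigns

open Matrix in
/-- For every `n ≥ 2`, the isometry group of the `n`-sphere is nonfixating: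
there exists a subgroup `G` of the orthogonal group `O(n+1)` such that every
element of `G` has a nonzero fixed vector in `ℝ^(n+1)`, yet no nonzero vector
is fixed by all elements of `G`. -/
theorem isom_sphere_nonfixating
    (n : ℕ) (hn : 2 ≤ n) :
    ∃ G : Subgroup (Matrix.orthogonalGroup (Fin (n + 1)) ℝ),
      (∀ A ∈ G, ∃ v : Fin (n + 1) → ℝ, v ≠ 0 ∧
        Matrix.mulVec (A : Matrix (Fin (n + 1)) (Fin (n + 1)) ℝ) v = v) ∧
      ¬ ∃ v : Fin (n + 1) → ℝ, v ≠ 0 ∧ ∀ A ∈ G,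
        Matrix.mulVec (A : Matrix (Fin (n + 1)) (Fin (n + 1)) ℝ) v = v := by
  let a : Fin (n + 1) := ⟨1, by omega⟩
  let b : Fin (n + 1) := ⟨0, by omega⟩
  let c : Fin (n + 1) := ⟨2, by omega⟩
  refine ⟨(signDiagonal.comp (kleinSigns a c)).range, ?_, ?_⟩
  · rintro A ⟨s, rfl⟩
    obtain ⟨i, hi⟩ := exists_kleinSigns_apply_eq_one (a := a) (b := b) (c := c)
      (by simp [a, c]) (by simp [a, b]) (by simp [b, c]) s
    exact exists_ne_zero_signDiagonal_mulVec_eq_self hi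
  · rintro ⟨v, hv0, hv⟩
    have hneg (i : Fin (n + 1)) : ∃ ε ∈ Set.range (kleinSigns a c), ε i = -1 :=
      let ⟨s, hs⟩ := exists_kleinSigns_apply_eq_neg_one a c i
      ⟨_, ⟨s, rfl⟩, hs⟩
    exact hv0 <| eq_zero_of_forall_signDiagonal_mulVec_eq_self hneg <| by
      rintro _ ⟨s, rfl⟩
      exact hv _ ⟨s, rfl⟩
end

section
/- For every integer n ≥ 1, the symmetric group 𝒮ₙ of all permutations of {1,…,n}, acting on {1,…,n}, is fixating if and only if n ≤ 4. That is: every subgroup G of 𝒮ₙ such that each permutation in G has a fixed point admits a point fixed by all of G, if and only if n ≤ 4. -/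
open Equiv

-- generic permCongr multiplicativity
lemma permCongr_mul' {α β : Type*} (e : α ≃ β) (p q : Perm α) :
    e.permCongr p * e.permCongr q = e.permCongr (p * q) := by
  ext b
  simp [Equiv.permCongr_apply, Equiv.Perm.mul_apply]

lemma permCongr_one' {α β : Type*} (e : α ≃ β) :
    e.permCongr (1 : Perm α) = 1 := by
  ext b; simp [Equiv.permCongr_apply]

-- the "sign" map to Perm (Fin 2), defined concretely
def sgn (σ : Perm (Fin 3)) : Perm (Fin 2) :=
  if σ = 1 ∨ (∀ i, σ i ≠ i) then 1 else Equiv.swap 0 1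

lemma sgn_mul : ∀ σ τ : Perm (Fin 3), sgn (σ * τ) = sgn σ * sgn τ := by decide

-- abbreviation for block type
abbrev TT (a b : ℕ) := (Fin a × Fin 3) ⊕ (Fin b × Fin 2)

def f (a b : ℕ) (σ : Perm (Fin 3)) : Perm (TT a b) :=
  Equiv.sumCongr (Equiv.prodCongr (Equiv.refl (Fin a)) σ)
    (Equiv.prodCongr (Equiv.refl (Fin b)) (sgn σ))

lemma f_mul (a b : ℕ) (σ τ : Perm (Fin 3)) :
    f a b σ * f a b τ = f a b (σ * τ) := by
  ext x
  cases x with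
  | inl p => simp [f, Equiv.Perm.mul_apply, Prod.map]
  | inr p => simp [f, sgn_mul, Equiv.Perm.mul_apply, Prod.map]

lemma f_one (a b : ℕ) : f a b 1 = 1 := by
  ext x
  cases x with
  | inl p => simp [f, sgn]
  | inr p => simp [f, sgn]

lemma sgn_one_of (σ : Perm (Fin 3)) (h : sgn σ ≠ 1) : ∃ i, σ i = i := by
  revert h; revert σ; decide

lemma f_fix (a b : ℕ) (ha : 1 ≤ a) (hb : 1 ≤ b) (σ : Perm (Fin 3)) :
    ∃ x : TT a b, f a b σ x = x := by
  by_cases h : sgn σ = 1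
  · refine ⟨Sum.inr (⟨0, hb⟩, 0), ?_⟩
    simp [f, h]
  · obtain ⟨i, hi⟩ := sgn_one_of σ h
    refine ⟨Sum.inl (⟨0, ha⟩, i), ?_⟩
    simp [f, hi]

lemma rot_moves : ∀ i : Fin 3, ((Equiv.swap (0:Fin 3) 1 * Equiv.swap 1 2 : Perm (Fin 3))) i ≠ i := by decide

lemma sgn_swap_moves : ∀ i : Fin 2, sgn (Equiv.swap 0 1) i ≠ i := by decide

lemma f_move (a b : ℕ) (x : TT a b) : ∃ σ : Perm (Fin 3), f a b σ x ≠ x := by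
  cases x with
  | inl p =>
      refine ⟨Equiv.swap 0 1 * Equiv.swap 1 2, ?_⟩
      simp only [f, Equiv.sumCongr_apply, Sum.map_inl, Equiv.prodCongr_apply, Prod.map]
      intro hx
      exact rot_moves p.2 (congrArg Prod.snd (Sum.inl.inj hx))
  | inr p =>
      refine ⟨Equiv.swap 0 1, ?_⟩
      simp only [f, Equiv.sumCongr_apply, Sum.map_inr, Equiv.prodCongr_apply, Prod.map]
      intro hx
      exact sgn_swap_moves p.2 (congrArg Prod.snd (Sum.inr.inj hx))

lemma card_TT (a b : ℕ) : Fintype.card (TT a b) = 3 * a + 2 * b := by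
  simp [TT]; ring

-- counterexample subgroup for n = 3a+2b
lemma no_fixating_of_decomp (n a b : ℕ) (ha : 1 ≤ a) (hb : 1 ≤ b)
    (hn : n = 3 * a + 2 * b) :
    ¬ ((∀ G : Subgroup (Equiv.Perm (Fin n)),
      (∀ g ∈ G, ∃ i : Fin n, g i = i) → ∃ i : Fin n, ∀ g ∈ G, g i = i)) := by
  intro hprop
  have hcard : Fintype.card (TT a b) = n := by rw [card_TT, hn]
  set e : TT a b ≃ Fin n := Fintype.equivFinOfCardEq hcard with he
  set G : Subgroup (Perm (Fin n)) :=
    { carrier := Set.range (fun σ : Perm (Fin 3) => e.permCongr (f a b σ))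
      one_mem' := ⟨1, by show e.permCongr (f a b 1) = 1; rw [f_one, permCongr_one']⟩
      mul_mem' := by
        rintro x y ⟨σ, rfl⟩ ⟨τ, rfl⟩
        exact ⟨σ * τ, by show e.permCongr (f a b (σ * τ)) = _; rw [← f_mul, ← permCongr_mul']⟩
      inv_mem' := by
        rintro x ⟨σ, rfl⟩
        refine ⟨σ⁻¹, ?_⟩
        show e.permCongr (f a b σ⁻¹) = (e.permCongr (f a b σ))⁻¹
        have : e.permCongr (f a b σ⁻¹) * e.permCongr (f a b σ) = 1 := by
          rw [permCongr_mul', f_mul, inv_mul_cancel, f_one, permCongr_one']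
        exact eq_inv_of_mul_eq_one_left this } with hG
  obtain ⟨i, hi⟩ := hprop G (by
    rintro g ⟨σ, rfl⟩
    obtain ⟨x, hx⟩ := f_fix a b ha hb σ
    exact ⟨e x, by simp [Equiv.permCongr_apply, hx]⟩)
  obtain ⟨σ, hσ⟩ := f_move a b (e.symm i)
  have h2 : e.permCongr (f a b σ) i = i := hi _ ⟨σ, rfl⟩
  rw [Equiv.permCongr_apply] at h2
  exact hσ (e.injective (by rw [h2, Equiv.apply_symm_apply]))
open Equiv

def a6 : Perm (Fin 6) := Equiv.swap 0 1 * Equiv.swap 2 3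
def b6 : Perm (Fin 6) := Equiv.swap 0 1 * Equiv.swap 4 5

lemma mem6_mul : ∀ x ∈ ({1, a6, b6, a6 * b6} : Set (Perm (Fin 6))),
    ∀ y ∈ ({1, a6, b6, a6 * b6} : Set (Perm (Fin 6))),
    x * y ∈ ({1, a6, b6, a6 * b6} : Set (Perm (Fin 6))) := by
  intro x hx y hy
  simp only [Set.mem_insert_iff, Set.mem_singleton_iff] at *
  rcases hx with rfl|rfl|rfl|rfl <;> rcases hy with rfl|rfl|rfl|rfl <;> decide

lemma mem6_inv : ∀ x ∈ ({1, a6, b6, a6 * b6} : Set (Perm (Fin 6))),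
    x⁻¹ ∈ ({1, a6, b6, a6 * b6} : Set (Perm (Fin 6))) := by
  intro x hx
  simp only [Set.mem_insert_iff, Set.mem_singleton_iff] at *
  rcases hx with rfl|rfl|rfl|rfl <;> decide

def G6 : Subgroup (Perm (Fin 6)) :=
  { carrier := {1, a6, b6, a6 * b6}
    one_mem' := by left; rfl
    mul_mem' := fun hx hy => mem6_mul _ hx _ hy
    inv_mem' := fun hx => mem6_inv _ hx }

lemma no_fixating_six :
    ¬ ((∀ G : Subgroup (Equiv.Perm (Fin 6)),
      (∀ g ∈ G, ∃ i : Fin 6, g i = i) → ∃ i : Fin 6, ∀ g ∈ G, g i = i)) := by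
  intro hprop
  obtain ⟨i, hi⟩ := hprop G6 (by
    intro g hg
    have hg' : g = 1 ∨ g = a6 ∨ g = b6 ∨ g = a6 * b6 := hg
    rcases hg' with rfl|rfl|rfl|rfl
    · exact ⟨0, rfl⟩
    · exact ⟨4, by decide⟩
    · exact ⟨2, by decide⟩
    · exact ⟨0, by decide⟩)
  have h1 : a6 i = i := hi a6 (by right; left; rfl)
  have h2 : b6 i = i := hi b6 (by right; right; left; rfl)
  have key : ∀ j : Fin 6, ¬(a6 j = j ∧ b6 j = j) := by decide
  exact key i ⟨h1, h2⟩

lemma decomp (n : ℕ) (h5 : 5 ≤ n) (h6 : n ≠ 6) :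
    ∃ a b, 1 ≤ a ∧ 1 ≤ b ∧ n = 3 * a + 2 * b := by
  rcases Nat.even_or_odd n with ⟨k, hk⟩ | ⟨k, hk⟩
  · exact ⟨2, (n - 6) / 2, by omega, by omega, by omega⟩
  · exact ⟨1, (n - 3) / 2, by omega, by omega, by omega⟩

-- backward lemmas
set_option maxHeartbeats 4000000 in
lemma lemA : ∀ g h : Equiv.Perm (Fin 4), ∀ i : Fin 4,
    (g i = i ∧ (∀ j, g j = j → j = i) ∧ (∃ k, h k = k) ∧ (∃ k, (g*h) k = k) ∧
      (∃ k, (g*h⁻¹) k = k)) → h i = i := by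
  decide

set_option maxHeartbeats 4000000 in
lemma lemB4 : ∀ g h : Equiv.Perm (Fin 4),
    ((∃ i j, i ≠ j ∧ g i = i ∧ g j = j) ∧ (∃ i j, i ≠ j ∧ h i = i ∧ h j = j) ∧
     (∃ i j, i ≠ j ∧ (g*h⁻¹) i = i ∧ (g*h⁻¹) j = j) ∧ g ≠ 1 ∧ h ≠ 1) → g = h := by
  decide

set_option maxHeartbeats 1000000 in
lemma lemB3 : ∀ g h : Equiv.Perm (Fin 3),
    ((∃ i, g i = i) ∧ (∃ i, h i = i) ∧ (∃ i, (g*h⁻¹) i = i) ∧ g ≠ 1 ∧ h ≠ 1) → g = h := by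
  decide

lemma lemB2 : ∀ g : Equiv.Perm (Fin 2), (∃ i, g i = i) → g = 1 := by decide

lemma backward3 (G : Subgroup (Perm (Fin 3)))
    (hG : ∀ g ∈ G, ∃ i : Fin 3, g i = i) : ∃ i : Fin 3, ∀ g ∈ G, g i = i := by
  by_cases hE : ∃ g ∈ G, g ≠ (1 : Perm (Fin 3))
  · obtain ⟨g₀, hg₀G, hg₀⟩ := hE
    obtain ⟨i, hi⟩ := hG g₀ hg₀G
    refine ⟨i, fun h hh => ?_⟩
    by_cases hh1 : h = 1
    · rw [hh1]; rfl
    · have := lemB3 g₀ h ⟨hG _ hg₀G, hG _ hh,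
        hG _ (mul_mem hg₀G (inv_mem hh)), hg₀, hh1⟩
      rw [← this]; exact hi
  · push_neg at hE
    exact ⟨0, fun g hg => by rw [hE g hg]; rfl⟩

lemma backward4 (G : Subgroup (Perm (Fin 4)))
    (hG : ∀ g ∈ G, ∃ i : Fin 4, g i = i) : ∃ i : Fin 4, ∀ g ∈ G, g i = i := by
  by_cases hA : ∃ g ∈ G, ∃ i, g i = i ∧ ∀ j, g j = j → j = i
  · obtain ⟨g, hgG, i, hgi, huniq⟩ := hA
    refine ⟨i, fun h hh => ?_⟩
    exact lemA g h i ⟨hgi, huniq, hG h hh, hG _ (mul_mem hgG hh),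
      hG _ (mul_mem hgG (inv_mem hh))⟩
  · push_neg at hA
    have twofix : ∀ g ∈ G, ∃ i j, i ≠ j ∧ g i = i ∧ g j = j := by
      intro g hg
      obtain ⟨i, hi⟩ := hG g hg
      obtain ⟨j, hj, hne⟩ := hA g hg i hi
      exact ⟨j, i, hne, hj, hi⟩
    by_cases hE : ∃ g ∈ G, g ≠ (1 : Perm (Fin 4))
    · obtain ⟨g₀, hg₀G, hg₀⟩ := hE
      obtain ⟨i, hi⟩ := hG g₀ hg₀G
      refine ⟨i, fun h hh => ?_⟩
      by_cases hh1 : h = 1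
      · rw [hh1]; rfl
      · have := lemB4 g₀ h ⟨twofix _ hg₀G, twofix _ hh,
          twofix _ (mul_mem hg₀G (inv_mem hh)), hg₀, hh1⟩
        rw [← this]; exact hi
    · push_neg at hE
      exact ⟨0, fun g hg => by rw [hE g hg]; rfl⟩

/-- The symmetric group `𝒮ₙ` acting on `{1,…,n}` (here `Fin n`) is fixating
if and only if `n ≤ 4`: every subgroup in which each permutation has a fixed
point has a common fixed point, iff `n ≤ 4`. -/
theorem symmetric_group_fixating_iff_le_four
    (n : ℕ) (hn : 1 ≤ n) :
    (∀ G : Subgroup (Equiv.Perm (Fin n)),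
      (∀ g ∈ G, ∃ i : Fin n, g i = i) → ∃ i : Fin n, ∀ g ∈ G, g i = i) ↔ n ≤ 4 := by
  constructor
  · intro hprop
    by_contra h4
    push_neg at h4
    by_cases h6 : n = 6
    · subst h6; exact no_fixating_six hprop
    · obtain ⟨a, b, ha, hb, hab⟩ := decomp n (by omega) h6
      exact no_fixating_of_decomp n a b ha hb hab hprop
  · intro h4
    interval_cases n
    · exact fun G hG => ⟨0, fun g _ => Subsingleton.elim _ _⟩
    · exact fun G hG => ⟨0, fun g hg => by rw [lemB2 g (hG g hg)]; rfl⟩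
    · exact backward3
    · exact backward4
end

section
/- For every integer n ≥ 1, the alternating group 𝒜ₙ of even permutations of {1,…,n}, acting on {1,…,n}, is fixating if and only if n ≤ 4. That is: every subgroup G of 𝒜ₙ such that each permutation in G has a fixed point admits a point fixed by all of G, if and only if n ≤ 4. -/
/-!
For `n ≤ 4`, a nontrivial even permutation of `Fin n` with a fixed point is a 3-cycle, so a
subgroup of `𝒜ₙ` all of whose elements have fixed points is a 3-group; since `9 ∤ 24` it is
cyclic, and a fixed point of a generator is fixed by the whole group.

For `n ≥ 5` there is a subgroup of `𝒜ₙ` whose elements all have fixed points but which has no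
common fixed point: an explicit one for `n = 5, 6, 7`, and for `n ≥ 8` the product of the one on
5 points with the alternating group on the remaining `n - 5 ≥ 3` points. In such a product every
element fixes a point on the first block, while neither factor has a common fixed point.
-/

open Equiv Equiv.Perm

namespace Subgroup

variable {α β : Type*}

def IsGAF (G : Subgroup (Perm α)) : Prop := ∀ g ∈ G, ∃ x, g x = x

def IsGAG (G : Subgroup (Perm α)) : Prop := ∃ x, ∀ g ∈ G, g x = x

def IsFixating (H : Subgroup (Perm α)) : Prop := ∀ G ≤ H, G.IsGAF → G.IsGAG

theorem IsGAF.isGAG_of_isCyclic {G : Subgroup (Perm α)} (hG : G.IsGAF) [IsCyclic G] :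
    G.IsGAG := by
  obtain ⟨⟨g, hg⟩, hgen⟩ := IsCyclic.exists_generator (α := G)
  obtain ⟨x, hx⟩ := hG g hg
  refine ⟨x, fun h hh => ?_⟩
  obtain ⟨k, hk⟩ := hgen ⟨h, hh⟩
  obtain rfl : g ^ k = h := by simpa using congrArg Subtype.val hk
  exact zpow_apply_eq_self_of_apply_eq_self hx k

theorem isFixating_alternatingGroup_of_equiv [Fintype α] [DecidableEq α] [Fintype β]
    [DecidableEq β] (e : α ≃ β) (h : (alternatingGroup β).IsFixating) :
    (alternatingGroup α).IsFixating := by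
  intro G hGA hG
  have hmap : G.map (permCongrHom e).toMonoidHom ≤ alternatingGroup β := by
    rintro _ ⟨g, hg, rfl⟩
    exact (sign_permCongr e g).trans (hGA hg)
  obtain ⟨y, hy⟩ := h _ hmap <| by
    rintro _ ⟨g, hg, rfl⟩
    obtain ⟨x, hx⟩ := hG g hg
    exact ⟨e x, by simp [permCongrHom, hx]⟩
  exact ⟨e.symm y, fun g hg =>
    e.eq_symm_apply.mpr (by simpa [permCongrHom] using hy _ ⟨g, hg, rfl⟩)⟩

theorem isFixating_alternatingGroup_congr [Fintype α] [DecidableEq α] [Fintype β]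
    [DecidableEq β] (e : α ≃ β) :
    (alternatingGroup α).IsFixating ↔ (alternatingGroup β).IsFixating :=
  ⟨isFixating_alternatingGroup_of_equiv e.symm, isFixating_alternatingGroup_of_equiv e⟩

def sumCongr (G : Subgroup (Perm α)) (H : Subgroup (Perm β)) : Subgroup (Perm (α ⊕ β)) :=
  (G.prod H).map (sumCongrHom α β)

theorem sumCongr_mem_sumCongr {G : Subgroup (Perm α)} {H : Subgroup (Perm β)} {g : Perm α}
    {h : Perm β} (hg : g ∈ G) (hh : h ∈ H) : g.sumCongr h ∈ G.sumCongr H :=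
  ⟨(g, h), ⟨hg, hh⟩, rfl⟩

theorem sumCongr_le_alternatingGroup [Fintype α] [DecidableEq α] [Fintype β] [DecidableEq β]
    {G : Subgroup (Perm α)} {H : Subgroup (Perm β)} (hG : G ≤ alternatingGroup α)
    (hH : H ≤ alternatingGroup β) : G.sumCongr H ≤ alternatingGroup (α ⊕ β) := by
  rintro _ ⟨⟨g, h⟩, ⟨hg, hh⟩, rfl⟩
  simp only [sumCongrHom_apply, mem_alternatingGroup, sign_sumCongr]
  rw [hG hg, hH hh, mul_one]

theorem IsGAF.sumCongr {G : Subgroup (Perm α)} (hG : G.IsGAF) (H : Subgroup (Perm β)) :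
    (G.sumCongr H).IsGAF := by
  rintro _ ⟨⟨g, h⟩, ⟨hg, -⟩, rfl⟩
  obtain ⟨x, hx⟩ := hG g hg
  exact ⟨Sum.inl x, by simp [hx]⟩

theorem not_isGAG_sumCongr {G : Subgroup (Perm α)} {H : Subgroup (Perm β)} (hG : ¬ G.IsGAG)
    (hH : ¬ H.IsGAG) : ¬ (G.sumCongr H).IsGAG := by
  rintro ⟨x | y, hx⟩
  · exact hG ⟨x, fun g hg => by simpa using hx _ (sumCongr_mem_sumCongr hg H.one_mem)⟩
  · exact hH ⟨y, fun h hh => by simpa using hx _ (sumCongr_mem_sumCongr G.one_mem hh)⟩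

theorem not_isGAG_alternatingGroup [Fintype α] [DecidableEq α] (hα : 3 ≤ Fintype.card α) :
    ¬ (alternatingGroup α).IsGAG := by
  rintro ⟨x, hx⟩
  obtain ⟨y, hyx⟩ := Fintype.exists_ne_of_one_lt_card (by omega) x
  obtain ⟨z, -, hz⟩ := Finset.exists_mem_notMem_of_card_lt_card
    (s := {x, y}) (t := Finset.univ) (Finset.card_le_two.trans_lt (by rw [Finset.card_univ]; omega))
  simp only [Finset.mem_insert, Finset.mem_singleton, not_or] at hz
  have hmem : swap x y * swap y z ∈ alternatingGroup α := by
    simp [mem_alternatingGroup, sign_swap hyx.symm, sign_swap (Ne.symm hz.2)]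
  have := hx _ hmem
  rw [mul_apply, swap_apply_of_ne_of_ne (Ne.symm hyx) (Ne.symm hz.1), swap_apply_left] at this
  exact hyx this

theorem not_isFixating_alternatingGroup_sum [Fintype α] [DecidableEq α] [Fintype β]
    [DecidableEq β] (hα : ¬ (alternatingGroup α).IsFixating) (hβ : 3 ≤ Fintype.card β) :
    ¬ (alternatingGroup (α ⊕ β)).IsFixating := by
  intro h
  simp only [IsFixating, not_forall] at hα
  obtain ⟨G, hGA, hG, hG'⟩ := hα
  exact not_isGAG_sumCongr hG' (not_isGAG_alternatingGroup hβ)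
    (h _ (sumCongr_le_alternatingGroup hGA le_rfl) (hG.sumCongr _))

theorem not_isFixating_alternatingGroup_of_list [Fintype α] [DecidableEq α] (L : List (Perm α))
    (one_mem : 1 ∈ L) (mul_mem : ∀ a ∈ L, ∀ b ∈ L, a * b ∈ L) (inv_mem : ∀ a ∈ L, a⁻¹ ∈ L)
    (sign_eq : ∀ g ∈ L, sign g = 1) (fixed : ∀ g ∈ L, ∃ x, g x = x)
    (moved : ∀ x, ∃ g ∈ L, g x ≠ x) : ¬ (alternatingGroup α).IsFixating := by
  intro h
  let G : Subgroup (Perm α) :=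
    { carrier := {g | g ∈ L}
      one_mem' := one_mem
      mul_mem' := fun ha hb => mul_mem _ ha _ hb
      inv_mem' := fun ha => inv_mem _ ha }
  obtain ⟨x, hx⟩ := h G (fun g hg => sign_eq g hg) fixed
  obtain ⟨g, hg, hgx⟩ := moved x
  exact hgx (hx g hg)

end Subgroup

theorem Equiv.Perm.pow_three_eq_one_of_mem_alternatingGroup {n : ℕ} (hn : n ≤ 4) {g : Perm (Fin n)}
    (hg : g ∈ alternatingGroup (Fin n)) {x : Fin n} (hx : g x = x) : g ^ 3 = 1 := by
  rw [mem_alternatingGroup] at hg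
  revert g x
  interval_cases n <;> decide

theorem IsPGroup.isCyclic_of_not_sq_dvd {G : Type*} [Group G] [Finite G] {p : ℕ} [Fact p.Prime]
    (hG : IsPGroup p G) (hp : ¬ p ^ 2 ∣ Nat.card G) : IsCyclic G := by
  obtain ⟨k, hk⟩ := IsPGroup.iff_card.mp hG
  have hk1 : k ≤ 1 := by
    by_contra hk1
    exact hp (hk ▸ pow_dvd_pow p (by omega))
  interval_cases k
  · have : Subsingleton G := (Nat.card_eq_one_iff_unique.mp (by simpa using hk)).1
    exact isCyclic_of_subsingleton
  · exact isCyclic_of_prime_card (by simpa using hk)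

open Subgroup

theorem isFixating_alternatingGroup_fin {n : ℕ} (hn : n ≤ 4) :
    (alternatingGroup (Fin n)).IsFixating := by
  intro G hGA hG
  have h3 : IsPGroup 3 G := fun g => by
    obtain ⟨x, hx⟩ := hG g g.2
    exact ⟨1, Subtype.ext (pow_three_eq_one_of_mem_alternatingGroup hn (hGA g.2) hx)⟩
  have hcard : Nat.card G ∣ 24 := calc
    Nat.card G ∣ Nat.card (Perm (Fin n)) := G.card_subgroup_dvd_card
    _ = n.factorial := by rw [Nat.card_perm, Nat.card_fin]
    _ ∣ (4).factorial := Nat.factorial_dvd_factorial hn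
  have := h3.isCyclic_of_not_sq_dvd fun h9 => absurd (h9.trans hcard) (by norm_num)
  exact hG.isGAG_of_isCyclic

/- The examples: on 5 points, `S₃` on `{2, 3, 4}` with its odd elements also swapping `0, 1`;
on 6 points, the Klein four-group moving two of the pairs `{0, 4}, {1, 3}, {2, 5}` at a time;
on 7 points, the fibre product of `𝒜₄` on `{0, 2, 3, 5}` and `𝒜₃` on `{1, 4, 6}` over `C₃`. -/
theorem not_isFixating_alternatingGroup_fin_of_le_seven {n : ℕ} (h5 : 5 ≤ n) (h7 : n ≤ 7) :
    ¬ (alternatingGroup (Fin n)).IsFixating := by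
  interval_cases n <;> [
    refine not_isFixating_alternatingGroup_of_list
      [1, c[2, 3, 4], c[2, 4, 3], c[0, 1] * c[2, 3], c[0, 1] * c[2, 4], c[0, 1] * c[3, 4]]
      ?_ ?_ ?_ ?_ ?_ ?_;
    refine not_isFixating_alternatingGroup_of_list
      [1, c[1, 3] * c[2, 5], c[0, 4] * c[2, 5], c[0, 4] * c[1, 3]] ?_ ?_ ?_ ?_ ?_ ?_;
    refine not_isFixating_alternatingGroup_of_list
      [1, c[1, 4, 6] * c[2, 3, 5], c[1, 6, 4] * c[2, 5, 3],
        c[0, 2] * c[3, 5], c[0, 2, 5] * c[1, 4, 6], c[0, 2, 3] * c[1, 6, 4],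
        c[0, 3] * c[2, 5], c[0, 3, 2] * c[1, 4, 6], c[0, 3, 5] * c[1, 6, 4],
        c[0, 5] * c[2, 3], c[0, 5, 3] * c[1, 4, 6], c[0, 5, 2] * c[1, 6, 4]] ?_ ?_ ?_ ?_ ?_ ?_]
  all_goals first
    | intro a ha b hb; fin_cases ha <;> fin_cases hb <;> decide
    | intro a ha; fin_cases ha <;> decide
    | decide

theorem not_isFixating_alternatingGroup_fin {n : ℕ} (hn : 5 ≤ n) :
    ¬ (alternatingGroup (Fin n)).IsFixating := by
  rcases le_or_gt n 7 with h7 | h7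
  · exact not_isFixating_alternatingGroup_fin_of_le_seven hn h7
  · obtain ⟨k, rfl⟩ : ∃ k, n = 5 + k := ⟨n - 5, by omega⟩
    rw [← isFixating_alternatingGroup_congr finSumFinEquiv]
    exact not_isFixating_alternatingGroup_sum
      (not_isFixating_alternatingGroup_fin_of_le_seven le_rfl (by norm_num)) (by rw [Fintype.card_fin]; omega)

theorem alternating_group_fixating_iff_le_four_general
    (n : ℕ) :
    (∀ G : Subgroup (Equiv.Perm (Fin n)), G ≤ alternatingGroup (Fin n) →
      (∀ g ∈ G, ∃ i : Fin n, g i = i) → ∃ i : Fin n, ∀ g ∈ G, g i = i) ↔ n ≤ 4 :=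
  ⟨fun h => not_lt.mp fun hn => not_isFixating_alternatingGroup_fin hn h,
    isFixating_alternatingGroup_fin⟩

/-- The alternating group `𝒜ₙ` acting on `{1,…,n}` (here `Fin n`) is fixating
if and only if `n ≤ 4`: every subgroup of the alternating group in which each
permutation has a fixed point has a common fixed point, iff `n ≤ 4`. -/
theorem alternating_group_fixating_iff_le_four
    (n : ℕ) (hn : 1 ≤ n) :
    (∀ G : Subgroup (Equiv.Perm (Fin n)), G ≤ alternatingGroup (Fin n) →
      (∀ g ∈ G, ∃ i : Fin n, g i = i) → ∃ i : Fin n, ∀ g ∈ G, g i = i) ↔ n ≤ 4 :=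
  alternating_group_fixating_iff_le_four_general n
end

section
/- For every integer n ≥ 1, the group of isometries of the lattice ℤⁿ with the Euclidean distance is fixating: if G is a group of bijections of ℤⁿ each of which preserves the Euclidean distance (equivalently, ∑ᵢ (g(x)ᵢ − g(y)ᵢ)² = ∑ᵢ (xᵢ − yᵢ)² for all x, y ∈ ℤⁿ and g ∈ G), and every element of G has a fixed point in ℤⁿ, then there is a point of ℤⁿ fixed by all elements of G. -/
/-!
A distance-preserving map of `ℤⁿ` is a signed permutation of the coordinates followed by a
translation, so `G` permutes the coordinate axes. The stabilizer of an axis acts on that axis by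
maps `t ↦ ±t + b`, each with a fixed point; hence its translations are trivial and its
reflections all coincide, so it fixes some value on the axis. Fixing such a value on one axis
of each `G`-orbit and transporting it along the orbit by elements of `G` gives a well-defined
point, which is fixed by all of `G`.
-/

open Equiv

variable {ι : Type*}

def SendsCoord (f : (ι → ℤ) → ι → ℤ) (i j : ι) : Prop :=
  ∃ s : ℤˣ, ∀ x, f x j = s * x i + f 0 j

theorem sendsCoord_id (i : ι) : SendsCoord id i i := ⟨1, fun x => by simp⟩

namespace SendsCoord

variable {f g : (ι → ℤ) → ι → ℤ} {i j k : ι}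

theorem comp (hg : SendsCoord g i j) (hf : SendsCoord f j k) : SendsCoord (f ∘ g) i k := by
  obtain ⟨s, hs⟩ := hg
  obtain ⟨t, ht⟩ := hf
  refine ⟨t * s, fun x => ?_⟩
  simp only [Function.comp_apply, ht (g x), ht (g 0), hs x, Units.val_mul]
  ring

theorem symm {e : (ι → ℤ) ≃ (ι → ℤ)} (h : SendsCoord e i j) : SendsCoord e.symm j i := by
  obtain ⟨s, hs⟩ := h
  refine ⟨s, fun x => ?_⟩
  have hx := hs (e.symm x)
  have h0 := hs (e.symm 0)
  simp only [Equiv.apply_symm_apply, Pi.zero_apply] at hx h0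
  linear_combination
    (s : ℤ) * h0 - (s : ℤ) * hx - (e.symm x i - e.symm 0 i) * Int.units_coe_mul_self s

theorem apply_eq_apply (h : SendsCoord f i j) {x y : ι → ℤ} (hxy : x i = y i) : f x j = f y j := by
  obtain ⟨s, hs⟩ := h
  rw [hs x, hs y, hxy]

theorem left_unique (hi : SendsCoord f i k) (hj : SendsCoord f j k) : i = j := by
  classical
  obtain ⟨s, hs⟩ := hi
  obtain ⟨t, ht⟩ := hj
  by_contra hij
  have := (hs (Pi.single i 1)).symm.trans (ht (Pi.single i 1))
  simp [Ne.symm hij] at this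

end SendsCoord

section Isometry

variable [Fintype ι] {f : (ι → ℤ) → ι → ℤ}

theorem exists_eq_single_of_dotProduct_self_eq_one [DecidableEq ι] {v : ι → ℤ}
    (hv : v ⬝ᵥ v = 1) : ∃ j, ∃ s : ℤˣ, v = Pi.single j (s : ℤ) := by
  have hsum : ∑ l, v l ^ 2 = 1 := by simpa [dotProduct, sq] using hv
  obtain ⟨j, hj⟩ : ∃ j, v j ≠ 0 := by
    by_contra! h
    simp [h] at hsum
  have hsplit := Finset.add_sum_erase Finset.univ (fun l => v l ^ 2) (Finset.mem_univ j)
  have hj1 : 1 ≤ v j ^ 2 := (one_le_sq_iff_one_le_abs _).mpr (Int.one_le_abs hj)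
  have hrest_nonneg : 0 ≤ ∑ l ∈ Finset.univ.erase j, v l ^ 2 :=
    Finset.sum_nonneg fun l _ => sq_nonneg (v l)
  have hrest : ∑ l ∈ Finset.univ.erase j, v l ^ 2 = 0 := by linarith
  have hvj : v j * v j = 1 := by nlinarith
  refine ⟨j, ⟨v j, v j, hvj, hvj⟩, funext fun l => ?_⟩
  rcases eq_or_ne l j with rfl | hl
  · simp
  · rw [Pi.single_eq_of_ne hl]
    exact pow_eq_zero_iff two_ne_zero |>.mp <|
      (Finset.sum_eq_zero_iff_of_nonneg fun l _ => sq_nonneg (v l)).mp hrest l (by simp [hl])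

theorem dotProduct_sub_apply_zero
    (hf : ∀ x y, (f x - f y) ⬝ᵥ (f x - f y) = (x - y) ⬝ᵥ (x - y)) (x y : ι → ℤ) :
    (f x - f 0) ⬝ᵥ (f y - f 0) = x ⬝ᵥ y := by
  have polar : ∀ a b : ι → ℤ, 2 * (a ⬝ᵥ b) = a ⬝ᵥ a + b ⬝ᵥ b - (a - b) ⬝ᵥ (a - b) := by
    intro a b
    simp only [sub_dotProduct, dotProduct_sub, dotProduct_comm b a]
    ring
  have h := polar (f x - f 0) (f y - f 0)
  rw [sub_sub_sub_cancel_right, hf, hf, hf, sub_zero, sub_zero, ← polar] at h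
  linarith

theorem exists_sendsCoord_of_isometry
    (hf : ∀ x y, (f x - f y) ⬝ᵥ (f x - f y) = (x - y) ⬝ᵥ (x - y)) (i : ι) :
    ∃ j, SendsCoord f i j := by
  classical
  obtain ⟨j, s, hs⟩ := exists_eq_single_of_dotProduct_self_eq_one
    (v := f (Pi.single i 1) - f 0) (by simp [dotProduct_sub_apply_zero hf])
  refine ⟨j, s, fun x => ?_⟩
  have h := dotProduct_sub_apply_zero hf x (Pi.single i 1)
  rw [hs, dotProduct_single, dotProduct_single, Pi.sub_apply] at h
  linear_combination (s : ℤ) * h - (f x j - f 0 j) * Int.units_coe_mul_self s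

theorem exists_sendsCoord_to_of_isometry
    (hf : ∀ x y, (f x - f y) ⬝ᵥ (f x - f y) = (x - y) ⬝ᵥ (x - y)) (j : ι) :
    ∃ i, SendsCoord f i j := by
  choose σ hσ using exists_sendsCoord_of_isometry hf
  have hinj : Function.Injective σ := fun i i' h => (hσ i).left_unique (h ▸ hσ i')
  obtain ⟨i, rfl⟩ := Finite.surjective_of_injective hinj j
  exact ⟨i, hσ i⟩

end Isometry

theorem Int.exists_common_fixedPoint_of_unit_slope (S : Set (ℤ → ℤ))
    (hslope : ∀ φ ∈ S, ∃ s : ℤˣ, ∀ t, φ t = s * t + φ 0)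
    (hcomp : ∀ φ ∈ S, ∀ ψ ∈ S, φ ∘ ψ ∈ S) (hfix : ∀ φ ∈ S, ∃ t, φ t = t) :
    ∃ t, ∀ φ ∈ S, φ t = t := by
  have htrans : ∀ φ ∈ S, (∀ t, φ t = t + φ 0) → ∀ t, φ t = t := by
    intro φ hφ h t
    obtain ⟨t₀, ht₀⟩ := hfix φ hφ
    linarith [h t, h t₀]
  by_cases hrefl : ∃ ρ ∈ S, ∀ t, ρ t = -t + ρ 0
  · obtain ⟨ρ, hρS, hρ⟩ := hrefl
    obtain ⟨t₀, ht₀⟩ := hfix ρ hρS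
    refine ⟨t₀, fun φ hφ => ?_⟩
    obtain ⟨s, hs⟩ := hslope φ hφ
    rcases Int.units_eq_one_or s with rfl | rfl
    · exact htrans φ hφ (by simpa using hs) t₀
    · -- `φ ∘ ρ` is a translation, hence the identity, so `φ` and `ρ` agree.
      replace hs : ∀ t, φ t = -t + φ 0 := by simpa using hs
      have hφρ := htrans (φ ∘ ρ) (hcomp φ hφ ρ hρS) (fun t => by
        simp only [Function.comp_apply]
        linarith [hs (ρ t), hs (ρ 0), hρ t, hρ 0]) (ρ t₀)
      simpa only [Function.comp_apply, ht₀] using hφρ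
  · push Not at hrefl
    refine ⟨0, fun φ hφ => ?_⟩
    obtain ⟨s, hs⟩ := hslope φ hφ
    rcases Int.units_eq_one_or s with rfl | rfl
    · exact htrans φ hφ (by simpa using hs) 0
    · obtain ⟨t, ht⟩ := hrefl φ hφ
      exact absurd (by simpa using hs t) ht

section FixedPoint

variable (G : Subgroup (Perm (ι → ℤ)))

def coordOrbitSetoid : Setoid ι where
  r i j := ∃ g ∈ G, SendsCoord g i j
  iseqv :=
    { refl := fun i => ⟨1, G.one_mem, sendsCoord_id i⟩
      symm := fun ⟨g, hg, h⟩ => ⟨g⁻¹, G.inv_mem hg, h.symm⟩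
      trans := fun ⟨g, hg, h⟩ ⟨g', hg', h'⟩ => ⟨g' * g, G.mul_mem hg' hg, h.comp h'⟩ }

variable {G}

theorem exists_fixed_by_coord_stabilizers (hfix : ∀ g ∈ G, ∃ x, g x = x) :
    ∃ y : ι → ℤ, ∀ r, ∀ g ∈ G, SendsCoord g r r → g y r = y r := by
  suffices ∀ r, ∃ t : ℤ, ∀ g ∈ G, SendsCoord g r r → g (Function.const ι t) r = t by
    choose t ht using this
    exact ⟨t, fun r g hg hr =>
      (hr.apply_eq_apply rfl : g t r = g (Function.const ι (t r)) r).trans (ht r g hg hr)⟩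
  intro r
  let S : Set (ℤ → ℤ) := (fun g t => g (Function.const ι t) r) '' {g | g ∈ G ∧ SendsCoord g r r}
  have hslope : ∀ φ ∈ S, ∃ s : ℤˣ, ∀ t, φ t = s * t + φ 0 := by
    rintro _ ⟨g, ⟨-, s, hs⟩, rfl⟩
    refine ⟨s, fun t => ?_⟩
    simp only [hs (Function.const ι t), hs (Function.const ι 0)]
    simp
  have hcomp : ∀ φ ∈ S, ∀ ψ ∈ S, φ ∘ ψ ∈ S := by
    rintro _ ⟨g, ⟨hg, hgr⟩, rfl⟩ _ ⟨h, ⟨hh, hhr⟩, rfl⟩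
    exact ⟨g * h, ⟨G.mul_mem hg hh, hhr.comp hgr⟩, funext fun t => hgr.apply_eq_apply rfl⟩
  have hfixS : ∀ φ ∈ S, ∃ t, φ t = t := by
    rintro _ ⟨g, ⟨hg, hgr⟩, rfl⟩
    obtain ⟨x, hx⟩ := hfix g hg
    exact ⟨x r, (hgr.apply_eq_apply rfl : g (Function.const ι (x r)) r = g x r).trans
      (congrFun hx r)⟩
  obtain ⟨t, ht⟩ := Int.exists_common_fixedPoint_of_unit_slope S hslope hcomp hfixS
  exact ⟨t, fun g hg hr => ht _ ⟨g, ⟨hg, hr⟩, rfl⟩⟩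

theorem apply_eq_apply_of_sendsCoord {y : ι → ℤ} {r k : ι}
    (hy : ∀ g ∈ G, SendsCoord g r r → g y r = y r) {a b : Perm (ι → ℤ)} (ha : a ∈ G)
    (hb : b ∈ G) (har : SendsCoord a r k) (hbr : SendsCoord b r k) : a y k = b y k := by
  have hmem : a⁻¹ * b ∈ G := G.mul_mem (G.inv_mem ha) hb
  have hrr : SendsCoord ⇑(a⁻¹ * b) r r := hbr.comp har.symm
  calc a y k = a ((a⁻¹ * b) y) k := har.apply_eq_apply (hy _ hmem hrr).symm
    _ = b y k := by simp

theorem exists_common_fixedPoint (hcoord : ∀ g ∈ G, ∀ j, ∃ i, SendsCoord g i j)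
    (hfix : ∀ g ∈ G, ∃ x, g x = x) : ∃ x, ∀ g ∈ G, g x = x := by
  obtain ⟨y, hy⟩ := exists_fixed_by_coord_stabilizers hfix
  -- `a j ∈ G` carries the chosen representative of the orbit of `j` to `j`.
  choose a ha har using fun j => Quotient.mk_out (s := coordOrbitSetoid G) j
  refine ⟨fun j => a j y j, fun g hg => funext fun k => ?_⟩
  obtain ⟨i, hik⟩ := hcoord g hg k
  have hrep : (⟦i⟧ : Quotient (coordOrbitSetoid G)).out = (⟦k⟧ : Quotient _).out :=
    congrArg Quotient.out (Quotient.sound ⟨g, hg, hik⟩)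
  obtain ⟨s, hs⟩ := hik
  calc g (fun j => a j y j) k = s * a i y i + g 0 k := hs _
    _ = g (a i y) k := (hs _).symm
    _ = a k y k := apply_eq_apply_of_sendsCoord (hy _) (G.mul_mem hg (ha i)) (ha k)
        (hrep ▸ (har i).comp ⟨s, hs⟩) (har k)

end FixedPoint

theorem isom_lattice_Zn_fixating_general
    (n : ℕ)
    (G : Subgroup (Equiv.Perm (Fin n → ℤ)))
    (hiso : ∀ g ∈ G, ∀ x y : Fin n → ℤ,
      ∑ i : Fin n, (g x i - g y i) ^ 2 = ∑ i : Fin n, (x i - y i) ^ 2)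
    (hGAF : ∀ g ∈ G, ∃ x : Fin n → ℤ, g x = x) :
    ∃ x : Fin n → ℤ, ∀ g ∈ G, g x = x :=
  exists_common_fixedPoint
    (fun g hg => exists_sendsCoord_to_of_isometry fun x y => by
      simpa [dotProduct, sq] using hiso g hg x y)
    hGAF

/-- The group of isometries of the lattice `ℤⁿ` with the Euclidean distance is
fixating: if `G` is a group of bijections of `ℤⁿ` each preserving the squared
Euclidean distance, and every element of `G` has a fixed point, then some
point of `ℤⁿ` is fixed by all elements of `G`. -/
theorem isom_lattice_Zn_fixating
    (n : ℕ) (hn : 1 ≤ n)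
    (G : Subgroup (Equiv.Perm (Fin n → ℤ)))
    (hiso : ∀ g ∈ G, ∀ x y : Fin n → ℤ,
      ∑ i : Fin n, (g x i - g y i) ^ 2 = ∑ i : Fin n, (x i - y i) ^ 2)
    (hGAF : ∀ g ∈ G, ∃ x : Fin n → ℤ, g x = x) :
    ∃ x : Fin n → ℤ, ∀ g ∈ G, g x = x :=
  isom_lattice_Zn_fixating_general n G hiso hGAF
end
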